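/- arXiv:2306.09948 — 9 statements merged into one kernel-verified Lean document; each statement's English description precedes it below -/
import Mathlib

section
/- Let m, n, h, k be positive integers with h ≤ n and k ≤ m. There exists a NASM(m,n;h,k), i.e., an m×n near alternating sign matrix having exactly h nonzero entries in every row and exactly k nonzero entries in every column, if and only if mh = nk. -/
def rowWeight {α : Type*} [Zero α] [DecidableEq α] {m n : ℕ}
    (A : Matrix (Fin m) (Fin n) α) (i : Fin m) : ℕ :=
  (Finset.univ.filter (fun j => A i j ≠ 0)).card

def colWeight {α : Type*} [Zero α] [DecidableEq α] {m n : ℕ}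
    (A : Matrix (Fin m) (Fin n) α) (j : Fin n) : ℕ :=
  (Finset.univ.filter (fun i => A i j ≠ 0)).card

/-- The nonzero entries of the sequence `r` alternate in sign. -/
def AltSigns {n : ℕ} (r : Fin n → ℤ) : Prop :=
  ∀ j j' : Fin n, j < j' → r j ≠ 0 → r j' ≠ 0 →
    (∀ l : Fin n, j < l → l < j' → r l = 0) → r j' = -(r j)

/-- A near alternating sign matrix: entries in `{0, 1, -1}`, and in every row and
every column the nonzero entries alternate in sign. -/
def IsNASM {m n : ℕ} (A : Matrix (Fin m) (Fin n) ℤ) : Prop :=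
  (∀ i j, A i j = 0 ∨ A i j = 1 ∨ A i j = -1) ∧
  (∀ i : Fin m, AltSigns (fun j => A i j)) ∧
  (∀ j : Fin n, AltSigns (fun i => A i j))

/-- Key lemma: the difference sequence of a 0/1-valued word has alternating signs. -/
lemma altSigns_diff {N : ℕ} (W : ℕ → ℤ) (hW : ∀ t, W t = 0 ∨ W t = 1) (a : ℕ) :
    AltSigns (fun j : Fin N => W (a + (j : ℕ) + 1) - W (a + (j : ℕ))) := by
  intro j j' hlt hj hj' hmid
  simp only at hj hj' hmid ⊢
  -- W is constant on positions a+j+1 .. a+j'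
  have key : ∀ u : ℕ, (j : ℕ) < u → u ≤ (j' : ℕ) → W (a + u) = W (a + (j : ℕ) + 1) := by
    intro u
    induction u with
    | zero => omega
    | succ v ih =>
      intro h1 h2
      rcases Nat.lt_or_ge (j : ℕ) v with hv | hv
      · have hvlt : v < (j' : ℕ) := by omega
        have hvN : v < N := lt_trans hvlt j'.isLt
        have h0 := hmid ⟨v, hvN⟩ (by simpa [Fin.lt_def] using hv)
          (by simpa [Fin.lt_def] using hvlt)
        have : W (a + v + 1) = W (a + v) := by
          have := sub_eq_zero.mp h0
          simpa using this
        have hv' := ih hv (by omega)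
        calc W (a + (v + 1)) = W (a + v + 1) := by ring_nf
          _ = W (a + v) := this
          _ = W (a + (j : ℕ) + 1) := hv'
      · have : v = (j : ℕ) := by omega
        subst this
        rw [← Nat.add_assoc]
  have hjlt : (j : ℕ) < (j' : ℕ) := hlt
  have h1 : W (a + (j' : ℕ)) = W (a + (j : ℕ) + 1) := key _ hjlt le_rfl
  rcases hW (a + (j : ℕ)) with h2 | h2 <;> rcases hW (a + (j : ℕ) + 1) with h3 | h3 <;>
    rcases hW (a + (j' : ℕ) + 1) with h4 | h4 <;>
      simp_all <;> omega

section Construction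

variable (n h : ℕ)

/-- The Sturmian-parity word. -/
def stw (t : ℕ) : ℕ := (t * h / n) % 2

/-- The jump of the floor sequence. -/
def jmp (t : ℕ) : ℕ := (t + 1) * h / n - t * h / n

lemma floor_succ (t : ℕ) : (t + 1) * h / n = t * h / n + jmp n h t := by
  have : t * h / n ≤ (t + 1) * h / n :=
    Nat.div_le_div_right (Nat.mul_le_mul_right _ (by omega))
  unfold jmp; omega

lemma jmp_le_one (hn : 0 < n) (hhn : h ≤ n) (t : ℕ) : jmp n h t ≤ 1 := by
  have h1 : (t + 1) * h / n ≤ (t * h + n) / n :=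
    Nat.div_le_div_right (by nlinarith)
  have h2 : (t * h + n) / n = t * h / n + 1 := Nat.add_div_right _ hn
  unfold jmp; omega

lemma stw_mem (t : ℕ) : ((stw n h t : ℤ) = 0 ∨ (stw n h t : ℤ) = 1) := by
  have := Nat.mod_lt (t * h / n) (show 0 < 2 by norm_num)
  unfold stw
  interval_cases (t * h / n % 2) <;> simp

/-- The word differs at consecutive positions iff the floor jumps. -/
lemma stw_ne_iff (hn : 0 < n) (hhn : h ≤ n) (t : ℕ) :
    ((stw n h (t + 1) : ℤ) - stw n h t ≠ 0) ↔ jmp n h t = 1 := by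
  have hf := floor_succ n h t
  have hj := jmp_le_one n h hn hhn t
  unfold stw
  rw [hf]
  constructor
  · intro hne
    by_contra hc
    have : jmp n h t = 0 := by omega
    rw [this] at hne
    simp at hne
  · intro h1
    rw [h1]
    have := Nat.mod_lt (t * h / n) (show 0 < 2 by norm_num)
    have := Nat.mod_lt (t * h / n + 1) (show 0 < 2 by norm_num)
    omega

/-- Telescoping: sum of jumps over an interval. -/
lemma sum_jmp (a L : ℕ) :
    (∑ t ∈ Finset.range L, jmp n h (a + t)) + a * h / n = (a + L) * h / n := by
  induction L with
  | zero => simp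
  | succ M ih =>
    rw [Finset.sum_range_succ]
    have := floor_succ n h (a + M)
    have he : a + (M + 1) = (a + M) + 1 := by omega
    rw [he]
    omega

end Construction

/-- For positive integers `m, n, h, k` with `h ≤ n` and `k ≤ m`,
there exists a NASM`(m, n; h, k)` if and only if `m * h = n * k`. -/
theorem statement0 (m n h k : ℕ) (hm : 0 < m) (hn : 0 < n) (hh : 0 < h) (hk : 0 < k)
    (hhn : h ≤ n) (hkm : k ≤ m) :
    (∃ A : Matrix (Fin m) (Fin n) ℤ, IsNASM A ∧
        (∀ i, rowWeight A i = h) ∧ (∀ j, colWeight A j = k)) ↔ m * h = n * k := by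
  constructor
  · -- counting direction
    rintro ⟨A, -, hr, hc⟩
    have hrow : ∀ i : Fin m, rowWeight A i = ∑ j : Fin n, if A i j ≠ 0 then 1 else 0 := by
      intro i; rw [rowWeight, Finset.card_filter]
    have hcol : ∀ j : Fin n, colWeight A j = ∑ i : Fin m, if A i j ≠ 0 then 1 else 0 := by
      intro j; rw [colWeight, Finset.card_filter]
    have key : ∑ i : Fin m, rowWeight A i = ∑ j : Fin n, colWeight A j := by
      simp only [hrow, hcol]
      exact Finset.sum_comm
    rw [Finset.sum_congr rfl (fun i _ => hr i), Finset.sum_congr rfl (fun j _ => hc j)] at key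
    simpa [Finset.sum_const, Finset.card_univ, mul_comm] using key
  · intro hmh
    -- the construction
    set W : ℕ → ℤ := fun t => (stw n h t : ℤ) with hW
    have hW01 : ∀ t, W t = 0 ∨ W t = 1 := fun t => stw_mem n h t
    set A : Matrix (Fin m) (Fin n) ℤ := fun i j => W ((i : ℕ) + j + 1) - W ((i : ℕ) + j) with hA
    have hAdef : ∀ (i : Fin m) (j : Fin n), A i j = W ((i : ℕ) + j + 1) - W ((i : ℕ) + j) :=
      fun i j => rfl
    refine ⟨A, ⟨?_, ?_, ?_⟩, ?_, ?_⟩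
    · intro i j
      rcases hW01 ((i : ℕ) + j + 1) with h1 | h1 <;> rcases hW01 ((i : ℕ) + j) with h2 | h2 <;>
        rw [hAdef i j, h1, h2] <;> norm_num
    · intro i
      exact altSigns_diff W hW01 (i : ℕ)
    · intro j
      have hc := altSigns_diff (N := m) W hW01 (j : ℕ)
      have he : (fun i : Fin m => A i j)
          = fun i : Fin m => W ((j : ℕ) + (i : ℕ) + 1) - W ((j : ℕ) + (i : ℕ)) := by
        funext i
        rw [hAdef i j, Nat.add_comm (i : ℕ) (j : ℕ)]
      rw [he]
      exact hc
    · -- row weights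
      intro i
      have hcount : ∀ t : ℕ, (W (t + 1) - W t ≠ 0) ↔ jmp n h t = 1 := fun t =>
        stw_ne_iff n h hn hhn t
      have hrw : rowWeight A i = ∑ j : Fin n, jmp n h ((i : ℕ) + j) := by
        rw [rowWeight, Finset.card_filter]
        refine Finset.sum_congr rfl (fun j _ => ?_)
        rw [hAdef i j]
        by_cases hcase : jmp n h ((i : ℕ) + j) = 1
        · simp [(hcount ((i : ℕ) + j)).mpr hcase, hcase]
        · have h0 : jmp n h ((i : ℕ) + j) = 0 := by
            have := jmp_le_one n h hn hhn ((i : ℕ) + j); omega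
          have hz : ¬ (W ((i : ℕ) + j + 1) - W ((i : ℕ) + j) ≠ 0) := by
            intro hne; exact hcase ((hcount _).mp hne)
          simp [hz, h0]
      rw [hrw, Fin.sum_univ_eq_sum_range (fun t => jmp n h ((i : ℕ) + t)) n]
      have hsum := sum_jmp n h (i : ℕ) n
      have hdiv : ((i : ℕ) + n) * h / n = (i : ℕ) * h / n + h := by
        rw [add_mul, Nat.add_mul_div_left _ _ hn]
      omega
    · -- column weights
      intro j
      have hcount : ∀ t : ℕ, (W (t + 1) - W t ≠ 0) ↔ jmp n h t = 1 := fun t =>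
        stw_ne_iff n h hn hhn t
      have hcw : colWeight A j = ∑ i : Fin m, jmp n h ((j : ℕ) + i) := by
        rw [colWeight, Finset.card_filter]
        refine Finset.sum_congr rfl (fun i _ => ?_)
        rw [hAdef i j, show (i : ℕ) + (j : ℕ) = (j : ℕ) + i by omega]
        by_cases hcase : jmp n h ((j : ℕ) + i) = 1
        · simp [(hcount ((j : ℕ) + i)).mpr hcase, hcase]
        · have h0 : jmp n h ((j : ℕ) + i) = 0 := by
            have := jmp_le_one n h hn hhn ((j : ℕ) + i); omega
          have hz : ¬ (W ((j : ℕ) + i + 1) - W ((j : ℕ) + i) ≠ 0) := by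
            intro hne; exact hcase ((hcount _).mp hne)
          simp [hz, h0]
      rw [hcw, Fin.sum_univ_eq_sum_range (fun t => jmp n h ((j : ℕ) + t)) m]
      have hsum := sum_jmp n h (j : ℕ) m
      have hdiv : ((j : ℕ) + m) * h / n = (j : ℕ) * h / n + k := by
        rw [add_mul, hmh, Nat.add_mul_div_left _ _ hn]
      omega
end

section
/- Let h_1,…,h_m and k_1,…,k_n be positive integers with h_1+⋯+h_m = k_1+⋯+k_n. Set 𝐇 = (2h_1,2h_1,2h_2,2h_2,…,2h_m,2h_m) (a sequence of length 2m in which each 2h_i appears twice consecutively) and 𝐊 = (2k_1,2k_1,…,2k_n,2k_n) (length 2n). Then there exists a NASM(2m,2n;𝐇,𝐊) if and only if the sequences 𝐇 and 𝐊 satisfy the Gale–Ryser condition. -/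
/-- The decreasing rearrangement of the tuple `k`. -/
def decRearrange {n : ℕ} (k : Fin n → ℕ) : Fin n → ℕ :=
  fun j => k (Tuple.sort k j.rev)

/-- The Gale–Ryser condition for the sequences `h` and `k`. -/
def GaleRyser {m n : ℕ} (h : Fin m → ℕ) (k : Fin n → ℕ) : Prop :=
  ∀ u : ℕ, 1 ≤ u → u ≤ n →
    ∑ j ∈ Finset.univ.filter (fun j : Fin n => (j : ℕ) < u), decRearrange k j
      ≤ ∑ i : Fin m, min (h i) u

/-- The sequence `(h 0, h 0, h 1, h 1, …, h (m-1), h (m-1))` of length `2 * m`. -/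
def twice {m : ℕ} (h : Fin m → ℕ) : Fin (2 * m) → ℕ :=
  fun i => h ⟨(i : ℕ) / 2, by have := i.isLt; omega⟩




lemma card_filter_lt_fin (N u : ℕ) (hu : u ≤ N) :
    (Finset.univ.filter (fun j : Fin N => (j : ℕ) < u)).card = u := by
  rw [Finset.card_filter]
  rw [Fin.sum_univ_eq_sum_range (fun x => if x < u then 1 else 0) N]
  rw [← Finset.card_filter]
  have : (Finset.range N).filter (fun x => x < u) = Finset.range u := by
    ext x; simp only [Finset.mem_filter, Finset.mem_range]; omega
  rw [this, Finset.card_range]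

lemma antitone_decRearrange {N : ℕ} (f : Fin N → ℕ) : Antitone (decRearrange f) :=
  fun _ _ hab => Tuple.monotone_sort f (Fin.rev_le_rev.mpr hab)

lemma antitone_top_sum {N : ℕ} (g : Fin N → ℕ) (hg : Antitone g) (P : Finset (Fin N)) :
    ∑ j ∈ P, g j ≤ ∑ j ∈ Finset.univ.filter (fun j : Fin N => (j:ℕ) < P.card), g j := by
  set c := P.card with hc
  have hcle : c ≤ N := (Finset.card_le_univ P).trans (by simp)
  set emb := P.orderEmbOfFin hc.symm with hemb
  have hle : ∀ s : ℕ, (hs : s < c) → s ≤ (emb ⟨s, hs⟩ : ℕ) := by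
    intro s
    induction s with
    | zero => intro _; exact Nat.zero_le _
    | succ s ihs =>
      intro hs
      have h1 : s < c := by omega
      have h2 : emb ⟨s, h1⟩ < emb ⟨s+1, hs⟩ := emb.strictMono (by simp [Fin.lt_def])
      have := ihs h1
      rw [Fin.lt_def] at h2
      omega
  have himg : Finset.univ.image emb = P := by
    ext x
    simp only [Finset.mem_image, Finset.mem_univ, true_and]
    constructor
    · rintro ⟨i, rfl⟩; exact P.orderEmbOfFin_mem hc.symm i
    · intro hx
      have : x ∈ Set.range emb := by rw [Finset.range_orderEmbOfFin]; exact hx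
      obtain ⟨i, hi⟩ := this
      exact ⟨i, hi⟩
  have hfilt : Finset.univ.filter (fun j : Fin N => (j:ℕ) < c)
      = Finset.univ.image (Fin.castLE hcle) := by
    ext j
    simp only [Finset.mem_filter, Finset.mem_univ, true_and, Finset.mem_image]
    constructor
    · intro hj; exact ⟨⟨(j:ℕ), hj⟩, rfl⟩
    · rintro ⟨i, rfl⟩; exact i.2
  calc ∑ j ∈ P, g j = ∑ i : Fin c, g (emb i) := by
        rw [← himg, Finset.sum_image (fun a _ b _ hab => emb.injective hab)]
    _ ≤ ∑ i : Fin c, g (Fin.castLE hcle i) := by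
        refine Finset.sum_le_sum (fun i _ => hg ?_)
        rw [Fin.le_def]
        exact hle i.1 i.2
    _ = ∑ j ∈ Finset.univ.filter (fun j : Fin N => (j:ℕ) < c), g j := by
        rw [hfilt, Finset.sum_image (fun a _ b _ hab => Fin.castLE_injective hcle hab)]

lemma sum_le_decRearrange {N : ℕ} (f : Fin N → ℕ) (S : Finset (Fin N)) :
    ∑ j ∈ S, f j
      ≤ ∑ j ∈ Finset.univ.filter (fun j : Fin N => (j:ℕ) < S.card), decRearrange f j := by
  set e : Equiv.Perm (Fin N) := Fin.revPerm.trans (Tuple.sort f) with he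
  have hdec : ∀ j, decRearrange f j = f (e j) := fun j => rfl
  have h1 : ∑ j ∈ S.image e.symm, decRearrange f j = ∑ j ∈ S, f j := by
    rw [Finset.sum_image (fun a _ b _ hab => e.symm.injective hab)]
    exact Finset.sum_congr rfl (fun x _ => by rw [hdec, Equiv.apply_symm_apply])
  have h2 := antitone_top_sum (decRearrange f) (antitone_decRearrange f) (S.image e.symm)
  rw [h1, Finset.card_image_of_injective _ e.symm.injective] at h2
  exact h2



def GR' {m n : ℕ} (h : Fin m → ℕ) (k : Fin n → ℕ) : Prop :=
  ∀ T : Finset (Fin n), ∑ j ∈ T, k j ≤ ∑ i : Fin m, min (h i) T.card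

lemma exists_top_finset {m : ℕ} (h : Fin m → ℕ) (s : ℕ) (hs : s ≤ m) :
    ∃ R : Finset (Fin m), R.card = s ∧ ∀ i ∈ R, ∀ i' ∉ R, h i' ≤ h i := by
  induction s with
  | zero => exact ⟨∅, rfl, by simp⟩
  | succ s ih =>
    obtain ⟨R, hcard, hdom⟩ := ih (le_of_lt (Nat.lt_of_lt_of_le (Nat.lt_succ_self s) hs))
    have hne : (Rᶜ : Finset (Fin m)).Nonempty := by
      rw [← Finset.card_pos, Finset.card_compl, hcard, Fintype.card_fin]
      omega
    obtain ⟨a, hamem, hamax⟩ := Finset.exists_max_image (Rᶜ : Finset (Fin m)) h hne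
    rw [Finset.mem_compl] at hamem
    refine ⟨insert a R, by rw [Finset.card_insert_of_notMem hamem, hcard], ?_⟩
    intro i hi i' hi'
    rcases Finset.mem_insert.1 hi with rfl | hiR
    · exact hamax i' (Finset.mem_compl.2 fun hc => hi' (Finset.mem_insert_of_mem hc))
    · exact hdom i hiR i' fun hc => hi' (Finset.mem_insert_of_mem hc)

lemma sum_indicator_card {m : ℕ} (R : Finset (Fin m)) :
    ∑ i : Fin m, (if i ∈ R then 1 else 0) = R.card := by
  simp [Finset.sum_ite_mem]

lemma min_one_sum {m : ℕ} (h : Fin m → ℕ) :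
    ∑ i : Fin m, min (h i) 1 = (Finset.univ.filter (fun i => 0 < h i)).card := by
  rw [Finset.card_filter]
  exact Finset.sum_congr rfl (fun i _ => by by_cases h0 : 0 < h i <;> simp [h0] <;> omega)

lemma gr_matrix_aux : ∀ (N : ℕ) {m n : ℕ} (h : Fin m → ℕ) (k : Fin n → ℕ),
    ∑ j, k j ≤ N → GR' h k → ∑ i, h i = ∑ j, k j →
    ∃ B : Matrix (Fin m) (Fin n) ℕ, (∀ i j, B i j ≤ 1) ∧
      (∀ i, ∑ j, B i j = h i) ∧ (∀ j, ∑ i, B i j = k j) := by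
  intro N
  induction N with
  | zero =>
    intro m n h k hle _ hsum
    have hk0 : ∀ j, k j = 0 := by
      intro j
      have := Finset.single_le_sum (f := k) (fun j _ => Nat.zero_le _) (Finset.mem_univ j)
      omega
    have hh0 : ∀ i, h i = 0 := by
      intro i
      have := Finset.single_le_sum (f := h) (fun i _ => Nat.zero_le _) (Finset.mem_univ i)
      have : ∑ j, k j = 0 := Nat.le_zero.1 hle
      have h2 := Finset.single_le_sum (f := h) (fun i _ => Nat.zero_le _) (Finset.mem_univ i)
      omega
    exact ⟨0, fun i j => by simp, fun i => by simp [hh0 i], fun j => by simp [hk0 j]⟩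
  | succ N ih =>
    intro m n h k hle hgr hsum
    by_cases hzero : ∑ j, k j = 0
    · exact ih h k (by omega) hgr hsum
    -- pick column with max k
    have hn : Nonempty (Fin n) := by
      by_contra hc
      rw [Finset.univ_eq_empty_iff.2 (not_nonempty_iff.1 hc)] at hzero
      simp at hzero
    obtain ⟨j0, _, hj0max⟩ :=
      Finset.exists_max_image (Finset.univ : Finset (Fin n)) k Finset.univ_nonempty
    set k1 := k j0 with hk1def
    -- k1 ≤ number of positive rows
    have hsingle : k1 ≤ (Finset.univ.filter (fun i => 0 < h i)).card := by
      have := hgr {j0}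
      simpa [min_one_sum h] using this
    have hk1m : k1 ≤ m := hsingle.trans ((Finset.card_filter_le _ _).trans (by simp))
    have hk1pos : 0 < k1 := by
      by_contra hc
      apply hzero
      refine Finset.sum_eq_zero (fun j _ => ?_)
      have := hj0max j (Finset.mem_univ j)
      omega
    obtain ⟨R, hRcard, hRdom⟩ := exists_top_finset h k1 hk1m
    have hRpos : ∀ i ∈ R, 0 < h i := by
      intro i0 hi0
      by_contra hc
      have hsub : Finset.univ.filter (fun i => 0 < h i) ⊆ R.erase i0 := by
        intro i' hi'
        rw [Finset.mem_filter] at hi'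
        have hi'R : i' ∈ R := by
          by_contra hcc
          have := hRdom i0 hi0 i' hcc
          omega
        exact Finset.mem_erase.2 ⟨fun he => by subst he; omega, hi'R⟩
      have := Finset.card_le_card hsub
      rw [Finset.card_erase_of_mem hi0, hRcard] at this
      omega
    set h' : Fin m → ℕ := fun i => h i - (if i ∈ R then 1 else 0) with hh'def
    set k' : Fin n → ℕ := fun j => if j = j0 then 0 else k j with hk'def
    have hsum_h' : ∑ i, h' i + k1 = ∑ i, h i := by
      rw [← hRcard, ← sum_indicator_card R, ← Finset.sum_add_distrib]
      refine Finset.sum_congr rfl (fun i _ => ?_)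
      by_cases hiR : i ∈ R
      · have := hRpos i hiR; simp [hh'def, hiR]; omega
      · simp [hh'def, hiR]
    have hsum_k' : ∑ j, k' j + k1 = ∑ j, k j := by
      have : ∑ j, k j = ∑ j, (k' j + if j = j0 then k1 else 0) := by
        refine Finset.sum_congr rfl (fun j _ => ?_)
        by_cases hj : j = j0 <;> simp [hk'def, hj, hk1def]
      rw [this, Finset.sum_add_distrib, Finset.sum_ite_eq' Finset.univ j0]
      simp
    -- GR' for reduced sequences, first for sets avoiding j0
    have hgr'aux : ∀ T : Finset (Fin n), j0 ∉ T → ∑ j ∈ T, k j ≤ ∑ i, min (h' i) T.card := by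
      intro T hj0T
      set u := T.card with hudef
      by_cases hcase : ∀ i ∈ R, u < h i
      · -- case A: min unchanged
        calc ∑ j ∈ T, k j ≤ ∑ i, min (h i) u := hgr T
          _ = ∑ i, min (h' i) u := by
            refine Finset.sum_congr rfl (fun i _ => ?_)
            by_cases hiR : i ∈ R
            · have := hcase i hiR; simp [hh'def, hiR]; omega
            · simp [hh'def, hiR]
      · push_neg at hcase
        obtain ⟨i0, hi0R, hi0⟩ := hcase
        have houtside : ∀ i, i ∉ R → h i ≤ u := fun i hi => (hRdom i0 hi0R i hi).trans hi0
        have hins := hgr (insert j0 T)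
        rw [Finset.sum_insert hj0T, Finset.card_insert_of_notMem hj0T] at hins
        rw [← hudef] at hins
        have hpt : ∀ i : Fin m, min (h i) (u+1)
            ≤ min (h' i) u + (if i ∈ R then 1 else 0) := by
          intro i
          by_cases hiR : i ∈ R
          · have hpos := hRpos i hiR
            simp only [hh'def, hiR, if_pos]
            omega
          · have h1 := houtside i hiR
            simp only [hh'def, hiR, if_neg, if_false]
            omega
        have hsumpt : ∑ i, min (h i) (u+1) ≤ ∑ i, min (h' i) u + R.card := by
          rw [← sum_indicator_card R, ← Finset.sum_add_distrib]
          exact Finset.sum_le_sum (fun i _ => hpt i)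
        rw [hRcard] at hsumpt
        omega
    have hgr' : GR' h' k' := by
      intro T
      by_cases hj0T : j0 ∈ T
      · have h1 : ∑ j ∈ T, k' j = ∑ j ∈ T.erase j0, k j := by
          rw [← Finset.add_sum_erase T k' hj0T]
          simp only [hk'def, if_pos rfl, zero_add]
          exact Finset.sum_congr rfl (fun j hj => by
            simp [(Finset.mem_erase.1 hj).1])
        rw [h1]
        calc ∑ j ∈ T.erase j0, k j ≤ ∑ i, min (h' i) (T.erase j0).card :=
              hgr'aux _ (Finset.notMem_erase _ _)
          _ ≤ ∑ i, min (h' i) T.card := by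
              refine Finset.sum_le_sum (fun i _ => ?_)
              have := Finset.card_erase_le (a := j0) (s := T)
              omega
      · have h1 : ∑ j ∈ T, k' j = ∑ j ∈ T, k j := by
          refine Finset.sum_congr rfl (fun j hj => ?_)
          have hne : j ≠ j0 := by rintro rfl; exact hj0T hj
          simp [hk'def, hne]
        rw [h1]
        exact hgr'aux T hj0T
    obtain ⟨B', hB'01, hB'row, hB'col⟩ := ih h' k' (by omega) hgr' (by omega)
    have hB'j0 : ∀ i, B' i j0 = 0 := by
      intro i
      have h0 : ∑ i, B' i j0 = 0 := by rw [hB'col j0]; simp [hk'def]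
      exact (Finset.sum_eq_zero_iff.1 h0) i (Finset.mem_univ i)
    refine ⟨fun i j => B' i j + if j = j0 ∧ i ∈ R then 1 else 0, ?_, ?_, ?_⟩
    · intro i j
      dsimp only
      by_cases hj : j = j0
      · subst hj; rw [hB'j0 i]; split <;> simp
      · simp only [hj, false_and, if_false, add_zero]; exact hB'01 i j
    · intro i
      dsimp only
      rw [Finset.sum_add_distrib, hB'row i]
      have : ∑ j : Fin n, (if j = j0 ∧ i ∈ R then 1 else 0) = if i ∈ R then 1 else 0 := by
        by_cases hiR : i ∈ R <;> simp [hiR, Finset.sum_ite_eq' Finset.univ j0 (fun _ => 1)]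
      rw [this]
      by_cases hiR : i ∈ R
      · have := hRpos i hiR; simp [hh'def, hiR]; omega
      · simp [hh'def, hiR]
    · intro j
      dsimp only
      rw [Finset.sum_add_distrib, hB'col j]
      by_cases hj : j = j0
      · subst hj
        simp only [hk'def, if_pos rfl, true_and, zero_add]
        rw [sum_indicator_card R, hRcard]
      · simp [hk'def, hj]






lemma sum_range_halve (F : ℕ → ℕ) (m : ℕ) :
    ∑ x ∈ Finset.range (2*m), F (x/2) = 2 * ∑ x ∈ Finset.range m, F x := by
  induction m with
  | zero => simp
  | succ m ih =>
    have h2 : 2*(m+1) = (2*m+1)+1 := by ring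
    rw [h2, Finset.sum_range_succ, Finset.sum_range_succ, Finset.sum_range_succ, ih]
    have e1 : (2*m+1)/2 = m := by omega
    have e2 : (2*m)/2 = m := by omega
    rw [e1, e2]; ring

lemma sum_double {m : ℕ} (f : Fin m → ℕ) (g : Fin (2*m) → ℕ)
    (hg : ∀ i : Fin (2*m), g i = f ⟨(i:ℕ)/2, by have := i.isLt; omega⟩) :
    ∑ i, g i = 2 * ∑ i, f i := by
  set F : ℕ → ℕ := fun x => if hx : x < m then f ⟨x, hx⟩ else 0 with hF
  have c1 : ∑ i : Fin m, f i = ∑ x ∈ Finset.range m, F x := by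
    rw [← Fin.sum_univ_eq_sum_range F m]
    exact Finset.sum_congr rfl (fun i _ => by simp [hF, i.isLt])
  have c2 : ∑ i : Fin (2*m), g i = ∑ x ∈ Finset.range (2*m), F (x/2) := by
    rw [← Fin.sum_univ_eq_sum_range (fun x => F (x/2)) (2*m)]
    refine Finset.sum_congr rfl (fun i _ => ?_)
    have hx : (i:ℕ)/2 < m := by have := i.isLt; omega
    rw [hg i]
    simp [hF, hx]
  rw [c2, sum_range_halve, ← c1]

/-- generic alternating-signs lemma for blown-up rows -/
lemma altSigns_of_block {n : ℕ} (c : ℕ) (S : Finset (Fin n)) (r : Fin (2*n) → ℤ)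
    (hr : ∀ j : Fin (2*n), r j =
      if (⟨(j:ℕ)/2, by have := j.isLt; omega⟩ : Fin n) ∈ S
      then (if (c+(j:ℕ)) % 2 = 0 then 1 else -1) else 0) :
    AltSigns r := by
  intro j j' hlt hj hj' hgap
  have hjlt : (j:ℕ) < (j':ℕ) := hlt
  have hj'lt := j'.isLt
  have hmem : (⟨(j:ℕ)/2, by have := j.isLt; omega⟩ : Fin n) ∈ S := by
    by_contra hc
    rw [hr j, if_neg hc] at hj
    exact hj rfl
  have hmem' : (⟨(j':ℕ)/2, by have := j'.isLt; omega⟩ : Fin n) ∈ S := by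
    by_contra hc
    rw [hr j', if_neg hc] at hj'
    exact hj' rfl
  have hne : ((j:ℕ)) % 2 ≠ ((j':ℕ)) % 2 := by
    by_cases hj2 : (j:ℕ) % 2 = 0
    · -- j even: next entry j+1 is nonzero, so j' = j+1 is odd
      have hl : (j:ℕ)+1 < 2*n := by omega
      have hfe : (⟨((j:ℕ)+1)/2, by omega⟩ : Fin n)
          = ⟨(j:ℕ)/2, by have := j.isLt; omega⟩ := Fin.mk_eq_mk.mpr (by omega)
      have hrl : r ⟨(j:ℕ)+1, hl⟩ ≠ 0 := by
        rw [hr ⟨(j:ℕ)+1, hl⟩]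
        simp only []
        rw [if_pos (hfe ▸ hmem)]
        split <;> simp
      by_cases hlt' : (⟨(j:ℕ)+1, hl⟩ : Fin (2*n)) < j'
      · exact absurd (hgap _ (by simp [Fin.lt_def]) hlt') hrl
      · rw [Fin.lt_def] at hlt'
        simp only [not_lt] at hlt'
        have : (j':ℕ) = (j:ℕ)+1 := by omega
        omega
    · -- j odd: show j' even
      intro heq
      have hl : (j':ℕ) - 1 < 2*n := by omega
      have hfe : (⟨((j':ℕ)-1)/2, by omega⟩ : Fin n)
          = ⟨(j':ℕ)/2, by have := j'.isLt; omega⟩ := Fin.mk_eq_mk.mpr (by omega)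
      have hrl : r ⟨(j':ℕ)-1, hl⟩ ≠ 0 := by
        rw [hr ⟨(j':ℕ)-1, hl⟩]
        simp only []
        rw [if_pos (hfe ▸ hmem')]
        split <;> simp
      refine hrl (hgap ⟨(j':ℕ)-1, hl⟩ ?_ ?_)
      · rw [Fin.lt_def]; simp only []; omega
      · rw [Fin.lt_def]; simp only []; omega
  rw [hr j, hr j', if_pos hmem, if_pos hmem']
  by_cases h1 : (c+(j:ℕ)) % 2 = 0
  · have h2 : ¬ (c+(j':ℕ)) % 2 = 0 := by omega
    rw [if_pos h1, if_neg h2]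
  · have h2 : (c+(j':ℕ)) % 2 = 0 := by omega
    rw [if_neg h1, if_pos h2]
    norm_num

def blockA {m n : ℕ} (B : Matrix (Fin m) (Fin n) ℕ) : Matrix (Fin (2*m)) (Fin (2*n)) ℤ :=
  fun i j =>
    if B ⟨(i:ℕ)/2, by have := i.isLt; omega⟩ ⟨(j:ℕ)/2, by have := j.isLt; omega⟩ = 1
    then (if ((i:ℕ)+(j:ℕ)) % 2 = 0 then 1 else -1) else 0

lemma blockA_entries {m n : ℕ} (B : Matrix (Fin m) (Fin n) ℕ) (i : Fin (2*m)) (j : Fin (2*n)) :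
    blockA B i j = 0 ∨ blockA B i j = 1 ∨ blockA B i j = -1 := by
  unfold blockA
  split
  · split
    · exact Or.inr (Or.inl rfl)
    · exact Or.inr (Or.inr rfl)
  · exact Or.inl rfl

lemma blockA_ne_zero_iff {m n : ℕ} (B : Matrix (Fin m) (Fin n) ℕ)
    (i : Fin (2*m)) (j : Fin (2*n)) :
    blockA B i j ≠ 0 ↔
      B ⟨(i:ℕ)/2, by have := i.isLt; omega⟩ ⟨(j:ℕ)/2, by have := j.isLt; omega⟩ = 1 := by
  unfold blockA
  constructor
  · intro hne
    by_contra hc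
    rw [if_neg hc] at hne
    exact hne rfl
  · intro hb
    rw [if_pos hb]
    split <;> simp

lemma blockA_rowWeight {m n : ℕ} (B : Matrix (Fin m) (Fin n) ℕ)
    (hB01 : ∀ i j, B i j ≤ 1) (i : Fin (2*m)) :
    rowWeight (blockA B) i = 2 * ∑ j, B ⟨(i:ℕ)/2, by have := i.isLt; omega⟩ j := by
  rw [rowWeight, Finset.card_filter]
  refine sum_double (fun j => B ⟨(i:ℕ)/2, by have := i.isLt; omega⟩ j)
    (fun j => if blockA B i j ≠ 0 then 1 else 0) (fun j => ?_)
  by_cases hb : B ⟨(i:ℕ)/2, by have := i.isLt; omega⟩ ⟨(j:ℕ)/2, by have := j.isLt; omega⟩ = 1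
  · rw [if_pos ((blockA_ne_zero_iff B i j).mpr hb), hb]
  · rw [if_neg (fun hne => hb ((blockA_ne_zero_iff B i j).mp hne))]
    have := hB01 ⟨(i:ℕ)/2, by have := i.isLt; omega⟩ ⟨(j:ℕ)/2, by have := j.isLt; omega⟩
    omega

lemma blockA_colWeight {m n : ℕ} (B : Matrix (Fin m) (Fin n) ℕ)
    (hB01 : ∀ i j, B i j ≤ 1) (j : Fin (2*n)) :
    colWeight (blockA B) j = 2 * ∑ i, B i ⟨(j:ℕ)/2, by have := j.isLt; omega⟩ := by
  rw [colWeight, Finset.card_filter]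
  refine sum_double (fun i => B i ⟨(j:ℕ)/2, by have := j.isLt; omega⟩)
    (fun i => if blockA B i j ≠ 0 then 1 else 0) (fun i => ?_)
  by_cases hb : B ⟨(i:ℕ)/2, by have := i.isLt; omega⟩ ⟨(j:ℕ)/2, by have := j.isLt; omega⟩ = 1
  · rw [if_pos ((blockA_ne_zero_iff B i j).mpr hb), hb]
  · rw [if_neg (fun hne => hb ((blockA_ne_zero_iff B i j).mp hne))]
    have := hB01 ⟨(i:ℕ)/2, by have := i.isLt; omega⟩ ⟨(j:ℕ)/2, by have := j.isLt; omega⟩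
    omega

lemma blockA_isNASM {m n : ℕ} (B : Matrix (Fin m) (Fin n) ℕ) : IsNASM (blockA B) := by
  refine ⟨blockA_entries B, fun i => ?_, fun j => ?_⟩
  · refine altSigns_of_block (i:ℕ)
      (Finset.univ.filter (fun t => B ⟨(i:ℕ)/2, by have := i.isLt; omega⟩ t = 1)) _ (fun j => ?_)
    unfold blockA
    by_cases hb : B ⟨(i:ℕ)/2, by have := i.isLt; omega⟩ ⟨(j:ℕ)/2, by have := j.isLt; omega⟩ = 1 <;>
      simp [Finset.mem_filter, hb]
  · refine altSigns_of_block (j:ℕ)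
      (Finset.univ.filter (fun t => B t ⟨(j:ℕ)/2, by have := j.isLt; omega⟩ = 1)) _ (fun i => ?_)
    unfold blockA
    rw [Nat.add_comm (j:ℕ) (i:ℕ)]
    by_cases hb : B ⟨(i:ℕ)/2, by have := i.isLt; omega⟩ ⟨(j:ℕ)/2, by have := j.isLt; omega⟩ = 1 <;>
      simp [Finset.mem_filter, hb]

/-- For positive integers `h_1, …, h_m` and `k_1, …, k_n` with equal sums,
there exists a NASM`(2m, 2n; 𝐇, 𝐊)` — where `𝐇 = (2h_1, 2h_1, …, 2h_m, 2h_m)` and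
`𝐊 = (2k_1, 2k_1, …, 2k_n, 2k_n)` — if and only if `𝐇` and `𝐊` satisfy the
Gale–Ryser condition. -/
theorem statement2 (m n : ℕ) (h : Fin m → ℕ) (k : Fin n → ℕ)
    (hpos : ∀ i, 0 < h i) (kpos : ∀ j, 0 < k j)
    (hsum : ∑ i, h i = ∑ j, k j) :
    (∃ A : Matrix (Fin (2 * m)) (Fin (2 * n)) ℤ, IsNASM A ∧
        (∀ i, rowWeight A i = 2 * twice h i) ∧ (∀ j, colWeight A j = 2 * twice k j)) ↔
      GaleRyser (fun i => 2 * twice h i) (fun j => 2 * twice k j) := by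
  constructor
  · rintro ⟨A, _hN, hrowA, hcolA⟩
    intro u _hu1 hun
    have hbound : ∀ U : Finset (Fin (2*n)), U.card ≤ u →
        ∑ j ∈ U, (2 * twice k j) ≤ ∑ i : Fin (2*m), min (2 * twice h i) u := by
      intro U hU
      calc ∑ j ∈ U, 2 * twice k j
          = ∑ j ∈ U, ∑ i : Fin (2*m), (if A i j ≠ 0 then 1 else 0) := by
            refine Finset.sum_congr rfl (fun j _ => ?_)
            rw [← hcolA j, colWeight, Finset.card_filter]
        _ = ∑ i : Fin (2*m), ∑ j ∈ U, (if A i j ≠ 0 then 1 else 0) := Finset.sum_comm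
        _ ≤ ∑ i : Fin (2*m), min (2 * twice h i) u := by
            refine Finset.sum_le_sum (fun i _ => ?_)
            rw [← hrowA i, ← Finset.card_filter]
            refine le_min ?_ ?_
            · rw [rowWeight]
              exact Finset.card_le_card
                (Finset.filter_subset_filter _ (Finset.subset_univ U))
            · exact le_trans (Finset.card_le_card (Finset.filter_subset _ _)) hU
    set e : Equiv.Perm (Fin (2*n)) :=
      Fin.revPerm.trans (Tuple.sort (fun j : Fin (2*n) => 2 * twice k j)) with he
    set F := Finset.univ.filter (fun j : Fin (2*n) => (j:ℕ) < u) with hF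
    have hsum2 : ∑ j ∈ F, decRearrange (fun j : Fin (2*n) => 2 * twice k j) j
        = ∑ j ∈ F.image e, 2 * twice k j := by
      rw [Finset.sum_image (fun a _ b _ hab => e.injective hab)]
      rfl
    rw [hsum2]
    refine hbound _ ?_
    calc (F.image e).card ≤ F.card := Finset.card_image_le
      _ = u := by rw [hF]; exact card_filter_lt_fin (2*n) u hun
  · intro hGR
    have hgr' : GR' h k := by
      intro T
      rcases Nat.eq_zero_or_pos T.card with h0 | hTpos
      · rw [Finset.card_eq_zero] at h0; subst h0; simp
      · have hTn : T.card ≤ n := (Finset.card_le_univ T).trans (by simp)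
        have hGRu := hGR (2*T.card) (by omega) (by omega)
        set S : Finset (Fin (2*n)) :=
          Finset.univ.filter
            (fun j : Fin (2*n) => (⟨(j:ℕ)/2, by have := j.isLt; omega⟩ : Fin n) ∈ T) with hS
        have hScard : S.card = 2 * T.card := by
          rw [hS, Finset.card_filter,
            sum_double (fun j => if j ∈ T then 1 else 0) _ (fun j => rfl),
            sum_indicator_card]
        have h1 := sum_le_decRearrange (fun j : Fin (2*n) => 2 * twice k j) S
        rw [hScard] at h1
        have h2 : ∑ j ∈ S, 2 * twice k j = 4 * ∑ j ∈ T, k j := by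
          rw [hS, Finset.sum_filter]
          have e1 : (∑ a : Fin (2*n),
              if (⟨(a:ℕ)/2, by have := a.isLt; omega⟩ : Fin n) ∈ T then 2 * twice k a else 0)
              = 2 * ∑ j : Fin n, (if j ∈ T then 2 * k j else 0) :=
            sum_double (fun j => if j ∈ T then 2 * k j else 0) _ (fun a => rfl)
          rw [e1, Finset.sum_ite_mem, Finset.univ_inter, Finset.mul_sum, Finset.mul_sum]
          refine Finset.sum_congr rfl (fun j _ => by ring)
        have h3 : ∑ i : Fin (2*m), min (2 * twice h i) (2*T.card)
            = 4 * ∑ i : Fin m, min (h i) T.card := by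
          have e1 : ∑ i : Fin (2*m), min (2 * twice h i) (2*T.card)
              = 2 * ∑ i : Fin m, min (2 * h i) (2*T.card) :=
            sum_double (fun i => min (2 * h i) (2*T.card)) _ (fun i => rfl)
          rw [e1]
          have : ∑ i : Fin m, min (2 * h i) (2*T.card)
              = ∑ i : Fin m, 2 * min (h i) T.card :=
            Finset.sum_congr rfl (fun i _ => by omega)
          rw [this, Finset.mul_sum, Finset.mul_sum]
          refine Finset.sum_congr rfl (fun i _ => by ring)
        rw [h2] at h1
        rw [h3] at hGRu
        omega
    obtain ⟨B, hB01, hBrow, hBcol⟩ := gr_matrix_aux (∑ j, k j) h k le_rfl hgr' hsum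
    refine ⟨blockA B, blockA_isNASM B, fun i => ?_, fun j => ?_⟩
    · rw [blockA_rowWeight B hB01 i, hBrow]
      rfl
    · rw [blockA_colWeight B hB01 j, hBcol]
      rfl
end

section
/- Let A_1 be an m×n_1 NASM and A_2 an m×n_2 NASM, and assume that every row of A_1 and every row of A_2 contains at least one nonzero entry. Then the horizontal concatenation [A_1 A_2] (the m×(n_1+n_2) matrix whose first n_1 columns are A_1 and last n_2 columns are A_2) is a NASM if and only if A_1^→ = -A_2^←. In that case, [A_1 A_2] is a NASM(m,n_1+n_2; w_r(A_1)+w_r(A_2), (w_c(A_1),w_c(A_2))), i.e., its row-weight sequence is the entrywise sum of those of A_1 and A_2 and its column-weight sequence is their concatenation. -/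
/-- The first nonzero entry of row `i` of `A` (or `0` if row `i` is zero). -/
def firstNZRow {m n : ℕ} (A : Matrix (Fin m) (Fin n) ℤ) (i : Fin m) : ℤ :=
  if h : (Finset.univ.filter (fun j => A i j ≠ 0)).Nonempty then
    A i ((Finset.univ.filter (fun j => A i j ≠ 0)).min' h)
  else 0

/-- The last nonzero entry of row `i` of `A` (or `0` if row `i` is zero). -/
def lastNZRow {m n : ℕ} (A : Matrix (Fin m) (Fin n) ℤ) (i : Fin m) : ℤ :=
  if h : (Finset.univ.filter (fun j => A i j ≠ 0)).Nonempty then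
    A i ((Finset.univ.filter (fun j => A i j ≠ 0)).max' h)
  else 0

/-- The first (topmost) nonzero entry of column `j` of `A` (or `0` if column `j` is zero). -/
def firstNZCol {m n : ℕ} (A : Matrix (Fin m) (Fin n) ℤ) (j : Fin n) : ℤ :=
  if h : (Finset.univ.filter (fun i => A i j ≠ 0)).Nonempty then
    A ((Finset.univ.filter (fun i => A i j ≠ 0)).min' h) j
  else 0

/-- The last (bottommost) nonzero entry of column `j` of `A` (or `0` if column `j` is zero). -/
def lastNZCol {m n : ℕ} (A : Matrix (Fin m) (Fin n) ℤ) (j : Fin n) : ℤ :=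
  if h : (Finset.univ.filter (fun i => A i j ≠ 0)).Nonempty then
    A ((Finset.univ.filter (fun i => A i j ≠ 0)).max' h) j
  else 0

lemma fin_split {n1 n2 : ℕ} (j : Fin (n1 + n2)) :
    (∃ a : Fin n1, j = Fin.castAdd n2 a) ∨ ∃ a : Fin n2, j = Fin.natAdd n1 a := by
  rcases lt_or_ge (j : ℕ) n1 with h | h
  · exact Or.inl ⟨⟨j, h⟩, by ext; simp⟩
  · refine Or.inr ⟨⟨(j : ℕ) - n1, by have := j.isLt; omega⟩, by ext; simp; omega⟩

lemma lastNZRow_eq {m n : ℕ} (A : Matrix (Fin m) (Fin n) ℤ) (i : Fin m) (j : Fin n)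
    (hj : A i j ≠ 0) (hlast : ∀ l, j < l → A i l = 0) : lastNZRow A i = A i j := by
  have hmem : j ∈ Finset.univ.filter (fun l => A i l ≠ 0) := by simp [hj]
  have hne : (Finset.univ.filter (fun l => A i l ≠ 0)).Nonempty := ⟨j, hmem⟩
  have hmax : (Finset.univ.filter (fun l => A i l ≠ 0)).max' hne = j := by
    apply le_antisymm
    · apply Finset.max'_le
      intro y hy
      by_contra hyj
      exact (Finset.mem_filter.mp hy).2 (hlast y (lt_of_not_ge hyj))
    · exact Finset.le_max' _ j hmem
  rw [lastNZRow, dif_pos hne, hmax]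

lemma firstNZRow_eq {m n : ℕ} (A : Matrix (Fin m) (Fin n) ℤ) (i : Fin m) (j : Fin n)
    (hj : A i j ≠ 0) (hfirst : ∀ l, l < j → A i l = 0) : firstNZRow A i = A i j := by
  have hmem : j ∈ Finset.univ.filter (fun l => A i l ≠ 0) := by simp [hj]
  have hne : (Finset.univ.filter (fun l => A i l ≠ 0)).Nonempty := ⟨j, hmem⟩
  have hmin : (Finset.univ.filter (fun l => A i l ≠ 0)).min' hne = j := by
    apply le_antisymm
    · exact Finset.min'_le _ j hmem
    · apply Finset.le_min'
      intro y hy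
      by_contra hyj
      exact (Finset.mem_filter.mp hy).2 (hfirst y (lt_of_not_ge hyj))
  rw [firstNZRow, dif_pos hne, hmin]

lemma lastNZRow_spec {m n : ℕ} (A : Matrix (Fin m) (Fin n) ℤ) (i : Fin m)
    (h : ∃ j, A i j ≠ 0) :
    ∃ j, A i j ≠ 0 ∧ (∀ l, j < l → A i l = 0) ∧ lastNZRow A i = A i j := by
  obtain ⟨j0, hj0⟩ := h
  have hne : (Finset.univ.filter (fun l => A i l ≠ 0)).Nonempty := ⟨j0, by simp [hj0]⟩
  set j := (Finset.univ.filter (fun l => A i l ≠ 0)).max' hne with hjdef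
  have hjne : A i j ≠ 0 := by
    have := Finset.max'_mem _ hne
    simpa using this
  have hlast : ∀ l, j < l → A i l = 0 := by
    intro l hl
    by_contra hlz
    have hmem : l ∈ Finset.univ.filter (fun l => A i l ≠ 0) := by simp [hlz]
    exact absurd (Finset.le_max' _ l hmem) (not_le.mpr hl)
  exact ⟨j, hjne, hlast, lastNZRow_eq A i j hjne hlast⟩

lemma firstNZRow_spec {m n : ℕ} (A : Matrix (Fin m) (Fin n) ℤ) (i : Fin m)
    (h : ∃ j, A i j ≠ 0) :
    ∃ j, A i j ≠ 0 ∧ (∀ l, l < j → A i l = 0) ∧ firstNZRow A i = A i j := by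
  obtain ⟨j0, hj0⟩ := h
  have hne : (Finset.univ.filter (fun l => A i l ≠ 0)).Nonempty := ⟨j0, by simp [hj0]⟩
  set j := (Finset.univ.filter (fun l => A i l ≠ 0)).min' hne with hjdef
  have hjne : A i j ≠ 0 := by
    have := Finset.min'_mem _ hne
    simpa using this
  have hfirst : ∀ l, l < j → A i l = 0 := by
    intro l hl
    by_contra hlz
    have hmem : l ∈ Finset.univ.filter (fun l => A i l ≠ 0) := by simp [hlz]
    exact absurd (Finset.min'_le _ l hmem) (not_le.mpr hl)
  exact ⟨j, hjne, hfirst, firstNZRow_eq A i j hjne hfirst⟩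
/-- Let `A1` be an `m × n1` NASM and `A2` an `m × n2` NASM, each of
whose rows contains a nonzero entry. The horizontal concatenation `B = [A1 A2]` is a
NASM iff `A1^→ = -A2^←`, and in that case its row-weight sequence is the entrywise sum
of those of `A1`, `A2` and its column-weight sequence is their concatenation. -/
theorem statement3 (m n1 n2 : ℕ)
    (A1 : Matrix (Fin m) (Fin n1) ℤ) (A2 : Matrix (Fin m) (Fin n2) ℤ)
    (h1 : IsNASM A1) (h2 : IsNASM A2)
    (hr1 : ∀ i, ∃ j, A1 i j ≠ 0) (hr2 : ∀ i, ∃ j, A2 i j ≠ 0)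
    (B : Matrix (Fin m) (Fin (n1 + n2)) ℤ)
    (hB : ∀ i j, B i j = Fin.append (A1 i) (A2 i) j) :
    (IsNASM B ↔ ∀ i, lastNZRow A1 i = -(firstNZRow A2 i)) ∧
    ((∀ i, lastNZRow A1 i = -(firstNZRow A2 i)) →
      (∀ i, rowWeight B i = rowWeight A1 i + rowWeight A2 i) ∧
      (∀ j : Fin (n1 + n2),
        colWeight B j = Fin.append (fun j1 => colWeight A1 j1) (fun j2 => colWeight A2 j2) j)) := by
  obtain ⟨hE1, hR1, hC1⟩ := h1
  obtain ⟨hE2, hR2, hC2⟩ := h2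
  have hBl : ∀ i (j : Fin n1), B i (Fin.castAdd n2 j) = A1 i j := fun i j => by
    rw [hB]; exact Fin.append_left _ _ j
  have hBr : ∀ i (j : Fin n2), B i (Fin.natAdd n1 j) = A2 i j := fun i j => by
    rw [hB]; exact Fin.append_right _ _ j
  constructor
  · constructor
    · intro hBN i
      obtain ⟨j1, hj1ne, hj1last, hj1eq⟩ := lastNZRow_spec A1 i (hr1 i)
      obtain ⟨j2, hj2ne, hj2first, hj2eq⟩ := firstNZRow_spec A2 i (hr2 i)
      have hlt : Fin.castAdd n2 j1 < Fin.natAdd n1 j2 := by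
        simp only [Fin.lt_def, Fin.coe_castAdd, Fin.coe_natAdd]
        have := j1.isLt; omega
      have hgap : ∀ l : Fin (n1 + n2),
          Fin.castAdd n2 j1 < l → l < Fin.natAdd n1 j2 → B i l = 0 := by
        intro l hl1 hl2
        rcases fin_split l with ⟨a, rfl⟩ | ⟨a, rfl⟩
        · rw [hBl]
          refine hj1last a ?_
          simp only [Fin.lt_def, Fin.coe_castAdd] at hl1 ⊢
          omega
        · rw [hBr]
          refine hj2first a ?_
          simp only [Fin.lt_def, Fin.coe_natAdd] at hl2 ⊢
          omega
      have key := hBN.2.1 i (Fin.castAdd n2 j1) (Fin.natAdd n1 j2) hlt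
        (by simpa [hBl] using hj1ne) (by simpa [hBr] using hj2ne) hgap
      simp only [hBl, hBr] at key
      rw [hj1eq, hj2eq]
      linarith
    · intro hcond
      refine ⟨?_, ?_, ?_⟩
      · intro i j
        rcases fin_split j with ⟨a, rfl⟩ | ⟨a, rfl⟩
        · rw [hBl]; exact hE1 i a
        · rw [hBr]; exact hE2 i a
      · intro i j j' hjj' hj hj' hgap
        simp only at hj hj' hgap ⊢
        rcases fin_split j with ⟨a, rfl⟩ | ⟨a, rfl⟩ <;>
          rcases fin_split j' with ⟨b, rfl⟩ | ⟨b, rfl⟩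
        · rw [hBl] at hj; rw [hBl] at hj' ⊢; rw [hBl]
          refine hR1 i a b ?_ hj hj' ?_
          · simpa only [Fin.lt_def, Fin.coe_castAdd] using hjj'
          · intro l hl1 hl2
            have := hgap (Fin.castAdd n2 l)
              (by simp only [Fin.lt_def, Fin.coe_castAdd] at hl1 ⊢; omega)
              (by simp only [Fin.lt_def, Fin.coe_castAdd] at hl2 ⊢; omega)
            rwa [hBl] at this
        · rw [hBl] at hj; rw [hBr] at hj' ⊢; rw [hBl]
          have e1 : lastNZRow A1 i = A1 i a := by
            refine lastNZRow_eq A1 i a hj ?_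
            intro l hl
            have := hgap (Fin.castAdd n2 l)
              (by simp only [Fin.lt_def, Fin.coe_castAdd] at hl ⊢; omega)
              (by simp only [Fin.lt_def, Fin.coe_castAdd, Fin.coe_natAdd]
                  have := l.isLt; omega)
            rwa [hBl] at this
          have e2 : firstNZRow A2 i = A2 i b := by
            refine firstNZRow_eq A2 i b hj' ?_
            intro l hl
            have := hgap (Fin.natAdd n1 l)
              (by simp only [Fin.lt_def, Fin.coe_castAdd, Fin.coe_natAdd]
                  have := a.isLt; omega)
              (by simp only [Fin.lt_def, Fin.coe_natAdd] at hl ⊢; omega)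
            rwa [hBr] at this
          have := hcond i
          rw [e1, e2] at this
          linarith
        · exfalso
          simp only [Fin.lt_def, Fin.coe_castAdd, Fin.coe_natAdd] at hjj'
          have := b.isLt; omega
        · rw [hBr] at hj; rw [hBr] at hj' ⊢; rw [hBr]
          refine hR2 i a b ?_ hj hj' ?_
          · simp only [Fin.lt_def, Fin.coe_natAdd] at hjj' ⊢; omega
          · intro l hl1 hl2
            have := hgap (Fin.natAdd n1 l)
              (by simp only [Fin.lt_def, Fin.coe_natAdd] at hl1 ⊢; omega)
              (by simp only [Fin.lt_def, Fin.coe_natAdd] at hl2 ⊢; omega)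
            rwa [hBr] at this
      · intro j
        rcases fin_split j with ⟨a, rfl⟩ | ⟨a, rfl⟩
        · simpa only [hBl] using hC1 a
        · simpa only [hBr] using hC2 a
  · intro _
    constructor
    · intro i
      simp only [rowWeight, Finset.card_filter]
      rw [Fin.sum_univ_add]
      congr 1
      · exact Finset.sum_congr rfl fun j _ => by rw [hBl]
      · exact Finset.sum_congr rfl fun j _ => by rw [hBr]
    · intro j
      rcases fin_split j with ⟨a, rfl⟩ | ⟨a, rfl⟩
      · simp only [colWeight, Fin.append_left, hBl]
      · simp only [colWeight, Fin.append_right, hBr]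
end

section
/- Let A_1 be an m_1×n NASM and A_2 an m_2×n NASM, and assume that every column of A_1 and every column of A_2 contains at least one nonzero entry. Then the vertical concatenation [A_1; A_2] (the (m_1+m_2)×n matrix whose first m_1 rows are A_1 and last m_2 rows are A_2) is a NASM if and only if A_1^↓ = -A_2^↑. In that case, [A_1; A_2] is a NASM(m_1+m_2, n; (w_r(A_1),w_r(A_2)), w_c(A_1)+w_c(A_2)), i.e., its row-weight sequence is the concatenation of those of A_1 and A_2 and its column-weight sequence is their entrywise sum. -/
lemma castAdd_lt_natAdd {m1 m2 : ℕ} (i : Fin m1) (i' : Fin m2) :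
    Fin.castAdd m2 i < Fin.natAdd m1 i' := by
  simp only [Fin.lt_def, Fin.coe_castAdd, Fin.coe_natAdd]
  omega

lemma fin_cases_add {m1 m2 : ℕ} (l : Fin (m1 + m2)) :
    (∃ l1 : Fin m1, l = Fin.castAdd m2 l1) ∨ (∃ l2 : Fin m2, l = Fin.natAdd m1 l2) := by
  refine Fin.addCases (fun l1 => ?_) (fun l2 => ?_) l
  exacts [Or.inl ⟨l1, rfl⟩, Or.inr ⟨l2, rfl⟩]

lemma append_alt_iff {m1 m2 : ℕ} (c1 : Fin m1 → ℤ) (c2 : Fin m2 → ℤ)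
    (a1 : AltSigns c1) (a2 : AltSigns c2)
    (ne1 : (Finset.univ.filter (fun i => c1 i ≠ 0)).Nonempty)
    (ne2 : (Finset.univ.filter (fun i => c2 i ≠ 0)).Nonempty) :
    AltSigns (Fin.append c1 c2) ↔
      c2 ((Finset.univ.filter (fun i => c2 i ≠ 0)).min' ne2) =
        -(c1 ((Finset.univ.filter (fun i => c1 i ≠ 0)).max' ne1)) := by
  set M := (Finset.univ.filter (fun i => c1 i ≠ 0)).max' ne1 with hMdef
  set N := (Finset.univ.filter (fun i => c2 i ≠ 0)).min' ne2 with hNdef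
  have hM : c1 M ≠ 0 := by
    have := Finset.max'_mem _ ne1
    simpa using this
  have hN : c2 N ≠ 0 := by
    have := Finset.min'_mem _ ne2
    simpa using this
  have hMmax : ∀ i : Fin m1, M < i → c1 i = 0 := by
    intro i hi
    by_contra hne
    have : i ≤ M := Finset.le_max' _ i (by simpa using hne)
    exact absurd hi (not_lt.mpr this)
  have hNmin : ∀ i : Fin m2, i < N → c2 i = 0 := by
    intro i hi
    by_contra hne
    have : N ≤ i := Finset.min'_le _ i (by simpa using hne)
    exact absurd hi (not_lt.mpr this)
  constructor
  · intro halt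
    have := halt (Fin.castAdd m2 M) (Fin.natAdd m1 N) (castAdd_lt_natAdd M N)
      (by simpa using hM) (by simpa using hN) ?_
    · simpa using this
    · intro l hl1 hl2
      rcases fin_cases_add l with ⟨l1, rfl⟩ | ⟨l2, rfl⟩
      · simp only [Fin.append_left]
        apply hMmax
        simpa only [Fin.lt_def, Fin.coe_castAdd] using hl1
      · simp only [Fin.append_right]
        apply hNmin
        simp only [Fin.lt_def, Fin.coe_natAdd] at hl2
        exact Fin.lt_def.mpr (by omega)
  · intro hcond j j' hlt hj hj' hgap
    rcases fin_cases_add j with ⟨j1, rfl⟩ | ⟨j2, rfl⟩ <;>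
      rcases fin_cases_add j' with ⟨j'1, rfl⟩ | ⟨j'2, rfl⟩
    · -- both in first block
      simp only [Fin.append_left] at hj hj' ⊢
      apply a1 j1 j'1
      · simpa only [Fin.lt_def, Fin.coe_castAdd] using hlt
      · exact hj
      · exact hj'
      · intro l hl1 hl2
        have := hgap (Fin.castAdd m2 l)
          (by simpa only [Fin.lt_def, Fin.coe_castAdd] using hl1)
          (by simpa only [Fin.lt_def, Fin.coe_castAdd] using hl2)
        simpa using this
    · -- j in first, j' in second: this is the junction
      simp only [Fin.append_left, Fin.append_right] at hj hj' ⊢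
      have hj1M : j1 = M := by
        have hle : j1 ≤ M := Finset.le_max' _ j1 (by simpa using hj)
        rcases eq_or_lt_of_le hle with h | h
        · exact h
        · exfalso
          have := hgap (Fin.castAdd m2 M)
            (by simpa only [Fin.lt_def, Fin.coe_castAdd] using h)
            (castAdd_lt_natAdd M j'2)
          simp only [Fin.append_left] at this
          exact hM this
      have hj'2N : j'2 = N := by
        have hle : N ≤ j'2 := Finset.min'_le _ j'2 (by simpa using hj')
        rcases eq_or_lt_of_le hle with h | h
        · exact h.symm
        · exfalso
          have := hgap (Fin.natAdd m1 N) (castAdd_lt_natAdd j1 N)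
            (by simp only [Fin.lt_def, Fin.coe_natAdd]; omega)
          simp only [Fin.append_right] at this
          exact hN this
      rw [hj1M, hj'2N]
      exact hcond
    · -- j in second, j' in first: impossible
      exfalso
      simp only [Fin.lt_def, Fin.coe_castAdd, Fin.coe_natAdd] at hlt
      omega
    · -- both in second block
      simp only [Fin.append_right] at hj hj' ⊢
      apply a2 j2 j'2
      · simpa only [Fin.lt_def, Fin.coe_natAdd, add_lt_add_iff_left] using hlt
      · exact hj
      · exact hj'
      · intro l hl1 hl2
        have := hgap (Fin.natAdd m1 l)
          (by simp only [Fin.lt_def, Fin.coe_natAdd] at hl1 ⊢; omega)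
          (by simp only [Fin.lt_def, Fin.coe_natAdd] at hl2 ⊢; omega)
        simpa using this

/-- Let `A1` be an `m1 × n` NASM and `A2` an `m2 × n` NASM, each of
whose columns contains a nonzero entry. The vertical concatenation `B = [A1; A2]` is a
NASM iff `A1^↓ = -A2^↑`, and in that case its row-weight sequence is the concatenation
of those of `A1`, `A2` and its column-weight sequence is their entrywise sum. -/
theorem statement4 (m1 m2 n : ℕ)
    (A1 : Matrix (Fin m1) (Fin n) ℤ) (A2 : Matrix (Fin m2) (Fin n) ℤ)
    (h1 : IsNASM A1) (h2 : IsNASM A2)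
    (hc1 : ∀ j, ∃ i, A1 i j ≠ 0) (hc2 : ∀ j, ∃ i, A2 i j ≠ 0)
    (B : Matrix (Fin (m1 + m2)) (Fin n) ℤ)
    (hB : ∀ i j, B i j = Fin.append (fun i1 => A1 i1 j) (fun i2 => A2 i2 j) i) :
    (IsNASM B ↔ ∀ j, lastNZCol A1 j = -(firstNZCol A2 j)) ∧
    ((∀ j, lastNZCol A1 j = -(firstNZCol A2 j)) →
      (∀ i : Fin (m1 + m2),
        rowWeight B i = Fin.append (fun i1 => rowWeight A1 i1) (fun i2 => rowWeight A2 i2) i) ∧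
      (∀ j, colWeight B j = colWeight A1 j + colWeight A2 j)) := by
  have ne1 : ∀ j, (Finset.univ.filter (fun i => A1 i j ≠ 0)).Nonempty := by
    intro j; obtain ⟨i, hi⟩ := hc1 j; exact ⟨i, by simpa using hi⟩
  have ne2 : ∀ j, (Finset.univ.filter (fun i => A2 i j ≠ 0)).Nonempty := by
    intro j; obtain ⟨i, hi⟩ := hc2 j; exact ⟨i, by simpa using hi⟩
  have hBfun : ∀ j, (fun i => B i j) =
      Fin.append (fun i1 => A1 i1 j) (fun i2 => A2 i2 j) :=
    fun j => funext fun i => hB i j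
  have hlast : ∀ j, lastNZCol A1 j =
      A1 ((Finset.univ.filter (fun i => A1 i j ≠ 0)).max' (ne1 j)) j := by
    intro j; rw [lastNZCol, dif_pos (ne1 j)]
  have hfirst : ∀ j, firstNZCol A2 j =
      A2 ((Finset.univ.filter (fun i => A2 i j ≠ 0)).min' (ne2 j)) j := by
    intro j; rw [firstNZCol, dif_pos (ne2 j)]
  have key : ∀ j, AltSigns (fun i => B i j) ↔
      lastNZCol A1 j = -(firstNZCol A2 j) := by
    intro j
    rw [hBfun j, append_alt_iff (fun i => A1 i j) (fun i => A2 i j)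
      (h1.2.2 j) (h2.2.2 j) (ne1 j) (ne2 j), hlast, hfirst]
    constructor <;> intro h <;> linarith
  constructor
  · constructor
    · intro hnasm j
      exact (key j).mp (hnasm.2.2 j)
    · intro hcond
      refine ⟨?_, ?_, fun j => (key j).mpr (hcond j)⟩
      · intro i j
        rw [hB i j]
        refine Fin.addCases (fun i1 => ?_) (fun i2 => ?_) i
        · simpa using h1.1 i1 j
        · simpa using h2.1 i2 j
      · intro i
        refine Fin.addCases (fun i1 => ?_) (fun i2 => ?_) i
        · have : (fun j => B (Fin.castAdd m2 i1) j) = fun j => A1 i1 j := by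
            funext j; rw [hB]; simp
          rw [this]; exact h1.2.1 i1
        · have : (fun j => B (Fin.natAdd m1 i2) j) = fun j => A2 i2 j := by
            funext j; rw [hB]; simp
          rw [this]; exact h2.2.1 i2
  · intro _
    constructor
    · intro i
      refine Fin.addCases (fun i1 => ?_) (fun i2 => ?_) i
      · rw [Fin.append_left]
        unfold rowWeight
        congr 1
        apply Finset.filter_congr
        intro j _
        rw [hB, Fin.append_left]
      · rw [Fin.append_right]
        unfold rowWeight
        congr 1
        apply Finset.filter_congr
        intro j _
        rw [hB, Fin.append_right]
    · intro j
      unfold colWeight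
      simp only [Finset.card_filter]
      rw [Fin.sum_univ_add]
      congr 1 <;> apply Finset.sum_congr rfl <;> intro i _ <;> rw [hB]
      · rw [Fin.append_left]
      · rw [Fin.append_right]
end

section
/- Let a_1 < a_2 < ⋯ < a_n be positive integers and let v be an integer with v > a_n. Then every run of the alternated form of (a_1,…,a_n) is nonzero modulo v; that is, for all indices 1 ≤ i ≤ j ≤ n, the sum Σ_{ℓ=i}^{j} (-1)^ℓ a_ℓ is not congruent to 0 modulo v (and hence the same holds for the negated alternated form). -/
lemma alt_sum_bounds (b : ℕ → ℤ) :
    ∀ j i : ℕ, i ≤ j → (∀ l, i ≤ l → l ≤ j → 0 < b l) →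
      (∀ l m, i ≤ l → l < m → m ≤ j → b l < b m) →
      0 < (-1 : ℤ) ^ (j + 1) * ∑ l ∈ Finset.Icc i j, (-1 : ℤ) ^ (l + 1) * b l ∧
      (-1 : ℤ) ^ (j + 1) * ∑ l ∈ Finset.Icc i j, (-1 : ℤ) ^ (l + 1) * b l ≤ b j := by
  intro j
  induction j with
  | zero =>
    intro i hij hp _
    interval_cases i
    have := hp 0 le_rfl le_rfl
    have h0 : (-1 : ℤ) ^ (0 + 1) = -1 := by norm_num
    rw [Finset.Icc_self, Finset.sum_singleton, h0]
    constructor <;> linarith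
  | succ j ih =>
    intro i hij hp hm
    rcases Nat.lt_or_ge i (j + 1) with h | h
    · have hij' : i ≤ j := Nat.lt_succ_iff.mp h
      rw [Finset.sum_Icc_succ_top (by omega : i ≤ j + 1)]
      obtain ⟨h1, h2⟩ := ih i hij' (fun l hl hl' => hp l hl (by omega))
        (fun l m hl hlm hm' => hm l m hl hlm (by omega))
      have hbj : b j < b (j + 1) := hm j (j + 1) hij' (by omega) le_rfl
      set S := ∑ l ∈ Finset.Icc i j, (-1 : ℤ) ^ (l + 1) * b l with hS
      have hneg : (-1 : ℤ) ^ (j + 1 + 1) = -(-1 : ℤ) ^ (j + 1) := by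
        rw [pow_succ]; ring
      rw [hneg]
      rcases Nat.even_or_odd (j + 1) with he | he
      · rw [he.neg_one_pow] at h1 h2 ⊢
        constructor <;> nlinarith
      · rw [he.neg_one_pow] at h1 h2 ⊢
        constructor <;> nlinarith
    · have : i = j + 1 := le_antisymm hij h
      subst this
      simp only [Finset.Icc_self, Finset.sum_singleton]
      have hp' := hp (j + 1) le_rfl le_rfl
      rcases Nat.even_or_odd (j + 1 + 1) with he | he
      · rw [he.neg_one_pow]; constructor <;> nlinarith
      · rw [he.neg_one_pow]; constructor <;> nlinarith

/-- Let `a 0 < a 1 < ⋯` be (positive) strictly increasing integers all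
less than `v` (i.e. `v` exceeds the last term). Then every run of the alternated form
`(-a_1, a_2, -a_3, …)` is nonzero modulo `v`, and the same holds for the negated
alternated form. Here `a l` plays the role of `a_{l+1}`, so the sign of `a l` in the
alternated form is `(-1) ^ ((l : ℕ) + 1)`. -/
theorem statement5 (n : ℕ) (a : Fin n → ℤ) (hpos : ∀ l, 0 < a l)
    (hmono : StrictMono a) (v : ℤ) (hv : ∀ l, a l < v) :
    ∀ i j : Fin n, i ≤ j →
      (¬ v ∣ ∑ l ∈ Finset.Icc i j, (-1 : ℤ) ^ ((l : ℕ) + 1) * a l) ∧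
      (¬ v ∣ ∑ l ∈ Finset.Icc i j, -((-1 : ℤ) ^ ((l : ℕ) + 1) * a l)) := by
  intro i j hij
  set b : ℕ → ℤ := fun l => if h : l < n then a ⟨l, h⟩ else 0 with hb
  have hT : ∑ l ∈ Finset.Icc i j, (-1 : ℤ) ^ ((l : ℕ) + 1) * a l
      = ∑ l ∈ Finset.Icc (i : ℕ) (j : ℕ), (-1 : ℤ) ^ (l + 1) * b l := by
    rw [← Fin.map_valEmbedding_Icc, Finset.sum_map]
    refine Finset.sum_congr rfl fun x _ => ?_
    simp [hb, x.isLt]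
  obtain ⟨h1, h2⟩ := alt_sum_bounds b (j : ℕ) (i : ℕ) hij
    (fun l hl hl' => by
      have hln : l < n := lt_of_le_of_lt hl' j.isLt
      simpa [hb, hln] using hpos ⟨l, hln⟩)
    (fun l m hl hlm hm' => by
      have hmn : m < n := lt_of_le_of_lt hm' j.isLt
      have hln : l < n := lt_trans hlm hmn
      simpa [hb, hln, hmn] using hmono (show (⟨l, hln⟩ : Fin n) < ⟨m, hmn⟩ from hlm))
  rw [← hT] at h1 h2
  have hbj : b (j : ℕ) = a j := by simp [hb, j.isLt]
  rw [hbj] at h2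
  set T := ∑ l ∈ Finset.Icc i j, (-1 : ℤ) ^ ((l : ℕ) + 1) * a l with hTdef
  have habs : ¬ v ∣ T := by
    intro hdvd
    have hd : v ∣ (-1 : ℤ) ^ ((j : ℕ) + 1) * T := Dvd.dvd.mul_left hdvd _
    have hlt : (-1 : ℤ) ^ ((j : ℕ) + 1) * T < v := lt_of_le_of_lt h2 (hv j)
    have := Int.le_of_dvd h1 hd
    omega
  refine ⟨habs, fun hdvd => ?_⟩
  rw [Finset.sum_neg_distrib, dvd_neg] at hdvd
  exact habs hdvd
end

section
/- Let n ≥ 2 and let a_1,…,a_n be pairwise distinct positive integers with a_1 < a_2 < ⋯ < a_{n-1}, and let v be an integer with v > a_{n-1} and v > a_n. If Σ_{ℓ=1}^{n} (-1)^ℓ a_ℓ ≡ 0 (mod v), then every proper run of the alternated form is nonzero modulo v; that is, for all 1 ≤ i ≤ j ≤ n with (i,j) ≠ (1,n), the sum Σ_{ℓ=i}^{j} (-1)^ℓ a_ℓ is not congruent to 0 modulo v. -/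
open Finset

lemma run_bound7 (n : ℕ) (a : ℕ → ℤ)
    (hpos : ∀ l, 1 ≤ l → l ≤ n → 0 < a l)
    (hmono : ∀ l, 1 ≤ l → l + 1 ≤ n - 1 → a l < a (l + 1)) :
    ∀ i j : ℕ, 1 ≤ i → i ≤ j → j ≤ n - 1 →
      0 < (-1 : ℤ) ^ j * ∑ l ∈ Finset.Icc i j, (-1 : ℤ) ^ l * a l ∧
      (-1 : ℤ) ^ j * ∑ l ∈ Finset.Icc i j, (-1 : ℤ) ^ l * a l ≤ a j := by
  intro i j hi hij
  induction j, hij using Nat.le_induction with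
  | base =>
    intro hin
    rw [Finset.Icc_self, Finset.sum_singleton, ← mul_assoc, ← pow_add,
      Even.neg_one_pow ⟨i, rfl⟩, one_mul]
    exact ⟨hpos i hi (le_trans hin (Nat.sub_le n 1)), le_refl _⟩
  | succ j hij ih =>
    intro hjn
    have hjn' : j ≤ n - 1 := le_trans (Nat.le_succ j) hjn
    obtain ⟨h1, h2⟩ := ih hjn'
    have hm := hmono j (le_trans hi hij) hjn
    rw [Finset.sum_Icc_succ_top (le_trans hij (Nat.le_succ j))]
    have hpow : ((-1 : ℤ)) ^ (j + 1) = -((-1 : ℤ) ^ j) := by rw [pow_succ]; ring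
    have h2' : ((-1 : ℤ) ^ j) * ((-1 : ℤ) ^ j) = 1 := by
      rw [← pow_add, Even.neg_one_pow ⟨j, rfl⟩]
    have key : (-1 : ℤ) ^ (j + 1) *
        ((∑ l ∈ Finset.Icc i j, (-1 : ℤ) ^ l * a l) + (-1 : ℤ) ^ (j + 1) * a (j + 1))
        = a (j + 1) - (-1 : ℤ) ^ j * ∑ l ∈ Finset.Icc i j, (-1 : ℤ) ^ l * a l := by
      rw [hpow]; linear_combination (a (j + 1)) * h2'
    rw [key]
    constructor <;> linarith

lemma mono_le7 (n : ℕ) (a : ℕ → ℤ)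
    (hmono : ∀ l, 1 ≤ l → l + 1 ≤ n - 1 → a l < a (l + 1)) :
    ∀ j m : ℕ, 1 ≤ j → j ≤ m → m ≤ n - 1 → a j ≤ a m := by
  intro j m hj hjm
  induction m, hjm using Nat.le_induction with
  | base => intro _; exact le_refl _
  | succ m hjm ih =>
    intro hmn
    exact le_trans (ih (le_trans (Nat.le_succ m) hmn))
      (le_of_lt (hmono m (le_trans hj hjm) hmn))

/-- Let `n ≥ 2`, let `a 1, …, a n` be pairwise distinct positive
integers with `a 1 < a 2 < ⋯ < a (n-1)`, and let `v > a (n-1)`, `v > a n`. If the total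
alternating sum `∑_{ℓ=1}^{n} (-1)^ℓ a ℓ` is `0` modulo `v`, then every proper run of the
alternated form is nonzero modulo `v`. -/
theorem statement7 (n : ℕ) (hn : 2 ≤ n) (a : ℕ → ℤ)
    (hpos : ∀ l, 1 ≤ l → l ≤ n → 0 < a l)
    (hdist : ∀ l l', 1 ≤ l → l ≤ n → 1 ≤ l' → l' ≤ n → l ≠ l' → a l ≠ a l')
    (hmono : ∀ l, 1 ≤ l → l + 1 ≤ n - 1 → a l < a (l + 1))
    (v : ℤ) (hv1 : a (n - 1) < v) (hv2 : a n < v)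
    (hzero : v ∣ ∑ l ∈ Finset.Icc 1 n, (-1 : ℤ) ^ l * a l) :
    ∀ i j : ℕ, 1 ≤ i → i ≤ j → j ≤ n → ¬(i = 1 ∧ j = n) →
      ¬ v ∣ ∑ l ∈ Finset.Icc i j, (-1 : ℤ) ^ l * a l := by
  intro i j hi hij hjn hne hdvd
  rcases eq_or_lt_of_le hjn with hj | hj
  · -- j = n, so i ≥ 2
    subst hj
    have hi2 : 2 ≤ i := by
      rcases Nat.lt_or_ge i 2 with h | h
      · interval_cases i
        · exact absurd ⟨rfl, rfl⟩ hne
      · exact h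
    obtain ⟨k, rfl⟩ : ∃ k, i = k + 1 := ⟨i - 1, (Nat.succ_pred_eq_of_pos (by omega)).symm⟩
    have hk1 : 1 ≤ k := by omega
    have hkn : k ≤ j - 1 := by omega
    have hsplit : (∑ l ∈ Finset.Ioc 0 k, (-1 : ℤ) ^ l * a l)
        + (∑ l ∈ Finset.Ioc k j, (-1 : ℤ) ^ l * a l)
        = ∑ l ∈ Finset.Ioc 0 j, (-1 : ℤ) ^ l * a l :=
      Finset.sum_Ioc_consecutive _ (Nat.zero_le k) (by omega)
    rw [Finset.Icc_add_one_left_eq_Ioc] at hdvd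
    rw [show (1 : ℕ) = 0 + 1 from rfl, Finset.Icc_add_one_left_eq_Ioc] at hzero
    have hP : v ∣ ∑ l ∈ Finset.Ioc 0 k, (-1 : ℤ) ^ l * a l := by
      have h := dvd_sub hzero hdvd
      rwa [← hsplit, add_sub_cancel_right] at h
    rw [← Finset.Icc_add_one_left_eq_Ioc] at hP
    simp only [Nat.succ_eq_add_one, Nat.zero_add] at hP
    obtain ⟨h1, h2⟩ := run_bound7 j a hpos hmono 1 k le_rfl hk1 hkn
    have hak : a k ≤ a (j - 1) := mono_le7 j a hmono k (j - 1) hk1 hkn le_rfl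
    have hdvd' : v ∣ (-1 : ℤ) ^ k * ∑ l ∈ Finset.Icc 1 k, (-1 : ℤ) ^ l * a l :=
      Dvd.dvd.mul_left hP _
    have := Int.le_of_dvd h1 hdvd'
    linarith
  · -- j < n
    have hjn1 : j ≤ n - 1 := Nat.le_pred_of_lt hj
    obtain ⟨h1, h2⟩ := run_bound7 n a hpos hmono i j hi hij hjn1
    have haj : a j ≤ a (n - 1) := mono_le7 n a hmono j (n - 1) (le_trans hi hij) hjn1 (le_refl _)
    have hdvd' : v ∣ (-1 : ℤ) ^ j * ∑ l ∈ Finset.Icc i j, (-1 : ℤ) ^ l * a l :=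
      Dvd.dvd.mul_left hdvd _
    have := Int.le_of_dvd h1 hdvd'
    linarith
end

section
/- Let 𝐡=(h_1,…,h_m) and 𝐤=(k_1,…,k_n) be sequences of positive integers and assume there exists a NASM(m,n;𝐡,𝐤). Let v ≥ 2 be an integer and let S be a subset of Z_v \ {0} such that s ≠ -t for all distinct s,t ∈ S and s ≠ -s for every s ∈ S. Then there exists a GHA_S(m,n;𝐡,𝐤) over Z_v that is nonzero sum and naturally simple (i.e., every reduced row and every reduced column of it is a simple sequence with nonzero total sum) if and only if |S| = h_1+⋯+h_m = k_1+⋯+k_n. -/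
/-- The reduced `i`-th row of `H`: the list of nonzero entries of row `i`,
read from left to right. -/
def redRow {α : Type*} [Zero α] [DecidableEq α] {m n : ℕ}
    (H : Matrix (Fin m) (Fin n) α) (i : Fin m) : List α :=
  ((List.finRange n).map (fun j => H i j)).filter (fun x => decide (x ≠ 0))

/-- The reduced `j`-th column of `H`: the list of nonzero entries of column `j`,
read from top to bottom. -/
def redCol {α : Type*} [Zero α] [DecidableEq α] {m n : ℕ}
    (H : Matrix (Fin m) (Fin n) α) (j : Fin n) : List α :=
  ((List.finRange m).map (fun i => H i j)).filter (fun x => decide (x ≠ 0))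

/-- A finite sequence is simple if its partial sums are pairwise distinct and
nonzero, except possibly for the total sum, which may be zero. -/
def IsSimpleList {α : Type*} [AddMonoid α] (l : List α) : Prop :=
  ∀ p q : ℕ, p < q → q ≤ l.length → ¬(p = 0 ∧ q = l.length) →
    (l.take p).sum ≠ (l.take q).sum

/-- A generalized Heffter array `GHA_S(m, n; hw, kw)` over an abelian group:
row `i` has exactly `hw i` nonzero entries, column `j` has exactly `kw j` nonzero
entries, every nonzero entry lies in `S ∪ -S`, and for every `s ∈ S` exactly one
entry lies in `{s, -s}`. -/
def IsGHA {α : Type*} [AddCommGroup α] [DecidableEq α] {m n : ℕ}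
    (S : Finset α) (hw : Fin m → ℕ) (kw : Fin n → ℕ)
    (H : Matrix (Fin m) (Fin n) α) : Prop :=
  (∀ i, rowWeight H i = hw i) ∧
  (∀ j, colWeight H j = kw j) ∧
  (∀ i j, H i j ≠ 0 → (H i j ∈ S ∨ -(H i j) ∈ S)) ∧
  (∀ s ∈ S, (Finset.univ.filter
      (fun p : Fin m × Fin n => H p.1 p.2 = s ∨ H p.1 p.2 = -s)).card = 1)

/-- `H` is nonzero sum and naturally simple: every reduced row and every reduced
column is a simple sequence with nonzero total sum. -/
def NonzeroSumSimpleNat {α : Type*} [AddCommGroup α] [DecidableEq α] {m n : ℕ}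
    (H : Matrix (Fin m) (Fin n) α) : Prop :=
  (∀ i, IsSimpleList (redRow H i) ∧ (redRow H i).sum ≠ 0) ∧
  (∀ j, IsSimpleList (redCol H j) ∧ (redCol H j).sum ≠ 0)

/-- `H` is zero sum (every reduced row and column sums to zero) and simple (the
nonzero entries of every row and of every column admit an ordering which is a
simple sequence). -/
def ZeroSumSimple {α : Type*} [AddCommGroup α] [DecidableEq α] {m n : ℕ}
    (H : Matrix (Fin m) (Fin n) α) : Prop :=
  (∀ i, (redRow H i).sum = 0) ∧
  (∀ j, (redCol H j).sum = 0) ∧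
  (∀ i, ∃ l : List α, l.Perm (redRow H i) ∧ IsSimpleList l) ∧
  (∀ j, ∃ l : List α, l.Perm (redCol H j) ∧ IsSimpleList l)

section Aux

/-! ### Sign-algebra helpers -/

lemma sign_trans_nn {x y z : ℤ} (h1 : x*y < 0) (h2 : y*z < 0) : 0 < x*z := by
  nlinarith [mul_pos_of_neg_of_neg h1 h2, sq_nonneg y, sq_nonneg (x*z)]

lemma sign_trans_pn {x y z : ℤ} (h1 : 0 < x*y) (h2 : y*z < 0) : x*z < 0 := by
  nlinarith [mul_pos h1 (neg_pos.mpr h2), sq_nonneg y, sq_nonneg (x*z)]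

lemma sign_trans_pp {x y z : ℤ} (h1 : 0 < x*y) (h2 : 0 < y*z) : 0 < x*z := by
  nlinarith [mul_pos h1 h2, sq_nonneg y, sq_nonneg (x*z)]

lemma add_sign_aux {x y : ℤ} (h1 : y*x < 0) (h2 : |x| < |y|) : 0 < (x+y)*y := by
  nlinarith [neg_abs_le (x*y), abs_mul x y, sq_abs y, abs_nonneg x, abs_nonneg y]

lemma step_sign_aux {x y z : ℤ} (hxy : 0 < x*y) (hyz : z*y < 0) (hxyabs : |x| ≤ |y|)
    (hyzabs : |y| < |z|) : 0 < (x+z)*z ∧ |x+z| ≤ |z| := by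
  constructor
  · nlinarith [neg_abs_le (x*z), abs_mul x z, sq_abs z, abs_nonneg x, abs_nonneg z]
  · rcases abs_cases z with ⟨hz1, hz2⟩ | ⟨hz1, hz2⟩ <;>
      rcases abs_cases x with ⟨hx1, hx2⟩ | ⟨hx1, hx2⟩ <;>
      rcases abs_cases y with ⟨hy1, hy2⟩ | ⟨hy1, hy2⟩ <;>
      rw [abs_le] <;> constructor <;> nlinarith

/-! ### Integer partial-sum facts for alternating lists -/

lemma altinc_int (l : List ℤ)
    (h1 : ∀ z ∈ l, z ≠ 0)
    (h2 : ∀ k, k + 1 < l.length →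
      l.getD (k+1) 0 * l.getD k 0 < 0 ∧ |l.getD k 0| < |l.getD (k+1) 0|) :
    (∀ p, p < l.length →
      0 < (l.take (p+1)).sum * l.getD p 0 ∧ |(l.take (p+1)).sum| ≤ |l.getD p 0|) ∧
    (∀ p q, p < q → q ≤ l.length → (l.take p).sum ≠ (l.take q).sum) := by
  set a : ℕ → ℤ := fun k => l.getD k 0 with ha
  set s : ℕ → ℤ := fun p => (l.take p).sum with hs
  have hane : ∀ k, k < l.length → a k ≠ 0 := by
    intro k hk
    have : l.getD k 0 = l.get ⟨k, hk⟩ := List.getD_eq_getElem l 0 hk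
    rw [ha]; simp only [this]
    exact h1 _ (l.get_mem _)
  have hstep : ∀ p, p < l.length → s (p+1) = s p + a p := by
    intro p hp
    have : l.getD p 0 = l.get ⟨p, hp⟩ := List.getD_eq_getElem l 0 hp
    simp only [hs, ha, this]
    exact List.sum_take_succ l p hp
  have C2 : ∀ p, p < l.length → 0 < s (p+1) * a p ∧ |s (p+1)| ≤ |a p| := by
    intro p
    induction p with
    | zero =>
      intro hp
      have h0 : s 1 = a 0 := by
        have := hstep 0 hp
        simpa [hs] using this
      rw [h0]
      exact ⟨mul_self_pos.mpr (hane 0 hp), le_refl _⟩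
    | succ p ih =>
      intro hp
      have hp' : p < l.length := by omega
      obtain ⟨ih1, ih2⟩ := ih hp'
      obtain ⟨halt, hmag⟩ := h2 p (by omega)
      have := hstep (p+1) hp
      rw [this]
      exact step_sign_aux ih1 halt ih2 hmag
  have C3e : ∀ p j, p + 2*j < l.length → 0 < a (p + 2*j) * a p := by
    intro p j
    induction j with
    | zero => intro h; simpa using mul_self_pos.mpr (hane p (by omega))
    | succ j ih =>
      intro h
      have h1' : p + 2*j < l.length := by omega
      have ih' := ih h1'
      have e1 := (h2 (p+2*j) (by omega)).1
      have e2 := (h2 (p+2*j+1) (by omega)).1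
      have : 0 < a (p+2*j+2) * a (p+2*j) := sign_trans_nn e2 e1
      have := sign_trans_pp this ih'
      have heq : p + 2*(j+1) = p + 2*j + 2 := by ring
      rw [heq]
      exact this
  have C3o : ∀ p j, p + 2*j + 1 < l.length → a (p + 2*j + 1) * a p < 0 := by
    intro p j h
    have e1 := (h2 (p+2*j) (by omega)).1
    have he := C3e p j (by omega)
    have h1' : 0 < a p * a (p+2*j) := by rw [mul_comm]; exact he
    have h2' : a (p+2*j) * a (p+2*j+1) < 0 := by rw [mul_comm]; exact e1
    have := sign_trans_pn h1' h2'
    rw [mul_comm]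
    exact this
  have C4 : ∀ p j, p + 2*(j+1) ≤ l.length → 0 < (s (p + 2*(j+1)) - s p) * a (p+1) := by
    intro p j
    induction j with
    | zero =>
      intro h
      have e1 : s (p+2) = s p + a p + a (p+1) := by
        rw [show p+2 = (p+1)+1 by ring, hstep (p+1) (by omega), hstep p (by omega)]
      have heq : p + 2*(0+1) = p + 2 := by ring
      rw [heq, e1]
      have := add_sign_aux (h2 p (by omega)).1 (h2 p (by omega)).2
      have e2 : s p + a p + a (p+1) - s p = a p + a (p+1) := by ring
      rw [e2]
      exact this
    | succ j ih =>
      intro h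
      have ih' := ih (by omega)
      set q := p + 2*(j+1) with hq
      have e1 : s (q+2) = s q + a q + a (q+1) := by
        rw [show q+2 = (q+1)+1 by ring, hstep (q+1) (by omega), hstep q (by omega)]
      have t1 : 0 < (a q + a (q+1)) * a (q+1) :=
        add_sign_aux (h2 q (by omega)).1 (h2 q (by omega)).2
      have t2 : 0 < a (q+1) * a (p+1) := by
        have := C3e (p+1) (j+1) (by omega)
        simpa [hq, show p+1+2*(j+1) = q+1 by omega] using this
      have t3 : 0 < (a q + a (q+1)) * a (p+1) := sign_trans_pp t1 t2
      have heq : p + 2*(j+1+1) = q + 2 := by omega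
      rw [heq, e1]
      have e2 : s q + a q + a (q+1) - s p = (a q + a (q+1)) + (s q - s p) := by ring
      rw [e2, add_mul]
      exact add_pos t3 ih'
  constructor
  · exact C2
  · intro p q hpq hql
    rcases Nat.eq_zero_or_pos p with hp0 | hp0
    · subst hp0
      have hs0 : s 0 = 0 := by simp [hs]
      obtain ⟨hq1, -⟩ := C2 (q-1) (by omega)
      rw [show q-1+1 = q by omega] at hq1
      intro hcon
      have hcon' : s 0 = s q := hcon
      rw [hs0] at hcon'
      rw [← hcon'] at hq1
      simp at hq1
    · rcases Nat.even_or_odd (q - p) with ⟨j, hj⟩ | ⟨j, hj⟩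
      · have hj1 : 1 ≤ j := by omega
        have := C4 p (j-1) (by omega)
        rw [show p + 2*(j-1+1) = q by omega] at this
        intro hcon
        have hcon' : s p = s q := hcon
        rw [hcon'] at this
        simp at this
      · obtain ⟨sp1, -⟩ := C2 (p-1) (by omega)
        obtain ⟨sq1, -⟩ := C2 (q-1) (by omega)
        rw [show p-1+1 = p by omega] at sp1
        rw [show q-1+1 = q by omega] at sq1
        have hodd : a (q-1) * a (p-1) < 0 := by
          have := C3o (p-1) j (by omega)
          rw [show p-1+2*j+1 = q-1 by omega] at this
          exact this
        intro hcon
        have hcon' : s p = s q := hcon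
        have t1 : 0 < s p * a (q-1) := by rw [hcon']; exact sq1
        have t2 : s p * a (p-1) < 0 := sign_trans_pn t1 hodd
        nlinarith

/-! ### Casting small integers to `ZMod v` -/

lemma cast_ne_of_small (v : ℕ) {x y : ℤ} (hx : 2*|x| < v) (hy : 2*|y| < v) (h : x ≠ y) :
    (x : ZMod v) ≠ (y : ZMod v) := by
  intro hc
  have h0 : ((x - y : ℤ) : ZMod v) = 0 := by push_cast; rw [hc]; ring
  have hd : (v:ℤ) ∣ (x - y) := (ZMod.intCast_zmod_eq_zero_iff_dvd _ v).mp h0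
  have hd' : (v:ℤ) ∣ |x - y| := (dvd_abs _ _).mpr hd
  have h1 := Int.le_of_dvd (abs_pos.mpr (sub_ne_zero.mpr h)) hd'
  have h2 : |x - y| ≤ |x| + |y| := abs_sub x y
  linarith

lemma take_map_sum (v : ℕ) (l : List ℤ) (p : ℕ) :
    ((l.map (Int.cast : ℤ → ZMod v)).take p).sum = (((l.take p).sum : ℤ) : ZMod v) := by
  rw [← List.map_take, ← Int.cast_list_sum]

lemma altinc_zmod (v : ℕ) (l : List ℤ) (hne : l ≠ [])
    (h1 : ∀ z ∈ l, z ≠ 0 ∧ 2*|z| < (v:ℤ))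
    (h2 : ∀ k, k + 1 < l.length →
      l.getD (k+1) 0 * l.getD k 0 < 0 ∧ |l.getD k 0| < |l.getD (k+1) 0|) :
    IsSimpleList (l.map (Int.cast : ℤ → ZMod v)) ∧
      (l.map (Int.cast : ℤ → ZMod v)).sum ≠ 0 := by
  obtain ⟨Csign, Cdist⟩ := altinc_int l (fun z hz => (h1 z hz).1) h2
  have key : ∀ p, p < l.length →
      (l.take (p+1)).sum ≠ 0 ∧ 2*|(l.take (p+1)).sum| < (v:ℤ) := by
    intro p hp
    obtain ⟨c1, c2⟩ := Csign p hp
    have hmem : l.getD p 0 ∈ l := by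
      rw [List.getD_eq_getElem l 0 hp]; exact List.getElem_mem hp
    obtain ⟨-, hb⟩ := h1 _ hmem
    constructor
    · intro hc; rw [hc] at c1; simp at c1
    · linarith
  constructor
  · intro p q hpq hqlen hne'
    rw [List.length_map] at hqlen hne'
    rw [take_map_sum, take_map_sum]
    rcases Nat.eq_zero_or_pos p with hp0 | hp0
    · subst hp0
      have hqlt : q < l.length := by
        rcases Nat.lt_or_ge q l.length with h | h
        · exact h
        · exact absurd ⟨rfl, by omega⟩ hne'
      obtain ⟨hq1, hq2⟩ := key (q-1) (by omega)
      rw [show q-1+1 = q by omega] at hq1 hq2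
      simp only [List.take_zero, List.sum_nil]
      have := cast_ne_of_small v (x := 0) (y := (l.take q).sum)
        (by simp only [abs_zero, mul_zero]; linarith [abs_nonneg ((l.take q).sum)]) hq2
        (Ne.symm hq1)
      simpa using this
    · obtain ⟨-, hp2⟩ := key (p-1) (by omega)
      obtain ⟨-, hq2⟩ := key (q-1) (by omega)
      rw [show p-1+1 = p by omega] at hp2
      rw [show q-1+1 = q by omega] at hq2
      exact cast_ne_of_small v hp2 hq2 (Cdist p q hpq hqlen)
  · have hlen : 0 < l.length := List.length_pos_iff.mpr hne
    obtain ⟨h1', h2'⟩ := key (l.length - 1) (by omega)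
    rw [show l.length-1+1 = l.length by omega, List.take_length] at h1' h2'
    rw [← Int.cast_list_sum]
    have := cast_ne_of_small v (x := l.sum) (y := 0) h2'
      (by simp only [abs_zero, mul_zero]; linarith [abs_nonneg l.sum]) h1'
    simpa using this

/-! ### From a `Fin`-indexed function to the reduced list -/

lemma struct_lemma {N : ℕ} (v : ℕ) (g : Fin N → ℤ) (f : Fin N → ZMod v)
    (hf : ∀ j, f j = ((g j : ℤ) : ZMod v))
    (hb : ∀ a, g a ≠ 0 → 2 * |g a| < (v:ℤ))
    (hsgn : ∀ a b : Fin N, a < b → g a ≠ 0 → g b ≠ 0 →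
      (∀ t, a < t → t < b → g t = 0) → g a * g b < 0)
    (hmono : ∀ a b : Fin N, a < b → g a ≠ 0 → g b ≠ 0 → |g a| < |g b|)
    (hne : ∃ a, g a ≠ 0) :
    IsSimpleList (((List.finRange N).map f).filter (fun x => decide (x ≠ 0))) ∧
      ((((List.finRange N).map f).filter (fun x => decide (x ≠ 0))).sum ≠ 0) := by
  classical
  have hfg : (List.finRange N).map f = (List.finRange N).map (fun j => ((g j : ℤ) : ZMod v)) :=
    List.map_congr_left (fun a _ => hf a)
  rw [hfg]
  set J : List (Fin N) := (List.finRange N).filter (fun j => decide (g j ≠ 0)) with hJ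
  have hmemJ : ∀ j : Fin N, j ∈ J ↔ g j ≠ 0 := by
    intro j
    rw [hJ, List.mem_filter]
    simp [List.mem_finRange]
  set li : List ℤ := J.map g with hli
  have hmemli : ∀ z ∈ li, z ≠ 0 ∧ 2*|z| < (v:ℤ) := by
    intro z hz
    rw [hli, List.mem_map] at hz
    obtain ⟨j, hj, rfl⟩ := hz
    have := (hmemJ j).mp hj
    exact ⟨this, hb j this⟩
  have hrw : ((List.finRange N).map (fun j => ((g j : ℤ) : ZMod v))).filter
      (fun x => decide (x ≠ 0)) = li.map (Int.cast : ℤ → ZMod v) := by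
    rw [List.filter_map, hli, List.map_map]
    congr 1
    rw [hJ]
    apply List.filter_congr
    intro j _
    simp only [Function.comp_apply]
    by_cases h : g j = 0
    · simp [h]
    · have : ((g j : ℤ) : ZMod v) ≠ 0 := by
        have := cast_ne_of_small v (x := g j) (y := 0) (hb j h)
          (by simp only [abs_zero, mul_zero]
              linarith [abs_nonneg (g j), hb j h]) h
        simpa using this
      simp [h, this]
  have hJp : J.Pairwise (· < ·) := List.Pairwise.filter _ (List.pairwise_lt_finRange N)
  have hJmono := List.pairwise_iff_get.mp hJp
  have hgetJ : ∀ (k : ℕ) (hk : k < J.length), g (J.get ⟨k, hk⟩) ≠ 0 := by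
    intro k hk
    exact (hmemJ _).mp (List.get_mem J ⟨k, hk⟩)
  have hlen : li.length = J.length := List.length_map _
  have hgetli : ∀ (k : ℕ) (hk : k < li.length), li.getD k 0 = g (J.get ⟨k, hlen ▸ hk⟩) := by
    intro k hk
    rw [List.getD_eq_getElem li 0 hk]
    simp [hli]
  have hmain := altinc_zmod v li
    (by
      obtain ⟨a, ha⟩ := hne
      have : g a ∈ li := by
        rw [hli, List.mem_map]
        exact ⟨a, (hmemJ a).mpr ha, rfl⟩
      exact List.ne_nil_of_mem this)
    hmemli
    (by
      intro k hk
      have hk1 : k < J.length := by omega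
      have hk2 : k + 1 < J.length := by omega
      set a := J.get ⟨k, hk1⟩ with haa
      set b := J.get ⟨k+1, hk2⟩ with hbb
      have hab : a < b := hJmono ⟨k, hk1⟩ ⟨k+1, hk2⟩ (by simp)
      have hga : g a ≠ 0 := hgetJ k hk1
      have hgb : g b ≠ 0 := hgetJ (k+1) hk2
      have hgap : ∀ t, a < t → t < b → g t = 0 := by
        intro t hat htb
        by_contra hgt
        have htJ : t ∈ J := (hmemJ t).mpr hgt
        obtain ⟨⟨k', hk'⟩, hk'eq⟩ := List.mem_iff_get.mp htJ
        rcases lt_trichotomy k' k with h | h | h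
        · have := hJmono ⟨k', hk'⟩ ⟨k, hk1⟩ (by simpa)
          rw [hk'eq] at this
          exact absurd (lt_trans this hat) (lt_irrefl t)
        · subst h
          rw [hk'eq.symm] at hat
          exact absurd hat (lt_irrefl _)
        · rcases lt_trichotomy k' (k+1) with h2 | h2 | h2
          · omega
          · rw [← hk'eq, show (⟨k', hk'⟩ : Fin J.length) = ⟨k+1, hk2⟩ by simp [h2]] at htb
            exact absurd htb (lt_irrefl _)
          · have := hJmono ⟨k+1, hk2⟩ ⟨k', hk'⟩ (by simpa)
            rw [hk'eq] at this
            exact absurd (lt_trans htb this) (lt_irrefl t)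
      have hs := hsgn a b hab hga hgb hgap
      have hm := hmono a b hab hga hgb
      rw [hgetli k (by omega), hgetli (k+1) hk]
      refine ⟨by rw [mul_comm]; exact hs, hm⟩)
  rw [hrw]
  exact hmain

/-! ### Counting nonzero entries -/

lemma card_nonzero_row {α : Type*} [Zero α] [DecidableEq α] {m n : ℕ}
    (A : Matrix (Fin m) (Fin n) α) :
    (Finset.univ.filter (fun p : Fin m × Fin n => A p.1 p.2 ≠ 0)).card
      = ∑ i, rowWeight A i := by
  simp [rowWeight, Finset.card_filter, Fintype.sum_prod_type]

lemma card_nonzero_col {α : Type*} [Zero α] [DecidableEq α] {m n : ℕ}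
    (A : Matrix (Fin m) (Fin n) α) :
    (Finset.univ.filter (fun p : Fin m × Fin n => A p.1 p.2 ≠ 0)).card
      = ∑ j, colWeight A j := by
  simp [colWeight, Finset.card_filter, Fintype.sum_prod_type]
  exact Finset.sum_comm

/-! ### The rank of a nonzero cell in row-major order -/

def theRank {m n : ℕ} (A : Matrix (Fin m) (Fin n) ℤ) (i : Fin m) (j : Fin n) : ℕ :=
  (∑ i' ∈ Finset.univ.filter (· < i), rowWeight A i') +
  (Finset.univ.filter (fun j' => j' < j ∧ A i j' ≠ 0)).card

lemma rank_lt_row {m n : ℕ} (A : Matrix (Fin m) (Fin n) ℤ) {i : Fin m} {j j' : Fin n}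
    (hj : j < j') (h : A i j ≠ 0) : theRank A i j < theRank A i j' := by
  unfold theRank
  apply Nat.add_lt_add_left
  apply Finset.card_lt_card
  constructor
  · intro j'' hj''
    simp only [Finset.mem_filter, Finset.mem_univ, true_and] at *
    exact ⟨lt_trans hj''.1 hj, hj''.2⟩
  · intro hsub
    have := hsub (Finset.mem_filter.mpr ⟨Finset.mem_univ j, hj, h⟩)
    simp only [Finset.mem_filter] at this
    exact absurd this.2.1 (lt_irrefl j)

lemma rank_lt_le {m n : ℕ} (A : Matrix (Fin m) (Fin n) ℤ) {i : Fin m} {j : Fin n}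
    (h : A i j ≠ 0) :
    theRank A i j < ∑ i' ∈ Finset.univ.filter (· ≤ i), rowWeight A i' := by
  have hsplit : Finset.univ.filter (· ≤ i) = insert i (Finset.univ.filter (· < i)) := by
    ext a
    simp only [Finset.mem_filter, Finset.mem_univ, true_and, Finset.mem_insert]
    constructor
    · intro ha; rcases eq_or_lt_of_le ha with h' | h'
      · exact Or.inl h'
      · exact Or.inr h'
    · rintro (rfl | ha)
      · exact le_refl _
      · exact le_of_lt ha
  rw [hsplit, Finset.sum_insert (by simp)]
  unfold theRank
  rw [add_comm (rowWeight A i)]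
  apply Nat.add_lt_add_left
  unfold rowWeight
  apply Finset.card_lt_card
  constructor
  · intro j'' hj''
    simp only [Finset.mem_filter, Finset.mem_univ, true_and] at *
    exact hj''.2
  · intro hsub
    have := hsub (Finset.mem_filter.mpr ⟨Finset.mem_univ j, h⟩)
    simp only [Finset.mem_filter] at this
    exact absurd this.2.1 (lt_irrefl j)

lemma rank_lt_col {m n : ℕ} (A : Matrix (Fin m) (Fin n) ℤ) {i i' : Fin m} {j j' : Fin n}
    (hii : i < i') (h : A i j ≠ 0) : theRank A i j < theRank A i' j' := by
  have h1 := rank_lt_le A h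
  have h2 : ∑ i'' ∈ Finset.univ.filter (· ≤ i), rowWeight A i''
      ≤ ∑ i'' ∈ Finset.univ.filter (· < i'), rowWeight A i'' := by
    apply Finset.sum_le_sum_of_subset
    intro a ha
    simp only [Finset.mem_filter, Finset.mem_univ, true_and] at *
    exact lt_of_le_of_lt ha hii
  calc theRank A i j < _ := h1
    _ ≤ _ := h2
    _ ≤ theRank A i' j' := Nat.le_add_right _ _

lemma rank_lt_total {m n : ℕ} (A : Matrix (Fin m) (Fin n) ℤ) {i : Fin m} {j : Fin n}
    (h : A i j ≠ 0) : theRank A i j < ∑ i', rowWeight A i' := by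
  have h1 := rank_lt_le A h
  have h2 : ∑ i'' ∈ Finset.univ.filter (· ≤ i), rowWeight A i'' ≤ ∑ i', rowWeight A i' :=
    Finset.sum_le_sum_of_subset (Finset.filter_subset _ _)
  omega

lemma rank_inj {m n : ℕ} (A : Matrix (Fin m) (Fin n) ℤ) {p q : Fin m × Fin n}
    (hp : A p.1 p.2 ≠ 0) (hq : A q.1 q.2 ≠ 0)
    (h : theRank A p.1 p.2 = theRank A q.1 q.2) : p = q := by
  obtain ⟨i, j⟩ := p
  obtain ⟨i', j'⟩ := q
  simp only at hp hq h ⊢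
  rcases lt_trichotomy i i' with hi | hi | hi
  · exact absurd h (Nat.ne_of_lt (rank_lt_col A hi hp))
  · subst hi
    rcases lt_trichotomy j j' with hj | hj | hj
    · exact absurd h (Nat.ne_of_lt (rank_lt_row A hj hp))
    · simp [hj]
    · exact absurd h.symm (Nat.ne_of_lt (rank_lt_row A hj hq))
  · exact absurd h.symm (Nat.ne_of_lt (rank_lt_col A hi hq))

/-! ### Representatives of elements of `ZMod v` -/

section Rep
variable {v : ℕ} [NeZero v]

def zrep (s : ZMod v) : ℕ := min s.val (v - s.val)

lemma zrep_cast (s : ZMod v) : ((zrep s : ℕ) : ZMod v) = s ∨ ((zrep s : ℕ) : ZMod v) = -s := by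
  unfold zrep
  rcases min_cases s.val (v - s.val) with ⟨h1, -⟩ | ⟨h1, -⟩
  · left; rw [h1]; exact ZMod.natCast_rightInverse s
  · right; rw [h1]
    have hval : s.val ≤ v := le_of_lt (ZMod.val_lt s)
    push_cast [Nat.cast_sub hval]
    rw [ZMod.natCast_self, ZMod.natCast_rightInverse s]
    ring

lemma zrep_pos {s : ZMod v} (hs : s ≠ 0) : 0 < zrep s := by
  unfold zrep
  have h1 : 0 < s.val := ZMod.val_pos.mpr hs
  have h2 : s.val < v := ZMod.val_lt s
  omega

lemma zrep_small {s : ZMod v} (hs : s ≠ -s) : 2 * zrep s < v := by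
  unfold zrep
  have h2 : s.val < v := ZMod.val_lt s
  rcases Nat.lt_trichotomy (2 * s.val) v with h | h | h
  · omega
  · exfalso
    apply hs
    have hthis : ((s.val : ℕ) : ZMod v) = s := ZMod.natCast_rightInverse s
    have h3 : ((v - s.val : ℕ) : ZMod v) = -s := by
      push_cast [Nat.cast_sub (le_of_lt h2)]
      rw [ZMod.natCast_self, hthis]; ring
    have h4 : ((s.val : ℕ) : ZMod v) = ((v - s.val : ℕ) : ZMod v) := by
      congr 1
      omega
    rw [hthis, h3] at h4
    exact h4
  · omega

lemma small_cast_inj {a b : ℕ} (ha1 : 0 < a) (ha2 : 2 * a < v) (hb1 : 0 < b) (hb2 : 2 * b < v)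
    (h : ((a : ℕ) : ZMod v) = b ∨ ((a : ℕ) : ZMod v) = -b) : a = b := by
  rcases h with h | h
  · have := congrArg ZMod.val h
    rwa [ZMod.val_cast_of_lt (by omega), ZMod.val_cast_of_lt (by omega)] at this
  · exfalso
    have h0 : ((a + b : ℕ) : ZMod v) = 0 := by push_cast; rw [h]; ring
    have hdvd := (ZMod.natCast_eq_zero_iff _ v).mp h0
    have := Nat.le_of_dvd (by omega) hdvd
    omega

lemma zrep_inj {S : Finset (ZMod v)} (hSred : ∀ s ∈ S, ∀ t ∈ S, s ≠ -t) :
    Set.InjOn zrep (S : Set (ZMod v)) := by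
  intro a ha b hb h
  have hvala : ((a.val : ℕ) : ZMod v) = a := ZMod.natCast_rightInverse a
  have hvalb : ((b.val : ℕ) : ZMod v) = b := ZMod.natCast_rightInverse b
  have hs2a : ((v - a.val : ℕ) : ZMod v) = -a := by
    push_cast [Nat.cast_sub (le_of_lt (ZMod.val_lt a))]
    rw [ZMod.natCast_self, hvala]; ring
  have hs2b : ((v - b.val : ℕ) : ZMod v) = -b := by
    push_cast [Nat.cast_sub (le_of_lt (ZMod.val_lt b))]
    rw [ZMod.natCast_self, hvalb]; ring
  have hcases : a = b ∨ a = -b := by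
    unfold zrep at h
    rcases min_cases a.val (v - a.val) with ⟨h1, -⟩ | ⟨h1, -⟩ <;>
      rcases min_cases b.val (v - b.val) with ⟨h2, -⟩ | ⟨h2, -⟩ <;>
      rw [h1, h2] at h
    · left; rw [← hvala, ← hvalb, h]
    · right; rw [← hvala, ← hs2b, h]
    · right
      have h5 : -a = b := by rw [← hs2a, ← hvalb, h]
      exact neg_eq_iff_eq_neg.mp h5
    · left
      have h5 : -a = -b := by rw [← hs2a, ← hs2b, h]
      exact neg_injective h5
  rcases hcases with h' | h'
  · exact h'
  · exact absurd h' (hSred a (by exact_mod_cast ha) b (by exact_mod_cast hb))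

end Rep

end Aux

/-- Assume there is a NASM`(m, n; 𝐡, 𝐤)`. Let `v ≥ 2` and let
`S ⊆ Z_v \ {0}` be reduced (`s ≠ -t` for all `s, t ∈ S`). Then there exists a
nonzero sum and naturally simple GHA`_S(m, n; 𝐡, 𝐤)` over `Z_v` if and only if
`|S| = h_1 + ⋯ + h_m = k_1 + ⋯ + k_n`. -/


theorem statement8 (m n : ℕ) (hw : Fin m → ℕ) (kw : Fin n → ℕ)
    (hwpos : ∀ i, 0 < hw i) (kwpos : ∀ j, 0 < kw j)
    (hNASM : ∃ A : Matrix (Fin m) (Fin n) ℤ, IsNASM A ∧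
        (∀ i, rowWeight A i = hw i) ∧ (∀ j, colWeight A j = kw j))
    (v : ℕ) (hv : 2 ≤ v) (S : Finset (ZMod v))
    (hS0 : (0 : ZMod v) ∉ S) (hSred : ∀ s ∈ S, ∀ t ∈ S, s ≠ -t) :
    (∃ H : Matrix (Fin m) (Fin n) (ZMod v),
        IsGHA S hw kw H ∧ NonzeroSumSimpleNat H) ↔
      (S.card = ∑ i, hw i ∧ S.card = ∑ j, kw j) := by
  classical
  haveI : NeZero v := ⟨by omega⟩
  constructor
  · -- forward: counting
    rintro ⟨H, ⟨hrH, hcH, hmem, huniq⟩, -⟩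
    have hT : (Finset.univ.filter (fun p : Fin m × Fin n => H p.1 p.2 ≠ 0))
        = S.biUnion (fun s => Finset.univ.filter
            (fun p : Fin m × Fin n => H p.1 p.2 = s ∨ H p.1 p.2 = -s)) := by
      ext p
      simp only [Finset.mem_filter, Finset.mem_univ, true_and, Finset.mem_biUnion]
      constructor
      · intro hp
        rcases hmem p.1 p.2 hp with h | h
        · exact ⟨H p.1 p.2, h, Or.inl rfl⟩
        · exact ⟨-(H p.1 p.2), h, Or.inr (neg_neg _).symm⟩
      · rintro ⟨s, hs, h | h⟩
        · rw [h]; intro h0; rw [h0] at hs; exact hS0 hs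
        · rw [h]; intro h0
          have h1 : s = 0 := by rwa [neg_eq_zero] at h0
          rw [h1] at hs; exact hS0 hs
    have hdisj : ∀ s ∈ S, ∀ t ∈ S, s ≠ t → Disjoint
        (Finset.univ.filter (fun p : Fin m × Fin n => H p.1 p.2 = s ∨ H p.1 p.2 = -s))
        (Finset.univ.filter (fun p : Fin m × Fin n => H p.1 p.2 = t ∨ H p.1 p.2 = -t)) := by
      intro s hs t ht hst
      rw [Finset.disjoint_left]
      intro p hp1 hp2
      simp only [Finset.mem_filter, Finset.mem_univ, true_and] at hp1 hp2
      rcases hp1 with h1 | h1 <;> rcases hp2 with h2 | h2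
      · exact hst (h1.symm.trans h2)
      · exact hSred s hs t ht (h1.symm.trans h2)
      · exact hSred t ht s hs (h2.symm.trans h1)
      · exact hst (neg_injective (h1.symm.trans h2))
    have hcard : (Finset.univ.filter (fun p : Fin m × Fin n => H p.1 p.2 ≠ 0)).card
        = S.card := by
      rw [hT, Finset.card_biUnion hdisj,
        Finset.sum_congr rfl (fun s hs => huniq s hs)]
      simp
    constructor
    · have h1 : ∑ i, hw i = ∑ i, rowWeight H i :=
        Finset.sum_congr rfl (fun i _ => (hrH i).symm)
      rw [h1, ← card_nonzero_row, hcard]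
    · have h1 : ∑ j, kw j = ∑ j, colWeight H j :=
        Finset.sum_congr rfl (fun j _ => (hcH j).symm)
      rw [h1, ← card_nonzero_col, hcard]
  · -- backward: construction
    rintro ⟨hc1, hc2⟩
    obtain ⟨A, ⟨hA01, hArow, hAcol⟩, hArw, hAcw⟩ := hNASM
    have hSne : ∀ s ∈ S, s ≠ 0 := fun s hs h0 => hS0 (h0 ▸ hs)
    have hSnn : ∀ s ∈ S, s ≠ -s := fun s hs => hSred s hs s hs
    set reps : Finset ℕ := S.image zrep with hreps
    have hrepscard : reps.card = S.card := Finset.card_image_of_injOn (zrep_inj hSred)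
    set R : List ℕ := reps.sort (· ≤ ·) with hR
    have hRlen : R.length = S.card := by rw [hR, Finset.length_sort, hrepscard]
    have hRpw : R.Pairwise (· < ·) := (Finset.sortedLT_sort reps).pairwise
    have hRmem : ∀ x ∈ R, x ∈ reps := fun x hx => (Finset.mem_sort _).mp hx
    have hreps_facts : ∀ x ∈ reps, 0 < x ∧ 2 * x < v := by
      intro x hx
      obtain ⟨s, hs, rfl⟩ := Finset.mem_image.mp hx
      exact ⟨zrep_pos (hSne s hs), zrep_small (hSnn s hs)⟩
    have hAtot : ∑ i, rowWeight A i = S.card := by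
      rw [Finset.sum_congr rfl (fun i _ => hArw i), ← hc1]
    have hrank_lt : ∀ i j, A i j ≠ 0 → theRank A i j < R.length := by
      intro i j h; rw [hRlen, ← hAtot]; exact rank_lt_total A h
    set xv : Fin m → Fin n → ℕ := fun i j => R.getD (theRank A i j) 0 with hxv
    have hxv_mem : ∀ i j, A i j ≠ 0 → xv i j ∈ reps := by
      intro i j h
      have hlt := hrank_lt i j h
      simp only [hxv]
      rw [List.getD_eq_getElem R 0 hlt]
      exact hRmem _ (List.getElem_mem hlt)
    have hxv_pos : ∀ i j, A i j ≠ 0 → 0 < xv i j :=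
      fun i j h => (hreps_facts _ (hxv_mem i j h)).1
    have hxv_small : ∀ i j, A i j ≠ 0 → 2 * xv i j < v :=
      fun i j h => (hreps_facts _ (hxv_mem i j h)).2
    have hRget_mono := List.pairwise_iff_get.mp hRpw
    have hxv_mono : ∀ {i j i' j'}, A i j ≠ 0 → A i' j' ≠ 0 →
        theRank A i j < theRank A i' j' → xv i j < xv i' j' := by
      intro i j i' j' h h' hlt
      have h1 := hrank_lt i j h
      have h2 := hrank_lt i' j' h'
      simp only [hxv]
      rw [List.getD_eq_getElem R 0 h1, List.getD_eq_getElem R 0 h2]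
      exact hRget_mono ⟨_, h1⟩ ⟨_, h2⟩ (Fin.mk_lt_mk.mpr hlt)
    set B : Matrix (Fin m) (Fin n) ℤ := fun i j => A i j * (xv i j : ℤ) with hB
    have hBA : ∀ i j, (B i j ≠ 0) ↔ (A i j ≠ 0) := by
      intro i j
      simp only [hB]
      constructor
      · intro h hA0; rw [hA0] at h; simp at h
      · intro h
        have hpos := hxv_pos i j h
        intro h0
        rcases mul_eq_zero.mp h0 with h' | h'
        · exact h h'
        · rw [Nat.cast_eq_zero] at h'; omega
    have hBabs : ∀ i j, A i j ≠ 0 → |B i j| = (xv i j : ℤ) := by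
      intro i j h
      simp only [hB, abs_mul]
      rcases hA01 i j with h0 | h0 | h0
      · exact absurd h0 h
      · rw [h0]; simp
      · rw [h0]; simp
    set H : Matrix (Fin m) (Fin n) (ZMod v) := fun i j => ((B i j : ℤ) : ZMod v) with hH
    have hBbound : ∀ i j, B i j ≠ 0 → 2 * |B i j| < (v:ℤ) := by
      intro i j h
      have hA := (hBA i j).mp h
      rw [hBabs i j hA]
      exact_mod_cast hxv_small i j hA
    have hHA : ∀ i j, (H i j ≠ 0) ↔ (A i j ≠ 0) := by
      intro i j
      constructor
      · intro h
        rcases eq_or_ne (A i j) 0 with hA0 | hA0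
        · exfalso
          apply h
          simp only [hH, hB, hA0]
          simp
        · exact hA0
      · intro hA
        have hBne := (hBA i j).mpr hA
        simp only [hH]
        have := cast_ne_of_small v (x := B i j) (y := 0) (hBbound i j hBne)
          (by simp only [abs_zero, mul_zero]
              linarith [abs_nonneg (B i j), hBbound i j hBne]) hBne
        simpa using this
    have hrowW : ∀ i, rowWeight H i = hw i := by
      intro i
      rw [← hArw i]
      unfold rowWeight
      congr 1
      ext j
      simp only [Finset.mem_filter, Finset.mem_univ, true_and]
      exact ⟨fun h => (hHA i j).mp h, fun h => (hHA i j).mpr h⟩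
    have hcolW : ∀ j, colWeight H j = kw j := by
      intro j
      rw [← hAcw j]
      unfold colWeight
      congr 1
      ext i
      simp only [Finset.mem_filter, Finset.mem_univ, true_and]
      exact ⟨fun h => (hHA i j).mp h, fun h => (hHA i j).mpr h⟩
    have hHone : ∀ i j, A i j = 1 → H i j = ((xv i j : ℕ) : ZMod v) := by
      intro i j h0
      simp only [hH, hB, h0]
      push_cast
      ring
    have hHnegone : ∀ i j, A i j = -1 → H i j = -((xv i j : ℕ) : ZMod v) := by
      intro i j h0
      simp only [hH, hB, h0]
      push_cast
      ring
    have hmemcond : ∀ i j, H i j ≠ 0 → (H i j ∈ S ∨ -(H i j) ∈ S) := by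
      intro i j h
      have hA : A i j ≠ 0 := (hHA i j).mp h
      obtain ⟨s, hs, hrep⟩ := Finset.mem_image.mp (hxv_mem i j hA)
      have hcast := zrep_cast s
      rw [hrep] at hcast
      rcases hA01 i j with h0 | h0 | h0
      · exact absurd h0 hA
      · rcases hcast with hc | hc
        · left; rw [hHone i j h0, hc]; exact hs
        · right; rw [hHone i j h0, hc, neg_neg]; exact hs
      · rcases hcast with hc | hc
        · right; rw [hHnegone i j h0, neg_neg, hc]; exact hs
        · left; rw [hHnegone i j h0, hc, neg_neg]; exact hs
    have huniqcond : ∀ s ∈ S, (Finset.univ.filter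
        (fun p : Fin m × Fin n => H p.1 p.2 = s ∨ H p.1 p.2 = -s)).card = 1 := by
      intro s hs
      have hmemr : zrep s ∈ R := (Finset.mem_sort _).mpr (Finset.mem_image_of_mem _ hs)
      obtain ⟨⟨t, ht⟩, hget⟩ := List.mem_iff_get.mp hmemr
      set T := Finset.univ.filter (fun p : Fin m × Fin n => A p.1 p.2 ≠ 0) with hTdef
      have hTcard : T.card = R.length := by
        rw [hTdef, card_nonzero_row, hAtot, hRlen]
      have hsurj := Finset.surj_on_of_inj_on_of_card_le
        (s := T) (t := Finset.range R.length)
        (fun p _ => theRank A p.1 p.2)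
        (fun p hp => Finset.mem_range.mpr
          (hrank_lt p.1 p.2 (Finset.mem_filter.mp hp).2))
        (fun p q hp hq hpq =>
          rank_inj A (Finset.mem_filter.mp hp).2 (Finset.mem_filter.mp hq).2 hpq)
        (by rw [Finset.card_range, hTcard])
      obtain ⟨p, hpT, hpt⟩ := hsurj t (Finset.mem_range.mpr ht)
      have hpA : A p.1 p.2 ≠ 0 := (Finset.mem_filter.mp hpT).2
      have hxvp : xv p.1 p.2 = zrep s := by
        have h1 := hrank_lt p.1 p.2 hpA
        simp only [hxv]
        rw [List.getD_eq_getElem R 0 h1, ← hget]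
        simp only [List.get_eq_getElem]
        congr 1
        exact hpt.symm
      have hpmem : H p.1 p.2 = s ∨ H p.1 p.2 = -s := by
        have hcast := zrep_cast s
        rcases hA01 p.1 p.2 with h0 | h0 | h0
        · exact absurd h0 hpA
        · rw [hHone p.1 p.2 h0, hxvp]
          exact hcast
        · rw [hHnegone p.1 p.2 h0, hxvp]
          rcases hcast with hz | hz
          · right; rw [hz]
          · left; rw [hz, neg_neg]
      rw [Finset.card_eq_one]
      refine ⟨p, ?_⟩
      ext q
      simp only [Finset.mem_filter, Finset.mem_univ, true_and, Finset.mem_singleton]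
      constructor
      · intro hq
        have hHq : H q.1 q.2 ≠ 0 := by
          rcases hq with h | h <;> rw [h]
          · exact fun h0 => hS0 (h0 ▸ hs)
          · intro h0; rw [neg_eq_zero] at h0; exact hS0 (h0 ▸ hs)
        have hAq : A q.1 q.2 ≠ 0 := (hHA _ _).mp hHq
        have hxq : ((xv q.1 q.2 : ℕ) : ZMod v) = s
            ∨ ((xv q.1 q.2 : ℕ) : ZMod v) = -s := by
          rcases hA01 q.1 q.2 with h0 | h0 | h0
          · exact absurd h0 hAq
          · rw [hHone q.1 q.2 h0] at hq
            exact hq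
          · rw [hHnegone q.1 q.2 h0] at hq
            rcases hq with h | h
            · right; exact neg_eq_iff_eq_neg.mp h
            · left; exact neg_injective h
        have hcast := zrep_cast s
        have hxveq : xv q.1 q.2 = zrep s := by
          apply small_cast_inj (hxv_pos _ _ hAq) (hxv_small _ _ hAq)
            (zrep_pos (hSne s hs)) (zrep_small (hSnn s hs))
          rcases hxq with hx | hx <;> rcases hcast with hz | hz
          · left; rw [hx, hz]
          · right; rw [hx, hz, neg_neg]
          · right; rw [hx, hz]
          · left; rw [hx, hz]
        have hrq : theRank A q.1 q.2 = t := by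
          have h1 := hrank_lt q.1 q.2 hAq
          have hgq : R.get ⟨theRank A q.1 q.2, h1⟩ = R.get ⟨t, ht⟩ := by
            rw [hget]
            have h2 := hxveq
            simp only [hxv] at h2
            rw [List.getD_eq_getElem R 0 h1] at h2
            simpa using h2
          by_contra hne
          rcases Nat.lt_or_ge (theRank A q.1 q.2) t with h' | h'
          · exact absurd hgq (ne_of_lt (hRget_mono _ _ (Fin.mk_lt_mk.mpr h')))
          · have h'' : t < theRank A q.1 q.2 := by omega
            exact absurd hgq.symm (ne_of_lt (hRget_mono _ _ (Fin.mk_lt_mk.mpr h'')))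
        exact rank_inj A hAq hpA (hrq.trans hpt)
      · intro hq
        rw [hq]
        exact hpmem
    have hsimp_row : ∀ i, IsSimpleList (redRow H i) ∧ (redRow H i).sum ≠ 0 := by
      intro i
      have hmain := struct_lemma v (fun j => B i j) (fun j => H i j)
        (fun j => by simp only [hH])
        (fun a ha => hBbound i a ha)
        (by
          intro a b hab ha hb hgap
          have hAa := (hBA i a).mp ha
          have hAb := (hBA i b).mp hb
          have halt : A i b = -(A i a) := hArow i a b hab hAa hAb (fun l hl1 hl2 => by
            by_contra hAl
            exact ((hBA i l).mpr hAl) (hgap l hl1 hl2))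
          have hxa : (0:ℤ) < (xv i a : ℤ) := by exact_mod_cast hxv_pos i a hAa
          have hxb : (0:ℤ) < (xv i b : ℤ) := by exact_mod_cast hxv_pos i b hAb
          simp only [hB]
          rw [halt]
          rcases hA01 i a with h0 | h0 | h0
          · exact absurd h0 hAa
          · rw [h0]; nlinarith
          · rw [h0]; nlinarith)
        (by
          intro a b hab ha hb
          have hAa := (hBA i a).mp ha
          have hAb := (hBA i b).mp hb
          rw [hBabs i a hAa, hBabs i b hAb]
          exact_mod_cast hxv_mono hAa hAb (rank_lt_row A hab hAa))
        (by
          have hpos : 0 < rowWeight A i := by rw [hArw i]; exact hwpos i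
          rw [rowWeight] at hpos
          obtain ⟨j, hj⟩ := Finset.card_pos.mp hpos
          exact ⟨j, (hBA i j).mpr (Finset.mem_filter.mp hj).2⟩)
      exact hmain
    have hsimp_col : ∀ j, IsSimpleList (redCol H j) ∧ (redCol H j).sum ≠ 0 := by
      intro j
      have hmain := struct_lemma v (fun i => B i j) (fun i => H i j)
        (fun i => by simp only [hH])
        (fun a ha => hBbound a j ha)
        (by
          intro a b hab ha hb hgap
          have hAa := (hBA a j).mp ha
          have hAb := (hBA b j).mp hb
          have halt : A b j = -(A a j) := hAcol j a b hab hAa hAb (fun l hl1 hl2 => by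
            by_contra hAl
            exact ((hBA l j).mpr hAl) (hgap l hl1 hl2))
          have hxa : (0:ℤ) < (xv a j : ℤ) := by exact_mod_cast hxv_pos a j hAa
          have hxb : (0:ℤ) < (xv b j : ℤ) := by exact_mod_cast hxv_pos b j hAb
          simp only [hB]
          rw [halt]
          rcases hA01 a j with h0 | h0 | h0
          · exact absurd h0 hAa
          · rw [h0]; nlinarith
          · rw [h0]; nlinarith)
        (by
          intro a b hab ha hb
          have hAa := (hBA a j).mp ha
          have hAb := (hBA b j).mp hb
          rw [hBabs a j hAa, hBabs b j hAb]
          exact_mod_cast hxv_mono hAa hAb (rank_lt_col A hab hAa))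
        (by
          have hpos : 0 < colWeight A j := by rw [hAcw j]; exact kwpos j
          rw [colWeight] at hpos
          obtain ⟨i, hi⟩ := Finset.card_pos.mp hpos
          exact ⟨i, (hBA i j).mpr (Finset.mem_filter.mp hi).2⟩)
      exact hmain
    exact ⟨H, ⟨hrowW, hcolW, hmemcond, huniqcond⟩, hsimp_row, hsimp_col⟩
end

section
/- Let A=(a_{ij}) be an m×n matrix with entries in {0,1} in which every row and every column contains at least one nonzero entry. Define R = {(i,j) : a_{ij} = 1 and a_{ij'} = 0 for all j' with j < j' ≤ n}, C = {(i,j) : a_{ij} = 1 and a_{i'j} = 0 for all i' with i < i' ≤ m}, and L = R ∩ C. Let Φ be the simple graph with vertex set R ∪ C in which distinct vertices p=(i,j) and q=(u,v) are adjacent if and only if one of p,q lies in R, the other lies in C, and either i = u or j = v. Then Φ is a forest (contains no cycle), and every connected component of Φ contains exactly one vertex belonging to L. -/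
/-- The set of positions of the last nonzero entry of each row of the `{0,1}`-matrix `A`. -/
def lastOfRow {m n : ℕ} (A : Matrix (Fin m) (Fin n) ℕ) : Set (Fin m × Fin n) :=
  {p | A p.1 p.2 = 1 ∧ ∀ j' : Fin n, p.2 < j' → A p.1 j' = 0}

/-- The set of positions of the last nonzero entry of each column of the `{0,1}`-matrix `A`. -/
def lastOfCol {m n : ℕ} (A : Matrix (Fin m) (Fin n) ℕ) : Set (Fin m × Fin n) :=
  {p | A p.1 p.2 = 1 ∧ ∀ i' : Fin m, p.1 < i' → A i' p.2 = 0}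

/-- The graph `Φ` on vertex set `R ∪ C`: distinct vertices are adjacent iff one lies in
`R`, the other lies in `C`, and they share a row index or a column index. -/
def Phi {m n : ℕ} (A : Matrix (Fin m) (Fin n) ℕ) :
    SimpleGraph {p : Fin m × Fin n // p ∈ lastOfRow A ∪ lastOfCol A} :=
  SimpleGraph.fromRel (fun p q =>
    (p : Fin m × Fin n) ∈ lastOfRow A ∧ (q : Fin m × Fin n) ∈ lastOfCol A ∧
      ((p : Fin m × Fin n).1 = (q : Fin m × Fin n).1 ∨
        (p : Fin m × Fin n).2 = (q : Fin m × Fin n).2))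

namespace St15

variable {m n : ℕ}

/-- Hypotheses bundled. -/
structure Hyp (m n : ℕ) where
  A : Matrix (Fin m) (Fin n) ℕ
  h01 : ∀ i j, A i j = 0 ∨ A i j = 1
  hrow : ∀ i, ∃ j, A i j ≠ 0
  hcol : ∀ j, ∃ i, A i j ≠ 0

variable (H : Hyp m n)

abbrev V (H : Hyp m n) := {p : Fin m × Fin n // p ∈ lastOfRow H.A ∪ lastOfCol H.A}

/-- last nonzero column index of row `i` -/
def lr (i : Fin m) : Fin n :=
  (Finset.univ.filter fun j => H.A i j ≠ 0).max'
    (by obtain ⟨j, hj⟩ := H.hrow i; exact ⟨j, by simp [hj]⟩)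

/-- last nonzero row index of column `j` -/
def lc (j : Fin n) : Fin m :=
  (Finset.univ.filter fun i => H.A i j ≠ 0).max'
    (by obtain ⟨i, hi⟩ := H.hcol j; exact ⟨i, by simp [hi]⟩)

lemma lr_ne (i : Fin m) : H.A i (lr H i) ≠ 0 := by
  have := (Finset.univ.filter fun j => H.A i j ≠ 0).max'_mem
    (by obtain ⟨j, hj⟩ := H.hrow i; exact ⟨j, by simp [hj]⟩)
  simpa [lr] using this

lemma lc_ne (j : Fin n) : H.A (lc H j) j ≠ 0 := by
  have := (Finset.univ.filter fun i => H.A i j ≠ 0).max'_mem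
    (by obtain ⟨i, hi⟩ := H.hcol j; exact ⟨i, by simp [hi]⟩)
  simpa [lc] using this

lemma le_lr {i : Fin m} {j : Fin n} (h : H.A i j ≠ 0) : j ≤ lr H i :=
  Finset.le_max' _ j (by simp [h])

lemma le_lc {i : Fin m} {j : Fin n} (h : H.A i j ≠ 0) : i ≤ lc H j :=
  Finset.le_max' _ i (by simp [h])

lemma rPt_mem (i : Fin m) : ((i, lr H i) : Fin m × Fin n) ∈ lastOfRow H.A := by
  refine ⟨?_, fun j' hj' => ?_⟩
  · rcases H.h01 i (lr H i) with h | h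
    · exact absurd h (lr_ne H i)
    · exact h
  · by_contra h
    exact absurd (le_lr H h) (not_le.mpr hj')

lemma cPt_mem (j : Fin n) : ((lc H j, j) : Fin m × Fin n) ∈ lastOfCol H.A := by
  refine ⟨?_, fun i' hi' => ?_⟩
  · rcases H.h01 (lc H j) j with h | h
    · exact absurd h (lc_ne H j)
    · exact h
  · by_contra h
    exact absurd (le_lc H h) (not_le.mpr hi')

lemma mem_R_eq {p : Fin m × Fin n} (hp : p ∈ lastOfRow H.A) : p.2 = lr H p.1 := by
  refine le_antisymm (le_lr H (by rw [hp.1]; exact one_ne_zero)) ?_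
  by_contra h
  exact lr_ne H p.1 (hp.2 _ (not_le.mp h))

lemma mem_C_eq {p : Fin m × Fin n} (hp : p ∈ lastOfCol H.A) : p.1 = lc H p.2 := by
  refine le_antisymm (le_lc H (by rw [hp.1]; exact one_ne_zero)) ?_
  by_contra h
  exact lc_ne H p.2 (hp.2 _ (not_le.mp h))

open Classical in
/-- The parent of a vertex. -/
noncomputable def parent (x : V H) : V H :=
  if h : x.val ∈ lastOfRow H.A then
    ⟨(lc H x.val.2, x.val.2), Or.inr (cPt_mem H x.val.2)⟩
  else
    ⟨(x.val.1, lr H x.val.1), Or.inl (rPt_mem H x.val.1)⟩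

/-- potential -/
def mu (x : V H) : ℕ := (x.val.1 : ℕ) + (x.val.2 : ℕ)

lemma x_ne_zero (x : V H) : H.A x.val.1 x.val.2 ≠ 0 := by
  rcases x.2 with h | h <;> · rw [h.1]; exact one_ne_zero

lemma mu_lt_parent {x : V H} (h : parent H x ≠ x) : mu H x < mu H (parent H x) := by
  by_cases hR : x.val ∈ lastOfRow H.A
  · rw [parent, dif_pos hR] at h ⊢
    have h1 : x.val.1 ≤ lc H x.val.2 := le_lc H (x_ne_zero H x)
    rcases lt_or_eq_of_le h1 with h2 | h2
    · have h2' : (x.val.1 : ℕ) < (lc H x.val.2 : ℕ) := h2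
      show (x.val.1 : ℕ) + (x.val.2 : ℕ) < (lc H x.val.2 : ℕ) + (x.val.2 : ℕ)
      omega
    · exact (h (Subtype.ext (Prod.ext_iff.mpr ⟨h2.symm, rfl⟩))).elim
  · rw [parent, dif_neg hR] at h ⊢
    have h1 : x.val.2 ≤ lr H x.val.1 := le_lr H (x_ne_zero H x)
    rcases lt_or_eq_of_le h1 with h2 | h2
    · have h2' : (x.val.2 : ℕ) < (lr H x.val.1 : ℕ) := h2
      show (x.val.1 : ℕ) + (x.val.2 : ℕ) < (x.val.1 : ℕ) + (lr H x.val.1 : ℕ)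
      omega
    · exact (h (Subtype.ext (Prod.ext_iff.mpr ⟨rfl, h2.symm⟩))).elim

lemma mu_le_parent (x : V H) : mu H x ≤ mu H (parent H x) := by
  by_cases h : parent H x = x
  · rw [h]
  · exact le_of_lt (mu_lt_parent H h)

lemma mu_le_iterate (x : V H) (k : ℕ) : mu H x ≤ mu H ((parent H)^[k] x) := by
  induction k with
  | zero => simp
  | succ k ih =>
    rw [Function.iterate_succ_apply']
    exact le_trans ih (mu_le_parent H _)

lemma parent_fix_iff {x : V H} :
    parent H x = x ↔ x.val ∈ lastOfRow H.A ∩ lastOfCol H.A := by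
  constructor
  · intro h
    unfold parent at h
    split at h
    · rename_i hR
      refine ⟨hR, ?_⟩
      have : x.val = (lc H x.val.2, x.val.2) := congrArg Subtype.val h.symm
      rw [this]
      exact cPt_mem H x.val.2
    · rename_i hR
      exfalso
      apply hR
      have : x.val = (x.val.1, lr H x.val.1) := congrArg Subtype.val h.symm
      rw [this]
      exact rPt_mem H x.val.1
  · rintro ⟨hR, hC⟩
    unfold parent
    rw [dif_pos hR]
    apply Subtype.ext
    show ((lc H x.val.2, x.val.2) : Fin m × Fin n) = x.val
    exact Prod.ext_iff.mpr ⟨(mem_C_eq H hC).symm, rfl⟩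

lemma adj_iff {x y : V H} :
    (Phi H.A).Adj x y ↔ x ≠ y ∧ (y = parent H x ∨ x = parent H y) := by
  rw [Phi, SimpleGraph.fromRel_adj]
  constructor
  · rintro ⟨hne, hrel⟩
    refine ⟨hne, ?_⟩
    have key : ∀ a b : V H, a ≠ b →
        (a : Fin m × Fin n) ∈ lastOfRow H.A → (b : Fin m × Fin n) ∈ lastOfCol H.A →
        ((a : Fin m × Fin n).1 = (b : Fin m × Fin n).1 ∨
          (a : Fin m × Fin n).2 = (b : Fin m × Fin n).2) →
        (b = parent H a ∨ a = parent H b) := by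
      rintro a b hab haR hbC (hrow | hcol)
      · -- same row
        by_cases hbR : b.val ∈ lastOfRow H.A
        · exfalso
          apply hab
          apply Subtype.ext
          apply Prod.ext hrow
          rw [mem_R_eq H haR, mem_R_eq H hbR, hrow]
        · right
          unfold parent
          rw [dif_neg hbR]
          apply Subtype.ext
          show (a : Fin m × Fin n) = ((b : Fin m × Fin n).1, lr H (b : Fin m × Fin n).1)
          refine Prod.ext_iff.mpr ⟨hrow, ?_⟩
          show (a : Fin m × Fin n).2 = lr H (b : Fin m × Fin n).1
          rw [mem_R_eq H haR, hrow]
      · -- same column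
        left
        unfold parent
        rw [dif_pos haR]
        apply Subtype.ext
        show (b : Fin m × Fin n) = (lc H (a : Fin m × Fin n).2, (a : Fin m × Fin n).2)
        refine Prod.ext_iff.mpr ⟨?_, hcol.symm⟩
        show (b : Fin m × Fin n).1 = lc H (a : Fin m × Fin n).2
        rw [mem_C_eq H hbC, hcol]
    rcases hrel with ⟨haR, hbC, hor⟩ | ⟨hbR, haC, hor⟩
    · exact key x y hne haR hbC hor
    · rcases key y x hne.symm hbR haC hor with h | h
      · exact Or.inr h
      · exact Or.inl h
  · rintro ⟨hne, h | h⟩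
    · refine ⟨hne, ?_⟩
      subst h
      unfold parent
      by_cases hR : x.val ∈ lastOfRow H.A
      · rw [dif_pos hR]
        exact Or.inl ⟨hR, cPt_mem H x.val.2, Or.inr rfl⟩
      · rw [dif_neg hR]
        refine Or.inr ⟨rPt_mem H x.val.1, ?_, Or.inl rfl⟩
        rcases x.2 with h | h
        · exact absurd h hR
        · exact h
    · refine ⟨hne, ?_⟩
      subst h
      unfold parent
      by_cases hR : y.val ∈ lastOfRow H.A
      · rw [dif_pos hR]
        exact Or.inr ⟨hR, cPt_mem H y.val.2, Or.inr rfl⟩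
      · rw [dif_neg hR]
        refine Or.inl ⟨rPt_mem H y.val.1, ?_, Or.inl rfl⟩
        rcases y.2 with h | h
        · exact absurd h hR
        · exact h

/-- Iterating `parent` until reaching a fixed point. -/
noncomputable def reach (x : V H) : V H :=
  if h : parent H x = x then x else reach (parent H x)
termination_by (m + n) - mu H x
decreasing_by
  have h1 := mu_lt_parent H h
  have h2 : (x.val.1 : ℕ) < m := x.val.1.isLt
  have h3 : (x.val.2 : ℕ) < n := x.val.2.isLt
  have h4 : mu H x < m + n := by unfold mu; omega
  omega

lemma reach_spec (x : V H) :
    parent H (reach H x) = reach H x ∧ (Phi H.A).Reachable x (reach H x) := by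
  have key : ∀ k x, (m + n) - mu H x ≤ k →
      parent H (reach H x) = reach H x ∧ (Phi H.A).Reachable x (reach H x) := by
    intro k
    induction k with
    | zero =>
      intro x hx
      have h2 : (x.val.1 : ℕ) < m := x.val.1.isLt
      have h3 : (x.val.2 : ℕ) < n := x.val.2.isLt
      have : mu H x < m + n := by unfold mu; omega
      omega
    | succ k ih =>
      intro x hx
      by_cases h : parent H x = x
      · rw [reach, dif_pos h]
        exact ⟨h, SimpleGraph.Reachable.refl x⟩
      · rw [reach, dif_neg h]
        have h1 := mu_lt_parent H h
        have h5 := ih (parent H x) (by omega)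
        refine ⟨h5.1, ?_⟩
        have hadj : (Phi H.A).Adj x (parent H x) :=
          (adj_iff H).mpr ⟨fun he => h he.symm, Or.inl rfl⟩
        exact (hadj.reachable).trans h5.2
  exact key ((m + n) - mu H x) x le_rfl

lemma reach_fix (x : V H) : parent H (reach H x) = reach H x := (reach_spec H x).1

lemma reach_reachable (x : V H) : (Phi H.A).Reachable x (reach H x) := (reach_spec H x).2

lemma reach_of_fix {x : V H} (h : parent H x = x) : reach H x = x := by
  rw [reach, dif_pos h]

lemma reach_eq_of_adj {x y : V H} (h : (Phi H.A).Adj x y) : reach H x = reach H y := by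
  rcases (adj_iff H).mp h with ⟨hne, rfl | rfl⟩
  · have h1 : parent H x ≠ x := fun he => hne he.symm
    conv_lhs => rw [reach, dif_neg h1]
  · have h1 : parent H y ≠ y := fun he => hne he
    conv_rhs => rw [reach, dif_neg h1]

lemma reach_eq_of_reachable {x y : V H} (h : (Phi H.A).Reachable x y) :
    reach H x = reach H y := by
  obtain ⟨w⟩ := h
  induction w with
  | nil => rfl
  | cons hadj _ ih => rw [reach_eq_of_adj H hadj, ih]

/-- set of descendants of `x` -/
def desc (x : V H) : Set (V H) := {z | ∃ k, (parent H)^[k] z = x}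

lemma isBridge_parent {x : V H} (hx : parent H x ≠ x) :
    (Phi H.A).IsBridge s(x, parent H x) := by
  rw [SimpleGraph.isBridge_iff_adj_and_forall_walk_mem_edges]
  have hadj : (Phi H.A).Adj x (parent H x) :=
    (adj_iff H).mpr ⟨fun he => hx he.symm, Or.inl rfl⟩
  intro p
  have hxS : x ∈ desc H x := ⟨0, rfl⟩
  have hpS : parent H x ∉ desc H x := by
    rintro ⟨k, hk⟩
    have h1 := mu_lt_parent H hx
    have h2 := mu_le_iterate H (parent H x) k
    rw [hk] at h2
    omega
  obtain ⟨d, hd, hdS, hdS'⟩ := p.exists_boundary_dart (desc H x) hxS hpS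
  have hedge : d.edge ∈ p.edges := by
    rw [SimpleGraph.Walk.edges]
    exact List.mem_map_of_mem hd
  have hkey : d.fst = x ∧ d.snd = parent H x := by
    rcases (adj_iff H).mp d.adj with ⟨hne, h | h⟩
    · obtain ⟨k, hk⟩ := hdS
      match k, hk with
      | 0, hk =>
        have hk' : d.fst = x := hk
        exact ⟨hk', by rw [h, hk']⟩
      | k + 1, hk =>
        exfalso
        apply hdS'
        exact ⟨k, by rw [h, ← Function.iterate_succ_apply, hk]⟩
    · exfalso
      apply hdS'
      obtain ⟨k, hk⟩ := hdS
      exact ⟨k + 1, by rw [Function.iterate_succ_apply, ← h, hk]⟩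
  have : d.edge = s(x, parent H x) := by
    rw [show d.edge = s(d.fst, d.snd) from rfl, hkey.1, hkey.2]
  rwa [this] at hedge

lemma main (H : Hyp m n) :
    (Phi H.A).IsAcyclic ∧
    ∀ c : (Phi H.A).ConnectedComponent,
      ∃! x : V H,
        (Phi H.A).connectedComponentMk x = c ∧
          (x : Fin m × Fin n) ∈ lastOfRow H.A ∩ lastOfCol H.A := by
  constructor
  · rw [SimpleGraph.isAcyclic_iff_forall_adj_isBridge]
    intro x y hxy
    rcases (adj_iff H).mp hxy with ⟨hne, rfl | rfl⟩
    · exact isBridge_parent H (fun he => hne he.symm)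
    · rw [Sym2.eq_swap]
      exact isBridge_parent H (fun he => hne he)
  · intro c
    obtain ⟨x, rfl⟩ := c.exists_rep
    refine ⟨reach H x, ⟨?_, ?_⟩, ?_⟩
    · exact SimpleGraph.ConnectedComponent.sound (reach_reachable H x).symm
    · exact (parent_fix_iff H).mp (reach_fix H x)
    · rintro y ⟨hy1, hy2⟩
      have h1 : reach H y = y := reach_of_fix H ((parent_fix_iff H).mpr hy2)
      have h2 : (Phi H.A).Reachable y x := (SimpleGraph.ConnectedComponent.eq).mp hy1
      rw [← h1, reach_eq_of_reachable H h2]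

end St15

/-- For a `{0,1}`-matrix `A` each of whose rows and columns has a
nonzero entry, the graph `Φ` is a forest, and every connected component of `Φ` contains
exactly one vertex of `L = R ∩ C`. -/
theorem statement15 (m n : ℕ) (A : Matrix (Fin m) (Fin n) ℕ)
    (h01 : ∀ i j, A i j = 0 ∨ A i j = 1)
    (hrow : ∀ i, ∃ j, A i j ≠ 0) (hcol : ∀ j, ∃ i, A i j ≠ 0) :
    (Phi A).IsAcyclic ∧
    ∀ c : (Phi A).ConnectedComponent,
      ∃! x : {p : Fin m × Fin n // p ∈ lastOfRow A ∪ lastOfCol A},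
        (Phi A).connectedComponentMk x = c ∧
          (x : Fin m × Fin n) ∈ lastOfRow A ∩ lastOfCol A := by
  exact St15.main ⟨A, h01, hrow, hcol⟩
end

section
/- Let v ≥ 2 and let S be a subset of Z_v \ {0} such that s ≠ -t for all distinct s,t ∈ S and s ≠ -s for every s ∈ S. Let 𝐡=(h_1,…,h_m) and 𝐤=(k_1,…,k_n) be sequences of positive integers with |S| = h_1+⋯+h_m = k_1+⋯+k_n, and suppose 𝐡 and 𝐤 satisfy the Gale–Ryser condition. Let Γ = Cay(Z_v,S) be the simple graph on vertex set Z_v with x adjacent to y iff x-y ∈ S ∪ -S. Then there exist paths P_1,…,P_m and Q_1,…,Q_n in Γ, with P_i of length h_i (h_i edges) and Q_j of length k_j, such that: every edge of Γ lies in exactly one of the translates P_i + g (1 ≤ i ≤ m, g ∈ Z_v), so these translates form a Z_v-regular path decomposition of Γ; every edge of Γ lies in exactly one of the translates Q_j + g (1 ≤ j ≤ n, g ∈ Z_v); and for all i, j, g, g', the paths P_i + g and Q_j + g' share at most one edge (the two decompositions are orthogonal). -/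
/-- The Cayley graph `Cay(Z_v, S)`: `x` and `y` are adjacent iff `x - y ∈ S ∪ -S`. -/
def cayGraph {v : ℕ} (S : Finset (ZMod v)) : SimpleGraph (ZMod v) :=
  SimpleGraph.fromRel (fun x y => x - y ∈ S)

section Helpers

open Finset

/-- A set of `c` rows carrying the largest values of `h`, all positive. -/
lemma exists_top {m : ℕ} (h : Fin m → ℕ) (c : ℕ)
    (hc : c ≤ (univ.filter (fun i => 1 ≤ h i)).card) :
    ∃ D : Finset (Fin m), D.card = c ∧ (∀ i ∈ D, 1 ≤ h i) ∧
      ∀ i ∈ D, ∀ i' ∉ D, h i' ≤ h i := by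
  induction c with
  | zero => exact ⟨∅, rfl, by simp, by simp⟩
  | succ c ih =>
    obtain ⟨D, hDc, hD1, hDmax⟩ := ih (le_trans (Nat.le_succ c) hc)
    have hsub : D ⊆ univ.filter (fun i => 1 ≤ h i) := by
      intro i hi; simp [hD1 i hi]
    have : ∃ i0, i0 ∈ univ.filter (fun i => 1 ≤ h i) \ D := by
      by_contra hno
      push_neg at hno
      have : univ.filter (fun i => 1 ≤ h i) ⊆ D := by
        intro x hx; by_contra hxD; exact hno x (mem_sdiff.mpr ⟨hx, hxD⟩)
      have := card_le_card this
      omega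
    obtain ⟨i1, hi1⟩ := this
    have hne : (univ \ D).Nonempty := by
      refine ⟨i1, ?_⟩
      rw [mem_sdiff] at hi1 ⊢
      exact ⟨mem_univ _, hi1.2⟩
    obtain ⟨i0, hi0mem, hi0max⟩ := Finset.exists_max_image (univ \ D) h hne
    have hi0D : i0 ∉ D := (mem_sdiff.mp hi0mem).2
    have hi0pos : 1 ≤ h i0 := by
      have h1 : 1 ≤ h i1 := by
        rw [mem_sdiff, mem_filter] at hi1; exact hi1.1.2
      have := hi0max i1 (by rw [mem_sdiff] at hi1 ⊢; exact ⟨mem_univ _, hi1.2⟩)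
      omega
    refine ⟨insert i0 D, ?_, ?_, ?_⟩
    · rw [card_insert_of_notMem hi0D, hDc]
    · intro i hi
      rcases mem_insert.mp hi with rfl | hi
      · exact hi0pos
      · exact hD1 i hi
    · intro i hi i' hi'
      have hi'D : i' ∉ D := fun hc => hi' (mem_insert_of_mem hc)
      rcases mem_insert.mp hi with rfl | hi
      · exact hi0max i' (mem_sdiff.mpr ⟨mem_univ _, hi'D⟩)
      · exact hDmax i hi i' hi'D

theorem grMatrix : ∀ (n m : ℕ) (h : Fin m → ℕ) (k : Fin n → ℕ),
    (∑ i, h i) = (∑ j, k j) →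
    (∀ T : Finset (Fin n), ∑ j ∈ T, k j ≤ ∑ i, min (h i) T.card) →
    ∃ M : Fin m → Finset (Fin n),
      (∀ i, (M i).card = h i) ∧
      (∀ j, (univ.filter (fun i => j ∈ M i)).card = k j) := by
  intro n
  induction n with
  | zero =>
    intro m h k hsum _
    refine ⟨fun _ => ∅, fun i => ?_, fun j => j.elim0⟩
    have : ∑ j : Fin 0, k j = 0 := rfl
    rw [this] at hsum
    have : h i = 0 := by
      have := Finset.sum_eq_zero_iff.mp hsum i (mem_univ i)
      exact this
    simp [this]
  | succ n ih =>
    intro m h k hsum hcond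
    set j0 : Fin (n+1) := Fin.last n with hj0
    -- rows with positive h are at least k j0 many
    have hfil : k j0 ≤ (univ.filter (fun i => 1 ≤ h i)).card := by
      have h1 := hcond {j0}
      simp only [sum_singleton, card_singleton] at h1
      calc k j0 ≤ ∑ i, min (h i) 1 := h1
        _ = (univ.filter (fun i => 1 ≤ h i)).card := by
          rw [Finset.card_filter]
          apply Finset.sum_congr rfl
          intro i _
          rw [Nat.min_def]
          split <;> split <;> omega
    obtain ⟨D, hDc, hD1, hDmax⟩ := exists_top h (k j0) hfil
    set h' : Fin m → ℕ := fun i => h i - (if i ∈ D then 1 else 0) with hh'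
    set k' : Fin n → ℕ := fun j => k j.castSucc with hk'
    have hsum' : (∑ i, h' i) = (∑ j, k' j) := by
      have hD : ∑ i, h' i = (∑ i, h i) - k j0 := by
        rw [hh']
        rw [Finset.sum_tsub_distrib]
        · congr 1
          rw [Finset.sum_ite_mem]
          simp [Finset.univ_inter, hDc]
        · intro i _
          split <;> simp_all [hD1]
      rw [hD, hsum, Fin.sum_univ_castSucc]
      simp [hk', hj0]
    have hcond' : ∀ T : Finset (Fin n), ∑ j ∈ T, k' j ≤ ∑ i, min (h' i) T.card := by
      intro T
      set u := T.card with hu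
      set T' : Finset (Fin (n+1)) := T.map ⟨Fin.castSucc, Fin.castSucc_injective n⟩ with hT'
      have hT'card : T'.card = u := by rw [hT', card_map]
      have hsumT : ∑ j ∈ T, k' j = ∑ j ∈ T', k j := by
        rw [hT', Finset.sum_map]; rfl
      have hj0T' : j0 ∉ T' := by
        rw [hT', mem_map]
        rintro ⟨x, -, hx⟩
        exact (Fin.castSucc_lt_last x).ne hx
      by_cases hcase : ∀ i ∈ D, u < h i
      · have := hcond T'
        rw [hT'card] at this
        rw [hsumT]
        refine le_trans this (Finset.sum_le_sum ?_)
        intro i _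
        by_cases hiD : i ∈ D
        · have := hcase i hiD
          simp only [hh', if_pos hiD]
          omega
        · simp [hh', hiD]
      · push_neg at hcase
        obtain ⟨i0, hi0D, hi0u⟩ := hcase
        have hins := hcond (insert j0 T')
        rw [Finset.sum_insert hj0T', Finset.card_insert_of_notMem hj0T', hT'card] at hins
        have key : ∑ i, min (h i) (u+1) ≤ (∑ i, min (h' i) u) + k j0 := by
          have : ∀ i, min (h i) (u+1) ≤ min (h' i) u + (if i ∈ D then 1 else 0) := by
            intro i
            by_cases hiD : i ∈ D
            · have := hD1 i hiD
              simp only [hh', if_pos hiD]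
              omega
            · have : h i ≤ h i0 := hDmax i0 hi0D i hiD
              simp only [hh', if_neg hiD]
              omega
          calc ∑ i, min (h i) (u+1) ≤ ∑ i, (min (h' i) u + (if i ∈ D then 1 else 0)) :=
              Finset.sum_le_sum (fun i _ => this i)
            _ = (∑ i, min (h' i) u) + k j0 := by
              rw [Finset.sum_add_distrib]
              congr 1
              rw [Finset.sum_ite_mem]
              simp [Finset.univ_inter, hDc]
        rw [hsumT]
        omega
    obtain ⟨M', hM'row, hM'col⟩ := ih m h' k' hsum' hcond'
    set emb : Fin n ↪ Fin (n+1) := ⟨Fin.castSucc, Fin.castSucc_injective n⟩ with hemb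
    refine ⟨fun i => (if i ∈ D then {j0} else ∅) ∪ (M' i).map emb, ?_, ?_⟩
    · intro i
      have hdisj : Disjoint (if i ∈ D then ({j0} : Finset (Fin (n+1))) else ∅) ((M' i).map emb) := by
        rw [Finset.disjoint_left]
        intro a ha ha'
        rw [mem_map] at ha'
        obtain ⟨b, -, hb⟩ := ha'
        have haj : a = j0 := by
          split at ha
          · exact mem_singleton.mp ha
          · exact absurd ha (notMem_empty a)
        exact (Fin.castSucc_lt_last b).ne (hb.trans haj)
      rw [card_union_of_disjoint hdisj, card_map, hM'row]
      by_cases hiD : i ∈ D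
      · have := hD1 i hiD
        simp only [hh', if_pos hiD, card_singleton]
        omega
      · simp [hh', hiD]
    · intro j
      refine Fin.lastCases ?_ ?_ j
      · have : ∀ i : Fin m, (Fin.last n ∈ (if i ∈ D then ({j0} : Finset (Fin (n+1))) else ∅) ∪ (M' i).map emb) ↔ i ∈ D := by
          intro i
          rw [mem_union, mem_map]
          constructor
          · rintro (hmem | ⟨b, -, hb⟩)
            · split at hmem
              · assumption
              · exact absurd hmem (notMem_empty _)
            · exact absurd hb (Fin.castSucc_lt_last b).ne
          · intro hiD
            left; rw [if_pos hiD]; exact mem_singleton_self _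
        have heqD : univ.filter (fun i => Fin.last n ∈ (if i ∈ D then ({j0} : Finset (Fin (n+1))) else ∅) ∪ (M' i).map emb) = D := by
          ext i
          rw [mem_filter]
          simp only [mem_univ, true_and]
          exact this i
        rw [heqD, hDc]
      intro j'
      have : ∀ i : Fin m, (j'.castSucc ∈ (if i ∈ D then ({j0} : Finset (Fin (n+1))) else ∅) ∪ (M' i).map emb) ↔ j' ∈ M' i := by
        intro i
        rw [mem_union, mem_map]
        constructor
        · rintro (hmem | ⟨b, hb, hbe⟩)
          · exfalso
            split at hmem
            · rw [mem_singleton] at hmem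
              exact (Fin.castSucc_lt_last j').ne hmem
            · exact absurd hmem (notMem_empty _)
          · have : b = j' := Fin.castSucc_injective n hbe
            rwa [this] at hb
        · intro hj'
          right; exact ⟨j', hj', rfl⟩
      have heq : univ.filter (fun i => j'.castSucc ∈ (if i ∈ D then ({j0} : Finset (Fin (n+1))) else ∅) ∪ (M' i).map emb) = univ.filter (fun i => j' ∈ M' i) := by
        ext i
        rw [mem_filter, mem_filter]
        exact and_congr_right fun _ => this i
      rw [heq, hM'col j']
open Finset


lemma strictMono_val_le {u n : ℕ} {e : Fin u → Fin n} (he : StrictMono e) :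
    ∀ l : Fin u, (l : ℕ) ≤ (e l : ℕ) := by
  have key : ∀ a : ℕ, ∀ ha : a < u, a ≤ (e ⟨a, ha⟩ : ℕ) := by
    intro a
    induction a with
    | zero => intro _; exact Nat.zero_le _
    | succ b ihb =>
      intro ha
      have hb : b < u := Nat.lt_of_succ_lt ha
      have h1 := ihb hb
      have hlt : e ⟨b, hb⟩ < e ⟨b+1, ha⟩ := he (by simp [Fin.lt_def])
      have := Fin.lt_def.mp hlt
      omega
  intro l
  have := key l.val l.isLt
  simpa using this

lemma strictMono_val_ub {u n : ℕ} {e : Fin u → Fin n} (he : StrictMono e) (l : Fin u) :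
    (e l : ℕ) ≤ n - u + l := by
  have h2 : StrictMono (fun l : Fin u => (e (l.rev)).rev) := by
    intro a b hab
    have h3 : b.rev < a.rev := Fin.rev_lt_rev.mpr hab
    have h4 := he h3
    exact Fin.rev_lt_rev.mpr h4
  have h5 := strictMono_val_le h2 l.rev
  simp only [Fin.rev_rev] at h5
  have hv1 := Fin.val_rev l
  have hv2 := Fin.val_rev (e l)
  have := l.isLt
  have := (e l).isLt
  omega

lemma sum_le_topsum {n u : ℕ} (hun : u ≤ n) (g : Fin n → ℕ) (hg : Monotone g)
    (A : Finset (Fin n)) (hA : A.card = u) :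
    ∑ j ∈ A, g j ≤ ∑ l : Fin u, g ⟨n - u + l, by omega⟩ := by
  set e : Fin u → Fin n := fun l => ((A.orderIsoOfFin hA) l : Fin n) with he
  have hemono : StrictMono e := by
    intro a b hab
    exact (A.orderIsoOfFin hA).strictMono hab
  have h1 : ∑ j ∈ A, g j = ∑ l : Fin u, g (e l) := by
    rw [← Finset.sum_attach A (fun j => g j)]
    refine Fintype.sum_equiv (A.orderIsoOfFin hA).toEquiv.symm _ _ (fun x => ?_)
    show g ↑x = g ↑((A.orderIsoOfFin hA) ((A.orderIsoOfFin hA).symm x))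
    rw [(A.orderIsoOfFin hA).apply_symm_apply x]
  rw [h1]
  apply Finset.sum_le_sum
  intro l _
  apply hg
  rw [Fin.le_def]
  exact strictMono_val_ub hemono l


lemma decRearrange_eq {n : ℕ} (k : Fin n → ℕ) (j : Fin n) :
    decRearrange k j = (k ∘ ⇑(Tuple.sort k)) j.rev := rfl

lemma gr_subset_form {m n : ℕ} (hw : Fin m → ℕ) (kw : Fin n → ℕ)
    (hGR : GaleRyser hw kw) (T : Finset (Fin n)) :
    ∑ j ∈ T, kw j ≤ ∑ i, min (hw i) T.card := by
  rcases Nat.eq_zero_or_pos T.card with h0 | hpos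
  · have hT : T = ∅ := Finset.card_eq_zero.mp h0
    simp [hT]
  set u := T.card with hu
  have hun : u ≤ n := by
    have := Finset.card_le_univ T
    simpa using this
  have hgmono : Monotone (kw ∘ ⇑(Tuple.sort kw)) := Tuple.monotone_sort kw
  have hT₂card : (T.image ⇑(Tuple.sort kw).symm).card = u := by
    rw [Finset.card_image_of_injective _ (Tuple.sort kw).symm.injective]
  have hsum2 : ∑ j ∈ T.image ⇑(Tuple.sort kw).symm, (kw ∘ ⇑(Tuple.sort kw)) j
      = ∑ j ∈ T, kw j := by
    rw [Finset.sum_image (fun a _ b _ hab => (Tuple.sort kw).symm.injective hab)]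
    apply Finset.sum_congr rfl
    intro x _
    simp
  have step1 : ∑ j ∈ T, kw j ≤ ∑ l : Fin u, (kw ∘ ⇑(Tuple.sort kw)) ⟨n - u + l, by omega⟩ := by
    rw [← hsum2]
    exact sum_le_topsum hun _ hgmono _ hT₂card
  have step2 : ∑ l : Fin u, (kw ∘ ⇑(Tuple.sort kw)) ⟨n - u + (l : ℕ), by omega⟩
      = ∑ j ∈ Finset.univ.filter (fun j : Fin n => (j : ℕ) < u), decRearrange kw j := by
    refine Finset.sum_nbij' (fun l : Fin u => Fin.castLE hun l.rev)
      (fun a : Fin n => if ha : (a : ℕ) < u then (⟨a, ha⟩ : Fin u).rev else ⟨0, hpos⟩)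
      ?_ ?_ ?_ ?_ ?_
    · intro l _
      simp only [Finset.mem_filter, Finset.mem_univ, true_and, Fin.coe_castLE, Fin.val_rev]
      have := l.isLt
      omega
    · intro a _
      exact Finset.mem_univ _
    · intro l _
      have h1 : ((Fin.castLE hun l.rev : Fin n) : ℕ) < u := by
        simp only [Fin.coe_castLE, Fin.val_rev]
        have := l.isLt
        omega
      simp only [dif_pos h1]
      apply Fin.ext
      rw [Fin.val_rev]
      simp only [Fin.coe_castLE, Fin.val_rev]
      have := l.isLt
      omega
    · intro a ha
      simp only [Finset.mem_filter, Finset.mem_univ, true_and] at ha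
      simp only [dif_pos ha]
      apply Fin.ext
      simp only [Fin.coe_castLE, Fin.rev_rev]
    · intro l _
      have hl := l.isLt
      have hrev : (Fin.castLE hun l.rev).rev = (⟨n - u + (l : ℕ), by omega⟩ : Fin n) := by
        apply Fin.ext
        rw [Fin.val_rev]
        simp only [Fin.coe_castLE, Fin.val_rev]
        omega
      simp only [decRearrange_eq, hrev]
  calc ∑ j ∈ T, kw j ≤ ∑ l : Fin u, (kw ∘ ⇑(Tuple.sort kw)) ⟨n - u + (l : ℕ), by omega⟩ := step1
    _ = ∑ j ∈ Finset.univ.filter (fun j : Fin n => (j : ℕ) < u), decRearrange kw j := step2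
    _ ≤ ∑ i : Fin m, min (hw i) u := hGR u hpos hun

def zsum (c : ℕ → ℤ) (l : ℕ) : ℤ := ∑ i ∈ Finset.range l, (-1)^i * c i

lemma zsum_succ (c : ℕ → ℤ) (l : ℕ) : zsum c (l+1) = zsum c l + (-1)^l * c l :=
  Finset.sum_range_succ _ _

lemma zsum_range (q : ℕ) (c : ℕ → ℤ)
    (hpos : ∀ l, l < q → 1 ≤ c l)
    (hmono : ∀ l, l + 1 < q → c l < c (l+1)) :
    ∀ l, 1 ≤ l → l ≤ q →
      (Odd l → 1 ≤ zsum c l ∧ zsum c l ≤ c (l-1)) ∧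
      (Even l → 1 - c (l-1) ≤ zsum c l ∧ zsum c l ≤ 0) := by
  intro l
  induction l with
  | zero => omega
  | succ l ih =>
    intro _ hlq
    have hlq' : l < q := hlq
    have hstep := zsum_succ c l
    rcases Nat.eq_zero_or_pos l with rfl | hl1
    · have : zsum c 0 = 0 := rfl
      constructor
      · intro _
        rw [hstep, this]
        simp only [pow_zero, one_mul, zero_add]
        exact ⟨hpos 0 hlq', le_refl _⟩
      · intro he
        exact absurd he (by simp [Nat.even_add_one])
    · have ihl := ih hl1 (le_of_lt hlq)
      have hcl : 1 ≤ c l := hpos l hlq'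
      have hml : l ≥ 1 := hl1
      have hcmono : c (l-1) < c l := by
        have := hmono (l-1) (by omega)
        have he : l - 1 + 1 = l := by omega
        rwa [he] at this
      rcases Nat.even_or_odd l with he | ho
      · -- l even, l+1 odd
        obtain ⟨h1, h2⟩ := ihl.2 he
        have hneg : (-1 : ℤ)^l = 1 := Even.neg_one_pow he
        constructor
        · intro _
          rw [hstep, hneg]
          have : l + 1 - 1 = l := by omega
          rw [this]
          constructor
          · nlinarith [hcmono]
          · linarith
        · intro hcontra
          rcases Nat.even_add_one.mp hcontra with h
          exact absurd he h
      · -- l odd, l+1 even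
        obtain ⟨h1, h2⟩ := ihl.1 ho
        have hneg : (-1 : ℤ)^l = -1 := Odd.neg_one_pow ho
        constructor
        · intro hcontra
          exfalso
          have : Even (l+1) := Odd.add_one ho
          exact (Nat.not_odd_iff_even.mpr this) hcontra
        · intro _
          rw [hstep, hneg]
          have : l + 1 - 1 = l := by omega
          rw [this]
          constructor
          · linarith
          · linarith

lemma zsum_two_step (c : ℕ → ℤ) (l : ℕ) :
    zsum c (l+2) = zsum c l + (-1)^l * c l + (-1)^(l+1) * c (l+1) := by
  rw [zsum_succ, zsum_succ]

lemma zsum_parity_chain (q : ℕ) (c : ℕ → ℤ)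
    (hmono : ∀ l, l + 1 < q → c l < c (l+1)) :
    ∀ d l, l + 2*d ≤ q →
      (Even l → zsum c (l + 2*d) ≤ zsum c l - d) ∧
      (Odd l → zsum c l + d ≤ zsum c (l + 2*d)) := by
  intro d
  induction d with
  | zero => intro l _; simp
  | succ d ihd =>
    intro l hle
    have h1 : l + 2*d + 2 ≤ q := by omega
    have ih := ihd l (by omega)
    have hts := zsum_two_step c (l + 2*d)
    have hm : c (l + 2*d) < c (l + 2*d + 1) := hmono _ (by omega)
    have harr : l + 2*(d+1) = l + 2*d + 2 := by omega
    constructor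
    · intro he
      have hpar : Even (l + 2*d) := by
        rcases he with ⟨r, hr⟩; exact ⟨r + d, by omega⟩
      have hneg1 : (-1 : ℤ)^(l+2*d) = 1 := Even.neg_one_pow hpar
      have hneg2 : (-1 : ℤ)^(l+2*d+1) = -1 := Odd.neg_one_pow (Even.add_one hpar)
      have := ih.1 he
      rw [harr, hts, hneg1, hneg2]
      push_cast
      linarith
    · intro ho
      have hpar : Odd (l + 2*d) := by
        rcases ho with ⟨r, hr⟩; exact ⟨r + d, by omega⟩
      have hneg1 : (-1 : ℤ)^(l+2*d) = -1 := Odd.neg_one_pow hpar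
      have hneg2 : (-1 : ℤ)^(l+2*d+1) = 1 := Even.neg_one_pow (Odd.add_one hpar)
      have := ih.2 ho
      rw [harr, hts, hneg1, hneg2]
      push_cast
      linarith

lemma zsum_distinct (q : ℕ) (c : ℕ → ℤ)
    (hpos : ∀ l, l < q → 1 ≤ c l)
    (hmono : ∀ l, l + 1 < q → c l < c (l+1)) :
    ∀ l l', l < l' → l' ≤ q → zsum c l ≠ zsum c l' := by
  intro l l' hlt hle heq
  have hrange := zsum_range q c hpos hmono
  have hz0 : zsum c 0 = 0 := rfl
  rcases Nat.even_or_odd l with hel | hol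
  · rcases Nat.even_or_odd l' with hel' | hol'
    · -- both even: chain
      have hd : ∃ d, l' = l + 2*(d+1) := by
        rcases hel with ⟨r, hr⟩; rcases hel' with ⟨r', hr'⟩
        exact ⟨r' - r - 1, by omega⟩
      obtain ⟨d, rfl⟩ := hd
      have := (zsum_parity_chain q c hmono (d+1) l (by omega)).1 hel
      rw [← heq] at this
      have : (0:ℤ) < (d:ℤ) + 1 := by positivity
      omega
    · -- l even, l' odd: zsum l ≤ 0 < 1 ≤ zsum l'
      have h2 : 1 ≤ zsum c l' := ((hrange l' (by omega) hle).1 hol').1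
      have h1 : zsum c l ≤ 0 := by
        rcases Nat.eq_zero_or_pos l with rfl | hl1
        · rw [hz0]
        · exact ((hrange l hl1 (by omega)).2 hel).2
      omega
  · rcases Nat.even_or_odd l' with hel' | hol'
    · have h1 : 1 ≤ zsum c l := ((hrange l hol.pos (by omega)).1 hol).1
      have h2 : zsum c l' ≤ 0 := by
        rcases Nat.eq_zero_or_pos l' with rfl | hl1
        · omega
        · exact ((hrange l' hl1 hle).2 hel').2
      omega
    · have hd : ∃ d, l' = l + 2*(d+1) := by
        rcases hol with ⟨r, hr⟩; rcases hol' with ⟨r', hr'⟩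
        exact ⟨r' - r - 1, by omega⟩
      obtain ⟨d, rfl⟩ := hd
      have := (zsum_parity_chain q c hmono (d+1) l (by omega)).2 hol
      rw [heq] at this
      have : (0:ℤ) < (d:ℤ) + 1 := by positivity
      omega

lemma zsum_abs_bound (v q : ℕ) (hv : 1 ≤ v) (c : ℕ → ℤ)
    (hpos : ∀ l, l < q → 1 ≤ c l)
    (hmono : ∀ l, l + 1 < q → c l < c (l+1))
    (hbound : ∀ l, l < q → 2 * c l < v) :
    ∀ l, l ≤ q → 2 * |zsum c l| < v := by
  intro l hle
  rcases Nat.eq_zero_or_pos l with rfl | hl1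
  · have : zsum c 0 = 0 := rfl
    rw [this]
    simp
    exact_mod_cast hv
  · have hb := hbound (l-1) (by omega)
    have := zsum_range q c hpos hmono l hl1 hle
    rcases Nat.even_or_odd l with he | ho
    · obtain ⟨h1, h2⟩ := this.2 he
      rw [abs_of_nonpos h2]
      have hc1 : 1 ≤ c (l-1) := hpos (l-1) (by omega)
      linarith
    · obtain ⟨h1, h2⟩ := this.1 ho
      rw [abs_of_nonneg (by linarith)]
      linarith

lemma zsum_mod_inj (v q : ℕ) (hv : 1 ≤ v) (c : ℕ → ℤ)
    (hpos : ∀ l, l < q → 1 ≤ c l)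
    (hmono : ∀ l, l + 1 < q → c l < c (l+1))
    (hbound : ∀ l, l < q → 2 * c l < v) :
    ∀ l l', l ≤ q → l' ≤ q → ((zsum c l : ZMod v)) = ((zsum c l' : ZMod v)) → l = l' := by
  intro l l' hl hl' heq
  by_contra hne
  have key : zsum c l = zsum c l' := by
    have hdvd : (v:ℤ) ∣ (zsum c l - zsum c l') := by
      rw [← ZMod.intCast_zmod_eq_zero_iff_dvd]
      push_cast
      rw [heq]
      ring
    have hb1 := zsum_abs_bound v q hv c hpos hmono hbound l hl
    have hb2 := zsum_abs_bound v q hv c hpos hmono hbound l' hl'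
    have habs : |zsum c l - zsum c l'| < (v:ℤ) := by
      have := abs_sub (zsum c l) (zsum c l')
      have h3 : |zsum c l - zsum c l'| ≤ |zsum c l| + |zsum c l'| := abs_sub _ _
      omega
    have := Int.eq_zero_of_abs_lt_dvd hdvd habs
    omega
  rcases Nat.lt_or_ge l l' with h | h
  · exact zsum_distinct q c hpos hmono l l' h hl' key
  · have hlt : l' < l := by omega
    exact zsum_distinct q c hpos hmono l' l hlt hl key.symm


/-- basic facts about the representative function -/
lemma rep_facts (v : ℕ) (hv : 2 ≤ v) (S : Finset (ZMod v))
    (hS0 : (0 : ZMod v) ∉ S) (hSred : ∀ s ∈ S, ∀ t ∈ S, s ≠ -t) :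
    haveI : NeZero v := ⟨by omega⟩
    (∀ s ∈ S, 1 ≤ min (ZMod.val s) (v - ZMod.val s)) ∧
    (∀ s ∈ S, 2 * min (ZMod.val s) (v - ZMod.val s) < v) ∧
    (∀ s ∈ S, ((min (ZMod.val s) (v - ZMod.val s) : ℕ) : ZMod v) = s ∨
              ((min (ZMod.val s) (v - ZMod.val s) : ℕ) : ZMod v) = -s) ∧
    (∀ s ∈ S, ∀ t ∈ S,
      min (ZMod.val s) (v - ZMod.val s) = min (ZMod.val t) (v - ZMod.val t) → s = t) := by
  haveI : NeZero v := ⟨by omega⟩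
  have hvpos : 0 < v := by omega
  have hval_lt : ∀ s : ZMod v, ZMod.val s < v := fun s => ZMod.val_lt s
  have hval_cast : ∀ s : ZMod v, ((ZMod.val s : ℕ) : ZMod v) = s := fun s => by
    rw [ZMod.natCast_val, ZMod.cast_id]
  have hne0 : ∀ s ∈ S, 1 ≤ ZMod.val s := by
    intro s hs
    have : s ≠ 0 := fun h => hS0 (h ▸ hs)
    have := (ZMod.val_eq_zero s).not.mpr this
    omega
  have hnehalf : ∀ s ∈ S, 2 * ZMod.val s ≠ v := by
    intro s hs habs
    have hcontra : s = -s := by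
      have h1 : s + s = 0 := by
        have : ((ZMod.val s + ZMod.val s : ℕ) : ZMod v) = ((v : ℕ) : ZMod v) := by
          rw [show ZMod.val s + ZMod.val s = v by omega]
        rw [Nat.cast_add, hval_cast, ZMod.natCast_self] at this
        exact this
      linear_combination h1
    exact hSred s hs s hs hcontra
  have hcast : ∀ s ∈ S, ((min (ZMod.val s) (v - ZMod.val s) : ℕ) : ZMod v) = s ∨
      ((min (ZMod.val s) (v - ZMod.val s) : ℕ) : ZMod v) = -s := by
    intro s hs
    rcases le_or_gt (ZMod.val s) (v - ZMod.val s) with h | h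
    · left
      rw [min_eq_left h, hval_cast]
    · right
      rw [min_eq_right (le_of_lt h)]
      have hle : ZMod.val s ≤ v := le_of_lt (hval_lt s)
      rw [Nat.cast_sub hle, ZMod.natCast_self, hval_cast]
      ring
  refine ⟨?_, ?_, hcast, ?_⟩
  · intro s hs
    have h1 := hne0 s hs
    have h2 := hval_lt s
    omega
  · intro s hs
    have h1 := hne0 s hs
    have h2 := hval_lt s
    have h3 := hnehalf s hs
    omega
  · intro s hs t ht hmin
    have hcs := hcast s hs
    have hct := hcast t ht
    rw [hmin] at hcs
    rcases hcs with h1 | h1 <;> rcases hct with h2 | h2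
    · exact h1.symm.trans h2
    · exact absurd (h1.symm.trans h2) (hSred s hs t ht)
    · exact absurd (h2.symm.trans h1) (hSred t ht s hs)
    · exact neg_injective (h1.symm.trans h2)

lemma side_construction (v : ℕ) (hv : 2 ≤ v) (S : Finset (ZMod v))
    (hS0 : (0 : ZMod v) ∉ S) (hSred : ∀ s ∈ S, ∀ t ∈ S, s ≠ -t)
    (m : ℕ) (hw : Fin m → ℕ) (φ : {x // x ∈ S} → Fin m)
    (hφ : ∀ i, (Finset.univ.filter (fun s => φ s = i)).card = hw i) :
    ∃ (P : (i : Fin m) → Fin (hw i + 1) → ZMod v)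
      (elt : (i : Fin m) → Fin (hw i) → {x // x ∈ S}),
      (∀ i, Function.Injective (P i)) ∧
      (∀ i l, φ (elt i l) = i) ∧
      (∀ i l, P i l.succ - P i l.castSucc = ((elt i l : ZMod v)) ∨
              P i l.succ - P i l.castSucc = -((elt i l : ZMod v))) ∧
      (∀ s, ∃ l : Fin (hw (φ s)), elt (φ s) l = s) ∧
      (∀ i l l', elt i l = elt i l' → l = l') := by
  classical
  obtain ⟨hr1, hr2, hr3, hr4⟩ := rep_facts v hv S hS0 hSred
  set r : ZMod v → ℕ := fun s => min (ZMod.val s) (v - ZMod.val s) with hrdef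
  set B : Fin m → Finset {x // x ∈ S} := fun i => Finset.univ.filter (fun s => φ s = i) with hBdef
  set R : Fin m → Finset ℕ := fun i => (B i).image (fun s => r s.val) with hRdef
  have hRcard : ∀ i, (R i).card = hw i := by
    intro i
    rw [hRdef]
    rw [Finset.card_image_of_injOn, hφ]
    intro a _ b _ hab
    exact Subtype.ext (hr4 a.val a.property b.val b.property hab)
  set c : (i : Fin m) → ℕ → ℤ :=
    fun i l => if hl : l < hw i then ((((R i).orderIsoOfFin (hRcard i)) ⟨l, hl⟩ : ℕ) : ℤ) else 0
    with hcdef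
  -- membership of values
  have hmemR : ∀ (i : Fin m) (l : ℕ) (hl : l < hw i),
      ((((R i).orderIsoOfFin (hRcard i)) ⟨l, hl⟩ : ℕ)) ∈ R i :=
    fun i l hl => ((R i).orderIsoOfFin (hRcard i) ⟨l, hl⟩).property
  have hmemS : ∀ (i : Fin m) (a : ℕ), a ∈ R i → ∃ s : {x // x ∈ S}, φ s = i ∧ r s.val = a := by
    intro i a ha
    rw [hRdef] at ha
    obtain ⟨s, hs, hsa⟩ := Finset.mem_image.mp ha
    rw [hBdef] at hs
    exact ⟨s, (Finset.mem_filter.mp hs).2, hsa⟩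
  have hcpos : ∀ i l, l < hw i → 1 ≤ c i l := by
    intro i l hl
    simp only [hcdef]
    rw [dif_pos hl]
    obtain ⟨s, _, hsa⟩ := hmemS i _ (hmemR i l hl)
    have : 1 ≤ r s.val := hr1 s.val s.property
    rw [hsa] at this
    exact_mod_cast this
  have hcbound : ∀ i l, l < hw i → 2 * c i l < v := by
    intro i l hl
    simp only [hcdef]
    rw [dif_pos hl]
    obtain ⟨s, _, hsa⟩ := hmemS i _ (hmemR i l hl)
    have : 2 * r s.val < v := hr2 s.val s.property
    rw [hsa] at this
    exact_mod_cast this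
  have hcmono : ∀ i l, l + 1 < hw i → c i l < c i (l+1) := by
    intro i l hl
    simp only [hcdef]
    rw [dif_pos (by omega : l < hw i), dif_pos hl]
    have hlt : (⟨l, by omega⟩ : Fin (hw i)) < ⟨l+1, hl⟩ := by
      rw [Fin.lt_def]
      exact Nat.lt_succ_self l
    have := ((R i).orderIsoOfFin (hRcard i)).strictMono hlt
    have hval : (((R i).orderIsoOfFin (hRcard i)) ⟨l, by omega⟩ : ℕ)
        < (((R i).orderIsoOfFin (hRcard i)) ⟨l+1, hl⟩ : ℕ) := this
    exact_mod_cast hval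
  -- choose elt
  have heltex : ∀ (i : Fin m) (l : Fin (hw i)), ∃ s : {x // x ∈ S},
      φ s = i ∧ r s.val = (((R i).orderIsoOfFin (hRcard i)) l : ℕ) := by
    intro i l
    exact hmemS i _ (hmemR i l.val l.isLt)
  choose elt helt1 helt2 using heltex
  have hcval : ∀ (i : Fin m) (l : Fin (hw i)), c i l.val = ((r (elt i l).val : ℕ) : ℤ) := by
    intro i l
    simp only [hcdef]
    rw [dif_pos l.isLt]
    simp only [Fin.eta]
    rw [helt2 i l]
  refine ⟨fun i l => ((zsum (c i) (l : ℕ) : ℤ) : ZMod v), elt, ?_, ?_, ?_, ?_, ?_⟩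
  · -- injectivity
    intro i a b hab
    have := zsum_mod_inj v (hw i) (by omega) (c i) (hcpos i) (hcmono i) (hcbound i)
      a.val b.val (by omega) (by omega) hab
    exact Fin.ext this
  · exact helt1
  · -- difference
    intro i l
    have hd : zsum (c i) ((l.succ : ℕ)) = zsum (c i) ((l.castSucc : ℕ)) + (-1)^(l:ℕ) * c i l := by
      rw [Fin.val_succ, Fin.coe_castSucc]
      exact zsum_succ (c i) l
    have hdiff : ((zsum (c i) ((l.succ : ℕ)) : ℤ) : ZMod v) - ((zsum (c i) ((l.castSucc : ℕ)) : ℤ) : ZMod v)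
        = (((-1)^(l:ℕ) * c i l : ℤ) : ZMod v) := by
      rw [hd]
      push_cast
      ring
    rw [hdiff, hcval i l]
    rcases hr3 (elt i l).val (elt i l).property with hc | hc
    · rcases Nat.even_or_odd (l : ℕ) with he | ho
      · left
        rw [Even.neg_one_pow he]
        push_cast
        rw [hc]
        ring
      · right
        rw [Odd.neg_one_pow ho]
        push_cast
        rw [hc]
        ring
    · rcases Nat.even_or_odd (l : ℕ) with he | ho
      · right
        rw [Even.neg_one_pow he]
        push_cast
        rw [hc]
        ring
      · left
        rw [Odd.neg_one_pow ho]
        push_cast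
        rw [hc]
        ring
  · -- completeness
    intro s
    have hmem : r s.val ∈ R (φ s) := by
      rw [hRdef]
      apply Finset.mem_image_of_mem
      rw [hBdef]
      simp
    set l : Fin (hw (φ s)) := ((R (φ s)).orderIsoOfFin (hRcard (φ s))).symm ⟨r s.val, hmem⟩ with hl
    refine ⟨l, ?_⟩
    have h2 := helt2 (φ s) l
    rw [hl] at h2
    rw [OrderIso.apply_symm_apply] at h2
    have : r (elt (φ s) l).val = r s.val := h2
    exact Subtype.ext (hr4 _ (elt (φ s) l).property _ s.property this)
  · -- position injectivity
    intro i l l' hel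
    have h1 := helt2 i l
    have h2 := helt2 i l'
    rw [hel] at h1
    have : (((R i).orderIsoOfFin (hRcard i)) l : ℕ) = (((R i).orderIsoOfFin (hRcard i)) l' : ℕ) := by
      rw [← h1, ← h2]
    have hsub : (((R i).orderIsoOfFin (hRcard i)) l) = (((R i).orderIsoOfFin (hRcard i)) l') :=
      Subtype.ext this
    exact ((R i).orderIsoOfFin (hRcard i)).injective hsub


lemma assign_exists {α : Type*} [DecidableEq α] (S : Finset α) (m n : ℕ)
    (M : Fin m → Finset (Fin n)) (hw : Fin m → ℕ) (kw : Fin n → ℕ)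
    (hrow : ∀ i, (M i).card = hw i)
    (hcol : ∀ j, (Finset.univ.filter (fun i => j ∈ M i)).card = kw j)
    (hcard : S.card = ∑ i, hw i) :
    ∃ f : {x // x ∈ S} → Fin m × Fin n,
      Function.Injective f ∧
      (∀ i, (Finset.univ.filter (fun s : {x // x ∈ S} => (f s).1 = i)).card = hw i) ∧
      (∀ j, (Finset.univ.filter (fun s : {x // x ∈ S} => (f s).2 = j)).card = kw j) := by
  classical
  set C : Finset (Fin m × Fin n) := Finset.univ.filter (fun p => p.2 ∈ M p.1) with hCdef
  have hfib1 : ∀ i, (C.filter (fun p => p.1 = i)).card = hw i := by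
    intro i
    rw [← hrow i]
    apply Finset.card_bij (fun p _ => p.2)
    · intro p hp
      rw [mem_filter] at hp
      obtain ⟨hpC, hpi⟩ := hp
      rw [hCdef, mem_filter] at hpC
      rw [← hpi]
      exact hpC.2
    · intro p hp p' hp' hpp
      rw [mem_filter] at hp hp'
      exact Prod.ext (hp.2.trans hp'.2.symm) hpp
    · intro j hj
      refine ⟨(i, j), ?_, rfl⟩
      rw [mem_filter, hCdef, mem_filter]
      exact ⟨⟨mem_univ _, hj⟩, rfl⟩
  have hfib2 : ∀ j, (C.filter (fun p => p.2 = j)).card = kw j := by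
    intro j
    rw [← hcol j]
    apply Finset.card_bij (fun p _ => p.1)
    · intro p hp
      rw [mem_filter] at hp
      obtain ⟨hpC, hpj⟩ := hp
      rw [hCdef, mem_filter] at hpC
      rw [mem_filter]
      refine ⟨mem_univ _, ?_⟩
      rw [← hpj]
      exact hpC.2
    · intro p hp p' hp' hpp
      rw [mem_filter] at hp hp'
      exact Prod.ext hpp (hp.2.trans hp'.2.symm)
    · intro i hi
      rw [mem_filter] at hi
      refine ⟨(i, j), ?_, rfl⟩
      rw [mem_filter, hCdef, mem_filter]
      exact ⟨⟨mem_univ _, hi.2⟩, rfl⟩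
  have hCcard : C.card = ∑ i, hw i := by
    rw [Finset.card_eq_sum_card_fiberwise (f := fun p : Fin m × Fin n => p.1)
      (t := Finset.univ) (fun p _ => mem_univ _)]
    exact Finset.sum_congr rfl (fun i _ => hfib1 i)
  have hcc : C.card = S.card := by rw [hCcard, hcard]
  set e := Finset.equivOfCardEq hcc with hedef
  refine ⟨fun s => (e.symm s : Fin m × Fin n), ?_, ?_, ?_⟩
  · intro a b hab
    exact e.symm.injective (Subtype.ext hab)
  · intro i
    rw [← hfib1 i]
    apply Finset.card_bij (fun s _ => ((e.symm s : Fin m × Fin n)))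
    · intro s hs
      rw [mem_filter] at hs ⊢
      exact ⟨(e.symm s).property, hs.2⟩
    · intro a _ b _ hab
      exact e.symm.injective (Subtype.ext hab)
    · intro p hp
      rw [mem_filter] at hp
      refine ⟨e ⟨p, hp.1⟩, ?_, ?_⟩
      · rw [mem_filter]
        refine ⟨mem_univ _, ?_⟩
        simp only [Equiv.symm_apply_apply]
        exact hp.2
      · simp only [Equiv.symm_apply_apply]
  · intro j
    rw [← hfib2 j]
    apply Finset.card_bij (fun s _ => ((e.symm s : Fin m × Fin n)))
    · intro s hs
      rw [mem_filter] at hs ⊢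
      exact ⟨(e.symm s).property, hs.2⟩
    · intro a _ b _ hab
      exact e.symm.injective (Subtype.ext hab)
    · intro p hp
      rw [mem_filter] at hp
      refine ⟨e ⟨p, hp.1⟩, ?_, ?_⟩
      · rw [mem_filter]
        refine ⟨mem_univ _, ?_⟩
        simp only [Equiv.symm_apply_apply]
        exact hp.2
      · simp only [Equiv.symm_apply_apply]


lemma sym2_trans_diff {A : Type*} [CommRing A] {a b c d g g' : A}
    (h : s(a + g, b + g) = s(c + g', d + g')) :
    b - a = d - c ∨ b - a = -(d - c) := by
  rcases Sym2.eq_iff.mp h with ⟨h1, h2⟩ | ⟨h1, h2⟩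
  · left; linear_combination h2 - h1
  · right; linear_combination h2 - h1

lemma side_cover (v : ℕ) (hv : 2 ≤ v) (S : Finset (ZMod v))
    (hS0 : (0 : ZMod v) ∉ S) (hSred : ∀ s ∈ S, ∀ t ∈ S, s ≠ -t)
    (m : ℕ) (hw : Fin m → ℕ) (φ : {x // x ∈ S} → Fin m)
    (P : (i : Fin m) → Fin (hw i + 1) → ZMod v)
    (elt : (i : Fin m) → Fin (hw i) → {x // x ∈ S})
    (hA : ∀ i l, φ (elt i l) = i)
    (hB : ∀ i l, P i l.succ - P i l.castSucc = ((elt i l : ZMod v)) ∨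
                 P i l.succ - P i l.castSucc = -((elt i l : ZMod v)))
    (hC : ∀ s, ∃ l : Fin (hw (φ s)), elt (φ s) l = s)
    (hD : ∀ i l l', elt i l = elt i l' → l = l') :
    ∀ x y : ZMod v, (cayGraph S).Adj x y →
      ∃! ig : Fin m × ZMod v, ∃ l : Fin (hw ig.1),
        s(x, y) = s(P ig.1 l.castSucc + ig.2, P ig.1 l.succ + ig.2) := by
  intro x y hadj
  simp only [cayGraph, SimpleGraph.fromRel_adj] at hadj
  obtain ⟨hxy, hrel⟩ := hadj
  have hs0ex : ∃ s0 : {x // x ∈ S}, y - x = (s0 : ZMod v) ∨ y - x = -(s0 : ZMod v) := by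
    rcases hrel with h | h
    · exact ⟨⟨x - y, h⟩, Or.inr (by push_cast; ring)⟩
    · exact ⟨⟨y - x, h⟩, Or.inl rfl⟩
  obtain ⟨s0, hs0⟩ := hs0ex
  obtain ⟨l0, hl0⟩ := hC s0
  have hd0 := hB (φ s0) l0
  rw [hl0] at hd0
  set d := P (φ s0) l0.succ - P (φ s0) l0.castSucc with hd
  have h2s : (s0 : ZMod v) ≠ -(s0 : ZMod v) := hSred s0.1 s0.2 s0.1 s0.2
  have hdd : d ≠ -d := by
    intro habs
    rcases hd0 with h | h
    · rw [h] at habs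
      exact h2s habs
    · rw [h] at habs
      exact h2s (by linear_combination -habs)
  have hcase : y - x = d ∨ y - x = -d := by
    rcases hs0 with h | h <;> rcases hd0 with h' | h'
    · left; linear_combination h - h'
    · right; linear_combination h + h'
    · right; linear_combination h + h'
    · left; linear_combination h - h'
  -- the elt identification sub-lemma for uniqueness
  have hident : ∀ (i' : Fin m) (l' : Fin (hw i')) (g' : ZMod v),
      s(x, y) = s(P i' l'.castSucc + g', P i' l'.succ + g') → elt i' l' = s0 := by
    intro i' l' g' heq
    have hd' := hB i' l'
    have hyx : y - x = (P i' l'.succ - P i' l'.castSucc) ∨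
        y - x = -(P i' l'.succ - P i' l'.castSucc) := by
      have h0 : s(x + 0, y + 0) = s(P i' l'.castSucc + g', P i' l'.succ + g') := by
        rw [add_zero, add_zero]; exact heq
      exact sym2_trans_diff h0
    have : (elt i' l' : ZMod v) = (s0 : ZMod v) ∨ (elt i' l' : ZMod v) = -(s0 : ZMod v) := by
      rcases hd' with h1 | h1 <;> rcases hyx with h3 | h3 <;> rcases hs0 with h2 | h2
      all_goals first
        | (left; linear_combination h1 - h3 + h2) | (left; linear_combination h1 - h3 - h2)
        | (left; linear_combination h1 + h3 + h2) | (left; linear_combination h1 + h3 - h2)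
        | (left; linear_combination -h1 - h3 + h2) | (left; linear_combination -h1 - h3 - h2)
        | (left; linear_combination -h1 + h3 + h2) | (left; linear_combination -h1 + h3 - h2)
        | (right; linear_combination h1 - h3 + h2) | (right; linear_combination h1 - h3 - h2)
        | (right; linear_combination h1 + h3 + h2) | (right; linear_combination h1 + h3 - h2)
        | (right; linear_combination -h1 - h3 + h2) | (right; linear_combination -h1 - h3 - h2)
        | (right; linear_combination -h1 + h3 + h2) | (right; linear_combination -h1 + h3 - h2)
    rcases this with h | h
    · exact Subtype.ext h
    · exact absurd h (hSred (elt i' l').1 (elt i' l').2 s0.1 s0.2)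
  rcases hcase with hyd | hyd
  · refine ⟨((φ s0), x - P (φ s0) l0.castSucc), ⟨l0, ?_⟩, ?_⟩
    · have h1 : P (φ s0) l0.castSucc + (x - P (φ s0) l0.castSucc) = x := by ring
      have h2 : P (φ s0) l0.succ + (x - P (φ s0) l0.castSucc) = y := by
        have hdr : P (φ s0) l0.succ - P (φ s0) l0.castSucc = d := rfl
        linear_combination hdr - hyd
      rw [h1, h2]
    · rintro ⟨i', g'⟩ ⟨l', heq⟩
      have helt : elt i' l' = s0 := hident i' l' g' heq
      have hii : i' = φ s0 := by rw [← hA i' l', helt]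
      subst hii
      have hll : l' = l0 := hD _ l' l0 (helt.trans hl0.symm)
      subst hll
      rcases Sym2.eq_iff.mp heq with ⟨h1, h2⟩ | ⟨h1, h2⟩
      · have hg : g' = x - P (φ s0) l'.castSucc := by linear_combination -h1
        rw [hg]
      · exfalso
        apply hdd
        have hdr : P (φ s0) l'.succ - P (φ s0) l'.castSucc = d := rfl
        have hda : y - x = -d := by linear_combination h2 - h1 - hdr
        linear_combination hda - hyd
  · refine ⟨((φ s0), y - P (φ s0) l0.castSucc), ⟨l0, ?_⟩, ?_⟩
    · have h1 : P (φ s0) l0.castSucc + (y - P (φ s0) l0.castSucc) = y := by ring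
      have h2 : P (φ s0) l0.succ + (y - P (φ s0) l0.castSucc) = x := by
        have hdr : P (φ s0) l0.succ - P (φ s0) l0.castSucc = d := rfl
        linear_combination hdr + hyd
      rw [h1, h2]
      exact Sym2.eq_swap
    · rintro ⟨i', g'⟩ ⟨l', heq⟩
      have helt : elt i' l' = s0 := hident i' l' g' heq
      have hii : i' = φ s0 := by rw [← hA i' l', helt]
      subst hii
      have hll : l' = l0 := hD _ l' l0 (helt.trans hl0.symm)
      subst hll
      rcases Sym2.eq_iff.mp heq with ⟨h1, h2⟩ | ⟨h1, h2⟩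
      · exfalso
        apply hdd
        have hdr : P (φ s0) l'.succ - P (φ s0) l'.castSucc = d := rfl
        have hda : y - x = d := by linear_combination h2 - h1 + hdr
        linear_combination hyd - hda
      · have hg : g' = y - P (φ s0) l'.castSucc := by linear_combination -h2
        rw [hg]

end Helpers

/-- Let `v ≥ 2`, let `S ⊆ Z_v \ {0}` be reduced, and let `𝐡, 𝐤` be
sequences of positive integers with `|S| = Σ𝐡 = Σ𝐤` satisfying the Gale–Ryser
condition. Then `Cay(Z_v, S)` admits two `Z_v`-regular orthogonal path decompositions:
one whose translated paths `P i + g` have lengths `hw i`, and one whose translated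
paths `Q j + g` have lengths `kw j`; every edge lies in exactly one translate of each
family, and any two translates from different families share at most one edge. -/
theorem statement18 (v : ℕ) (hv : 2 ≤ v) (S : Finset (ZMod v))
    (hS0 : (0 : ZMod v) ∉ S) (hSred : ∀ s ∈ S, ∀ t ∈ S, s ≠ -t)
    (m n : ℕ) (hw : Fin m → ℕ) (kw : Fin n → ℕ)
    (hwpos : ∀ i, 0 < hw i) (kwpos : ∀ j, 0 < kw j)
    (hcard1 : S.card = ∑ i, hw i) (hcard2 : S.card = ∑ j, kw j)
    (hGR : GaleRyser hw kw) :
    ∃ (P : (i : Fin m) → Fin (hw i + 1) → ZMod v)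
      (Q : (j : Fin n) → Fin (kw j + 1) → ZMod v),
      (∀ i, Function.Injective (P i)) ∧
      (∀ j, Function.Injective (Q j)) ∧
      (∀ i (l : Fin (hw i)), (cayGraph S).Adj (P i l.castSucc) (P i l.succ)) ∧
      (∀ j (l : Fin (kw j)), (cayGraph S).Adj (Q j l.castSucc) (Q j l.succ)) ∧
      (∀ x y : ZMod v, (cayGraph S).Adj x y →
        ∃! ig : Fin m × ZMod v, ∃ l : Fin (hw ig.1),
          s(x, y) = s(P ig.1 l.castSucc + ig.2, P ig.1 l.succ + ig.2)) ∧
      (∀ x y : ZMod v, (cayGraph S).Adj x y →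
        ∃! jg : Fin n × ZMod v, ∃ l : Fin (kw jg.1),
          s(x, y) = s(Q jg.1 l.castSucc + jg.2, Q jg.1 l.succ + jg.2)) ∧
      (∀ (i : Fin m) (g : ZMod v) (j : Fin n) (g' : ZMod v) (e1 e2 : Sym2 (ZMod v)),
        (∃ l : Fin (hw i), e1 = s(P i l.castSucc + g, P i l.succ + g)) →
        (∃ l : Fin (hw i), e2 = s(P i l.castSucc + g, P i l.succ + g)) →
        (∃ l : Fin (kw j), e1 = s(Q j l.castSucc + g', Q j l.succ + g')) →
        (∃ l : Fin (kw j), e2 = s(Q j l.castSucc + g', Q j l.succ + g')) →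
        e1 = e2) := by
  classical
  obtain ⟨M, hrow, hcol⟩ := grMatrix n m hw kw (hcard1.symm.trans hcard2)
    (fun T => gr_subset_form hw kw hGR T)
  obtain ⟨f, hfinj, hfib1, hfib2⟩ := assign_exists S m n M hw kw hrow hcol hcard1
  obtain ⟨P, eltP, hPinj, hPA, hPB, hPC, hPD⟩ :=
    side_construction v hv S hS0 hSred m hw (fun s => (f s).1) hfib1
  obtain ⟨Q, eltQ, hQinj, hQA, hQB, hQC, hQD⟩ :=
    side_construction v hv S hS0 hSred n kw (fun s => (f s).2) hfib2
  have hadjP : ∀ i (l : Fin (hw i)), (cayGraph S).Adj (P i l.castSucc) (P i l.succ) := by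
    intro i l
    simp only [cayGraph, SimpleGraph.fromRel_adj]
    constructor
    · intro habs
      have h1 := hPinj i habs
      have h2 : l.castSucc < l.succ := Fin.castSucc_lt_succ
      rw [h1] at h2
      exact lt_irrefl _ h2
    · rcases hPB i l with h | h
      · right
        rw [h]
        exact (eltP i l).2
      · left
        have hx : P i l.castSucc - P i l.succ = ((eltP i l : ZMod v)) := by
          linear_combination -h
        rw [hx]
        exact (eltP i l).2
  have hadjQ : ∀ j (l : Fin (kw j)), (cayGraph S).Adj (Q j l.castSucc) (Q j l.succ) := by
    intro j l
    simp only [cayGraph, SimpleGraph.fromRel_adj]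
    constructor
    · intro habs
      have h1 := hQinj j habs
      have h2 : l.castSucc < l.succ := Fin.castSucc_lt_succ
      rw [h1] at h2
      exact lt_irrefl _ h2
    · rcases hQB j l with h | h
      · right
        rw [h]
        exact (eltQ j l).2
      · left
        have hx : Q j l.castSucc - Q j l.succ = ((eltQ j l : ZMod v)) := by
          linear_combination -h
        rw [hx]
        exact (eltQ j l).2
  refine ⟨P, Q, hPinj, hQinj, hadjP, hadjQ, ?_, ?_, ?_⟩
  · exact side_cover v hv S hS0 hSred m hw (fun s => (f s).1) P eltP hPA hPB hPC hPD
  · exact side_cover v hv S hS0 hSred n kw (fun s => (f s).2) Q eltQ hQA hQB hQC hQD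
  · rintro i g j g' e1 e2 ⟨l1, he1P⟩ ⟨l2, he2P⟩ ⟨l1', he1Q⟩ ⟨l2', he2Q⟩
    have hfin : ∀ a b : {x // x ∈ S},
        ((a : ZMod v) = (b : ZMod v) ∨ (a : ZMod v) = -(b : ZMod v)) → a = b := by
      rintro a b (hab | hab)
      · exact Subtype.ext hab
      · exact absurd hab (hSred a.1 a.2 b.1 b.2)
    have key : ∀ (l : Fin (hw i)) (l' : Fin (kw j)) (e : Sym2 (ZMod v)),
        e = s(P i l.castSucc + g, P i l.succ + g) →
        e = s(Q j l'.castSucc + g', Q j l'.succ + g') →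
        eltP i l = eltQ j l' := by
      intro l l' e hPe hQe
      have h3or := sym2_trans_diff (hPe.symm.trans hQe)
      rcases hPB i l with h1 | h1 <;> rcases hQB j l' with h2 | h2 <;>
        rcases h3or with h3 | h3 <;>
      · apply hfin
        first
          | (left; linear_combination h1 - h3 + h2)
          | (left; linear_combination h1 - h3 - h2)
          | (left; linear_combination h1 + h3 + h2)
          | (left; linear_combination h1 + h3 - h2)
          | (left; linear_combination -h1 - h3 + h2)
          | (left; linear_combination -h1 - h3 - h2)
          | (left; linear_combination -h1 + h3 + h2)
          | (left; linear_combination -h1 + h3 - h2)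
          | (right; linear_combination h1 - h3 + h2)
          | (right; linear_combination h1 - h3 - h2)
          | (right; linear_combination h1 + h3 + h2)
          | (right; linear_combination h1 + h3 - h2)
          | (right; linear_combination -h1 - h3 + h2)
          | (right; linear_combination -h1 - h3 - h2)
          | (right; linear_combination -h1 + h3 + h2)
          | (right; linear_combination -h1 + h3 - h2)
    have hs1 : eltP i l1 = eltQ j l1' := key l1 l1' e1 he1P he1Q
    have hs2 : eltP i l2 = eltQ j l2' := key l2 l2' e2 he2P he2Q
    have hf1 : f (eltP i l1) = (i, j) := by
      have ha := hPA i l1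
      have hb := hQA j l1'
      rw [← hs1] at hb
      exact Prod.ext ha hb
    have hf2 : f (eltP i l2) = (i, j) := by
      have ha := hPA i l2
      have hb := hQA j l2'
      rw [← hs2] at hb
      exact Prod.ext ha hb
    have hee : eltP i l1 = eltP i l2 := hfinj (hf1.trans hf2.symm)
    have hll : l1 = l2 := hPD i l1 l2 hee
    rw [he1P, he2P, hll]
end
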